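/- arXiv:1011.3451 — 10 statements merged into one kernel-verified Lean document; each statement's English description precedes it below -/
import Mathlib

section
/- If a finite set X is full with respect to a collection C of partitions of X (every two distinct elements of X are separated by some partition in C), then every minimal transversal T for the full subdivisions of C equals sep(a,b) for some pair of distinct elements a, b in X, where sep(a,b) is the set of all partitions in C separating a and b. -/
open scoped RealInnerProductSpace

noncomputable section

def IsPartition {α : Type*} (X : Set α) (P : Set (Set α)) : Prop :=
  (∀ U ∈ P, U.Nonempty) ∧ P.PairwiseDisjoint id ∧ ⋃₀ P = X

def Separates {α : Type*} (P : Set (Set α)) (a b : α) : Prop :=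
  ∃ U ∈ P, ∃ V ∈ P, U ≠ V ∧ a ∈ U ∧ b ∈ V

def IsFull {α : Type*} (X : Set α) (S : Set (Set (Set α))) : Prop :=
  ∀ a ∈ X, ∀ b ∈ X, a ≠ b → ∃ P ∈ S, Separates P a b

def IsTransversal {α : Type*} (X : Set α) (C T : Set (Set (Set α))) : Prop :=
  T ⊆ C ∧ ∀ S ⊆ C, IsFull X S → (S ∩ T).Nonempty

def IsMinimalTransversal {α : Type*} (X : Set α) (C T : Set (Set (Set α))) : Prop :=
  IsTransversal X C T ∧ ∀ T' ⊆ T, IsTransversal X C T' → T' = T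

def sep {α : Type*} (C : Set (Set (Set α))) (a b : α) : Set (Set (Set α)) :=
  {P ∈ C | Separates P a b}

theorem stmt0 {α : Type*} (X : Set α) (hX : X.Finite) (C : Set (Set (Set α)))
    (hC : ∀ P ∈ C, IsPartition X P) (hfull : IsFull X C)
    (T : Set (Set (Set α))) (hT : IsMinimalTransversal X C T) :
    ∃ a ∈ X, ∃ b ∈ X, a ≠ b ∧ T = sep C a b := by
  obtain ⟨⟨hTC, hTmeet⟩, hmin⟩ := hT
  -- C \ T is not full
  have hnotfull : ¬ IsFull X (C \ T) := by
    intro h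
    obtain ⟨P, hP⟩ := hTmeet (C \ T) Set.diff_subset h
    exact hP.1.2 hP.2
  simp only [IsFull, not_forall] at hnotfull
  obtain ⟨a, ha, b, hb, hab, hsep⟩ := hnotfull
  push_neg at hsep
  refine ⟨a, ha, b, hb, hab, ?_⟩
  have hsub : sep C a b ⊆ T := by
    intro P hP
    by_contra hPT
    exact hsep P ⟨hP.1, hPT⟩ hP.2
  have htrans : IsTransversal X C (sep C a b) := by
    constructor
    · intro P hP; exact hP.1
    · intro S hS hfullS
      obtain ⟨P, hPS, hPsep⟩ := hfullS a ha b hb hab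
      exact ⟨P, hPS, hS hPS, hPsep⟩
  exact (hmin (sep C a b) hsub htrans).symm
end
end

section
/- For a set X of k points in R^d, the number of partitions of X realizable by a hyperplane is at most phi_d(k) = sum_{i=0}^{d} binomial(k-1, i). -/
open scoped RealInnerProductSpace

noncomputable section

abbrev Euc (d : ℕ) : Type := EuclideanSpace ℝ (Fin d)

def RealizedByHyperplane {d : ℕ} (X : Set (Euc d)) (P : Set (Set (Euc d))) : Prop :=
  P = {X} ∨ ∃ (v : Euc d) (c : ℝ), v ≠ 0 ∧ (∀ x ∈ X, ⟪v, x⟫ ≠ c) ∧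
    (X ∩ {x | ⟪v, x⟫ < c}).Nonempty ∧ (X ∩ {x | c < ⟪v, x⟫}).Nonempty ∧
    P = {X ∩ {x | ⟪v, x⟫ < c}, X ∩ {x | c < ⟪v, x⟫}}

def HSet {d : ℕ} (X : Set (Euc d)) : Set (Set (Set (Euc d))) :=
  {P | RealizedByHyperplane X P}

def GenPos {d : ℕ} (X : Set (Euc d)) : Prop :=
  ∀ (v : Euc d) (c : ℝ), v ≠ 0 → (X ∩ {x | ⟪v, x⟫ = c}).encard ≤ (d : ℕ∞)

def phi (d k : ℕ) : ℕ := ∑ i ∈ Finset.range (d + 1), (k - 1).choose i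

def eta (d k : ℕ) : ℕ := ∑ i ∈ Finset.range (d + 1), (k - 2).choose i





namespace Stmt2Aux

variable {n : ℕ}

def negs (v : Euc n) : Set (Euc n) := {x | ⟪v, x⟫ < 0}
def poss (v : Euc n) : Set (Euc n) := {x | 0 < ⟪v, x⟫}

def ind (v : Euc n) (Y : Set (Euc n)) : Set (Set (Euc n)) :=
  {U | (U = Y ∩ negs v ∨ U = Y ∩ poss v) ∧ U.Nonempty}

def Adm (S : Submodule ℝ (Euc n)) (Y : Set (Euc n)) (v : Euc n) : Prop :=
  v ∈ S ∧ v ≠ 0 ∧ ∀ y ∈ Y, ⟪v, y⟫ ≠ 0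

def Gset (S : Submodule ℝ (Euc n)) (Y : Set (Euc n)) : Set (Set (Set (Euc n))) :=
  {P | ∃ v, Adm S Y v ∧ P = ind v Y}

def rmap (y : Euc n) (P : Set (Set (Euc n))) : Set (Set (Euc n)) :=
  {U | ∃ V ∈ P, U = V \ {y} ∧ U.Nonempty}

def Bnd (e m : ℕ) : ℕ := ∑ i ∈ Finset.range e, (m - 1).choose i

lemma ind_congr {v w : Euc n} {Y : Set (Euc n)}
    (h1 : Y ∩ negs v = Y ∩ negs w) (h2 : Y ∩ poss v = Y ∩ poss w) :
    ind v Y = ind w Y := by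
  unfold ind; rw [h1, h2]

lemma ind_neg (v : Euc n) (Y : Set (Euc n)) : ind (-v) Y = ind v Y := by
  have hn : negs (-v) = poss v := by
    ext z; simp [negs, poss, inner_neg_left]
  have hp : poss (-v) = negs v := by
    ext z; simp [negs, poss, inner_neg_left]
  unfold ind
  rw [hn, hp]
  ext U
  constructor <;> rintro ⟨h | h, hne⟩ <;> exact ⟨by tauto, hne⟩

lemma diff_insert {y : Euc n} {Y' : Set (Euc n)} (hy : y ∉ Y') (N : Set (Euc n)) :
    ((insert y Y') ∩ N) \ {y} = Y' ∩ N := by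
  ext z
  simp only [Set.mem_diff, Set.mem_inter_iff, Set.mem_insert_iff, Set.mem_singleton_iff]
  constructor
  · rintro ⟨⟨rfl | hz, hN⟩, hne⟩
    · exact absurd rfl hne
    · exact ⟨hz, hN⟩
  · rintro ⟨hz, hN⟩
    exact ⟨⟨Or.inr hz, hN⟩, fun h => hy (h ▸ hz)⟩

lemma rmap_ind {y : Euc n} {Y' : Set (Euc n)} (hy : y ∉ Y') (v : Euc n) :
    rmap y (ind v (insert y Y')) = ind v Y' := by
  ext U
  constructor
  · rintro ⟨V, ⟨hV | hV, -⟩, rfl, hne⟩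
    · subst hV; rw [diff_insert hy]; exact ⟨Or.inl rfl, by rwa [diff_insert hy] at hne⟩
    · subst hV; rw [diff_insert hy]; exact ⟨Or.inr rfl, by rwa [diff_insert hy] at hne⟩
  · rintro ⟨hU | hU, hne⟩
    · refine ⟨(insert y Y') ∩ negs v, ⟨Or.inl rfl, ?_⟩, ?_, ?_⟩
      · obtain ⟨z, hz⟩ := hne
        rw [hU] at hz
        exact ⟨z, Set.mem_insert_of_mem _ hz.1, hz.2⟩
      · rw [diff_insert hy, hU]
      · exact hne
    · refine ⟨(insert y Y') ∩ poss v, ⟨Or.inr rfl, ?_⟩, ?_, ?_⟩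
      · obtain ⟨z, hz⟩ := hne
        rw [hU] at hz
        exact ⟨z, Set.mem_insert_of_mem _ hz.1, hz.2⟩
      · rw [diff_insert hy, hU]
      · exact hne

lemma Gset_finite {S : Submodule ℝ (Euc n)} {Y : Set (Euc n)} (hY : Y.Finite) :
    (Gset S Y).Finite := by
  have h2 : {P : Set (Set (Euc n)) | P ⊆ {U | U ⊆ Y}}.Finite := hY.finite_subsets.finite_subsets
  apply h2.subset
  rintro P ⟨v, -, rfl⟩
  intro U hU
  rcases hU.1 with rfl | rfl
  · exact Set.inter_subset_left
  · exact Set.inter_subset_left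

lemma rmap_mem {S : Submodule ℝ (Euc n)} {y : Euc n} {Y' : Set (Euc n)} (hy : y ∉ Y')
    {P : Set (Set (Euc n))} (hP : P ∈ Gset S (insert y Y')) : rmap y P ∈ Gset S Y' := by
  obtain ⟨v, ⟨hvS, hv0, hsg⟩, rfl⟩ := hP
  exact ⟨v, ⟨hvS, hv0, fun z hz => hsg z (Set.mem_insert_of_mem _ hz)⟩, (rmap_ind hy v).symm ▸ rfl⟩

lemma normalize {S : Submodule ℝ (Euc n)} {Y : Set (Euc n)} {y0 : Euc n} (hy0 : y0 ∈ Y)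
    {P : Set (Set (Euc n))} (hP : P ∈ Gset S Y) :
    ∃ w, Adm S Y w ∧ ⟪w, y0⟫ < 0 ∧ P = ind w Y := by
  obtain ⟨v, ⟨hvS, hv0, hsg⟩, rfl⟩ := hP
  rcases (hsg y0 hy0).lt_or_gt with h | h
  · exact ⟨v, ⟨hvS, hv0, hsg⟩, h, rfl⟩
  · refine ⟨-v, ⟨S.neg_mem hvS, neg_ne_zero.mpr hv0, ?_⟩, ?_, (ind_neg v Y).symm⟩
    · intro z hz; rw [inner_neg_left]; simpa using hsg z hz
    · rw [inner_neg_left]; linarith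

lemma align {v1 v2 y0 : Euc n} {Y' : Set (Euc n)} (hy0 : y0 ∈ Y')
    (hz1 : ∀ z ∈ Y', ⟪v1, z⟫ ≠ 0) (hz2 : ∀ z ∈ Y', ⟪v2, z⟫ ≠ 0)
    (hQ : ind v1 Y' = ind v2 Y') (h10 : ⟪v1, y0⟫ < 0) (h20 : ⟪v2, y0⟫ < 0) :
    Y' ∩ negs v1 = Y' ∩ negs v2 ∧ Y' ∩ poss v1 = Y' ∩ poss v2 := by
  have hmem1 : Y' ∩ negs v1 ∈ ind v2 Y' := by
    rw [← hQ]; exact ⟨Or.inl rfl, ⟨y0, hy0, h10⟩⟩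
  have hneg : Y' ∩ negs v1 = Y' ∩ negs v2 := by
    rcases hmem1.1 with h | h
    · exact h
    · exfalso
      have hy0' : y0 ∈ Y' ∩ poss v2 := h ▸ ⟨hy0, h10⟩
      have h2 : (0:ℝ) < ⟪v2, y0⟫ := hy0'.2
      linarith
  refine ⟨hneg, ?_⟩
  have key : ∀ z ∈ Y', (0 < ⟪v1, z⟫ ↔ 0 < ⟪v2, z⟫) := by
    intro z hz
    have e := Set.ext_iff.mp hneg z
    simp only [Set.mem_inter_iff, negs, Set.mem_setOf_eq] at e
    have n1 := hz1 z hz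
    have n2 := hz2 z hz
    constructor
    · intro h
      rcases n2.lt_or_gt with h' | h'
      · have := (e.mpr ⟨hz, h'⟩).2; linarith
      · exact h'
    · intro h
      rcases n1.lt_or_gt with h' | h'
      · have := (e.mp ⟨hz, h'⟩).2; linarith
      · exact h'
  ext z
  simp only [Set.mem_inter_iff, poss, Set.mem_setOf_eq]
  exact ⟨fun ⟨hz, h⟩ => ⟨hz, (key z hz).mp h⟩, fun ⟨hz, h⟩ => ⟨hz, (key z hz).mpr h⟩⟩

lemma determined {v1 v2 y : Euc n} {Y' : Set (Euc n)} (hy : y ∉ Y')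
    (hsg1 : ∀ z ∈ insert y Y', ⟪v1, z⟫ ≠ 0) (hsg2 : ∀ z ∈ insert y Y', ⟪v2, z⟫ ≠ 0)
    (hneg : Y' ∩ negs v1 = Y' ∩ negs v2) (hpos : Y' ∩ poss v1 = Y' ∩ poss v2)
    (hyy : ⟪v1, y⟫ < 0 ↔ ⟪v2, y⟫ < 0) :
    ind v1 (insert y Y') = ind v2 (insert y Y') := by
  have n1 := hsg1 y (Set.mem_insert _ _)
  have n2 := hsg2 y (Set.mem_insert _ _)
  have hyy' : 0 < ⟪v1, y⟫ ↔ 0 < ⟪v2, y⟫ := by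
    constructor
    · intro h
      rcases n2.lt_or_gt with h' | h'
      · have := hyy.mpr h'; linarith
      · exact h'
    · intro h
      rcases n1.lt_or_gt with h' | h'
      · have := hyy.mp h'; linarith
      · exact h'
  apply ind_congr
  · ext z
    simp only [Set.mem_inter_iff, Set.mem_insert_iff, negs, Set.mem_setOf_eq]
    constructor
    · rintro ⟨rfl | hz, hzn⟩
      · exact ⟨Or.inl rfl, hyy.mp hzn⟩
      · have e := Set.ext_iff.mp hneg z
        simp only [Set.mem_inter_iff, negs, Set.mem_setOf_eq] at e
        exact ⟨Or.inr hz, (e.mp ⟨hz, hzn⟩).2⟩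
    · rintro ⟨rfl | hz, hzn⟩
      · exact ⟨Or.inl rfl, hyy.mpr hzn⟩
      · have e := Set.ext_iff.mp hneg z
        simp only [Set.mem_inter_iff, negs, Set.mem_setOf_eq] at e
        exact ⟨Or.inr hz, (e.mpr ⟨hz, hzn⟩).2⟩
  · ext z
    simp only [Set.mem_inter_iff, Set.mem_insert_iff, poss, Set.mem_setOf_eq]
    constructor
    · rintro ⟨rfl | hz, hzn⟩
      · exact ⟨Or.inl rfl, hyy'.mp hzn⟩
      · have e := Set.ext_iff.mp hpos z
        simp only [Set.mem_inter_iff, poss, Set.mem_setOf_eq] at e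
        exact ⟨Or.inr hz, (e.mp ⟨hz, hzn⟩).2⟩
    · rintro ⟨rfl | hz, hzn⟩
      · exact ⟨Or.inl rfl, hyy'.mpr hzn⟩
      · have e := Set.ext_iff.mp hpos z
        simp only [Set.mem_inter_iff, poss, Set.mem_setOf_eq] at e
        exact ⟨Or.inr hz, (e.mpr ⟨hz, hzn⟩).2⟩

end Stmt2Aux

namespace Stmt2Aux

variable {n : ℕ}

lemma inner_comb (w1 w2 z : Euc n) (t : ℝ) :
    ⟪t • w1 + (1 - t) • w2, z⟫ = t * ⟪w1, z⟫ + (1 - t) * ⟪w2, z⟫ := by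
  rw [inner_add_left, real_inner_smul_left, real_inner_smul_left]

lemma combine {S : Submodule ℝ (Euc n)} {w1 w2 y y0 : Euc n} {Y' : Set (Euc n)}
    (hy0 : y0 ∈ Y') (hy : y ∉ Y')
    (ha1 : Adm S (insert y Y') w1) (ha2 : Adm S (insert y Y') w2)
    (hneg : Y' ∩ negs w1 = Y' ∩ negs w2) (hpos : Y' ∩ poss w1 = Y' ∩ poss w2)
    (h10 : ⟪w1, y0⟫ < 0)
    (s1 : ⟪w1, y⟫ < 0) (s2 : 0 < ⟪w2, y⟫) :
    ∃ w, Adm S Y' w ∧ ⟪w, y⟫ = 0 ∧ ind w Y' = ind w1 Y' := by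
  obtain ⟨hS1, -, hsg1⟩ := ha1
  obtain ⟨hS2, -, hsg2⟩ := ha2
  set a := ⟪w1, y⟫ with ha
  set b := ⟪w2, y⟫ with hb
  have hba : 0 < b - a := by linarith
  set t := b / (b - a) with hT
  have ht0 : 0 < t := div_pos s2 hba
  have ht1 : 0 < 1 - t := by
    have hlt : t < 1 := by rw [hT, div_lt_one hba]; linarith
    linarith
  set w := t • w1 + (1 - t) • w2 with hw
  have hwz : ∀ z, ⟪w, z⟫ = t * ⟪w1, z⟫ + (1 - t) * ⟪w2, z⟫ := fun z => inner_comb w1 w2 z t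
  have hwy : ⟪w, y⟫ = 0 := by
    rw [hwz y, ← ha, ← hb, hT]
    field_simp
    ring
  have keyneg : ∀ z ∈ Y', ⟪w1, z⟫ < 0 → ⟪w, z⟫ < 0 := by
    intro z hz h
    have h2 : z ∈ Y' ∩ negs w2 := hneg ▸ ⟨hz, h⟩
    have h2' : ⟪w2, z⟫ < 0 := h2.2
    rw [hwz z]; nlinarith
  have keypos : ∀ z ∈ Y', 0 < ⟪w1, z⟫ → 0 < ⟪w, z⟫ := by
    intro z hz h
    have h2 : z ∈ Y' ∩ poss w2 := hpos ▸ ⟨hz, h⟩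
    have h2' : 0 < ⟪w2, z⟫ := h2.2
    rw [hwz z]; nlinarith
  have hsg : ∀ z ∈ Y', ⟪w, z⟫ ≠ 0 := by
    intro z hz
    rcases (hsg1 z (Set.mem_insert_of_mem _ hz)).lt_or_gt with h | h
    · exact ne_of_lt (keyneg z hz h)
    · exact ne_of_gt (keypos z hz h)
  have hne0 : w ≠ 0 := by
    intro h0
    have := keyneg y0 hy0 h10
    rw [h0, inner_zero_left] at this
    exact lt_irrefl _ this
  have hwS : w ∈ S := S.add_mem (S.smul_mem _ hS1) (S.smul_mem _ hS2)
  have hnegs : Y' ∩ negs w = Y' ∩ negs w1 := by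
    ext z
    constructor
    · rintro ⟨hz, hzn⟩
      refine ⟨hz, ?_⟩
      rcases (hsg1 z (Set.mem_insert_of_mem _ hz)).lt_or_gt with h | h
      · exact h
      · have : (0:ℝ) < ⟪w, z⟫ := keypos z hz h
        have h2 : ⟪w, z⟫ < 0 := hzn
        linarith
    · rintro ⟨hz, hzn⟩
      exact ⟨hz, keyneg z hz hzn⟩
  have hposs : Y' ∩ poss w = Y' ∩ poss w1 := by
    ext z
    constructor
    · rintro ⟨hz, hzn⟩
      refine ⟨hz, ?_⟩
      rcases (hsg1 z (Set.mem_insert_of_mem _ hz)).lt_or_gt with h | h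
      · have : ⟪w, z⟫ < 0 := keyneg z hz h
        have h2 : (0:ℝ) < ⟪w, z⟫ := hzn
        linarith
      · exact h
    · rintro ⟨hz, hzn⟩
      exact ⟨hz, keypos z hz hzn⟩
  exact ⟨w, ⟨hwS, hne0, hsg⟩, hwy, ind_congr hnegs hposs⟩

end Stmt2Aux

namespace Stmt2Aux

variable {n : ℕ}

lemma three {S : Submodule ℝ (Euc n)} {y y0 : Euc n} {Y' : Set (Euc n)}
    (hy : y ∉ Y') (hy0 : y0 ∈ Y') {P1 P2 P3 : Set (Set (Euc n))}
    (h1 : P1 ∈ Gset S (insert y Y')) (h2 : P2 ∈ Gset S (insert y Y'))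
    (h3 : P3 ∈ Gset S (insert y Y'))
    (e12 : rmap y P1 = rmap y P2) (e13 : rmap y P1 = rmap y P3) :
    P1 = P2 ∨ P1 = P3 ∨ P2 = P3 := by
  have hy0Y : y0 ∈ insert y Y' := Set.mem_insert_of_mem _ hy0
  obtain ⟨w1, hw1, hn1, rfl⟩ := normalize hy0Y h1
  obtain ⟨w2, hw2, hn2, rfl⟩ := normalize hy0Y h2
  obtain ⟨w3, hw3, hn3, rfl⟩ := normalize hy0Y h3
  rw [rmap_ind hy, rmap_ind hy] at e12
  rw [rmap_ind hy w1, rmap_ind hy w3] at e13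
  have hsg1 := hw1.2.2
  have hsg2 := hw2.2.2
  have hsg3 := hw3.2.2
  have hsg1' : ∀ z ∈ Y', ⟪w1, z⟫ ≠ 0 := fun z hz => hsg1 z (Set.mem_insert_of_mem _ hz)
  have hsg2' : ∀ z ∈ Y', ⟪w2, z⟫ ≠ 0 := fun z hz => hsg2 z (Set.mem_insert_of_mem _ hz)
  have hsg3' : ∀ z ∈ Y', ⟪w3, z⟫ ≠ 0 := fun z hz => hsg3 z (Set.mem_insert_of_mem _ hz)
  obtain ⟨A12n, A12p⟩ := align hy0 hsg1' hsg2' e12 hn1 hn2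
  obtain ⟨A13n, A13p⟩ := align hy0 hsg1' hsg3' e13 hn1 hn3
  have ny1 := hsg1 y (Set.mem_insert _ _)
  have ny2 := hsg2 y (Set.mem_insert _ _)
  have ny3 := hsg3 y (Set.mem_insert _ _)
  rcases ny1.lt_or_gt with q1 | q1 <;> rcases ny2.lt_or_gt with q2 | q2
  · exact Or.inl (determined hy hsg1 hsg2 A12n A12p (iff_of_true q1 q2))
  · rcases ny3.lt_or_gt with q3 | q3
    · exact Or.inr (Or.inl (determined hy hsg1 hsg3 A13n A13p (iff_of_true q1 q3)))
    · refine Or.inr (Or.inr (determined hy hsg2 hsg3 ?_ ?_ (iff_of_false (by linarith) (by linarith))))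
      · exact A12n.symm.trans A13n
      · exact A12p.symm.trans A13p
  · rcases ny3.lt_or_gt with q3 | q3
    · refine Or.inr (Or.inr (determined hy hsg2 hsg3 ?_ ?_ (iff_of_true q2 q3)))
      · exact A12n.symm.trans A13n
      · exact A12p.symm.trans A13p
    · exact Or.inr (Or.inl (determined hy hsg1 hsg3 A13n A13p (iff_of_false (by linarith) (by linarith))))
  · exact Or.inl (determined hy hsg1 hsg2 A12n A12p (iff_of_false (by linarith) (by linarith)))

lemma double {S : Submodule ℝ (Euc n)} {y y0 : Euc n} {Y' : Set (Euc n)}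
    (hy : y ∉ Y') (hy0 : y0 ∈ Y') {P1 P2 : Set (Set (Euc n))}
    (h1 : P1 ∈ Gset S (insert y Y')) (h2 : P2 ∈ Gset S (insert y Y'))
    (hne : P1 ≠ P2) (e12 : rmap y P1 = rmap y P2) :
    rmap y P1 ∈ Gset (S ⊓ (Submodule.span ℝ {y})ᗮ) Y' := by
  have hy0Y : y0 ∈ insert y Y' := Set.mem_insert_of_mem _ hy0
  obtain ⟨w1, hw1, hn1, rfl⟩ := normalize hy0Y h1
  obtain ⟨w2, hw2, hn2, rfl⟩ := normalize hy0Y h2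
  rw [rmap_ind hy w1, rmap_ind hy w2] at e12
  rw [rmap_ind hy w1]
  have hsg1 := hw1.2.2
  have hsg2 := hw2.2.2
  have hsg1' : ∀ z ∈ Y', ⟪w1, z⟫ ≠ 0 := fun z hz => hsg1 z (Set.mem_insert_of_mem _ hz)
  have hsg2' : ∀ z ∈ Y', ⟪w2, z⟫ ≠ 0 := fun z hz => hsg2 z (Set.mem_insert_of_mem _ hz)
  obtain ⟨A12n, A12p⟩ := align hy0 hsg1' hsg2' e12 hn1 hn2
  have ny1 := hsg1 y (Set.mem_insert _ _)
  have ny2 := hsg2 y (Set.mem_insert _ _)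
  have hdiff : ¬ (⟪w1, y⟫ < 0 ↔ ⟪w2, y⟫ < 0) := by
    intro hiff
    exact hne (determined hy hsg1 hsg2 A12n A12p hiff)
  have hmem : ∀ w : Euc n, Adm S Y' w → ⟪w, y⟫ = 0 → ind w Y' = ind w1 Y' →
      ind w1 Y' ∈ Gset (S ⊓ (Submodule.span ℝ {y})ᗮ) Y' := by
    rintro w ⟨hwS, hw0, hwsg⟩ hwy hind
    refine ⟨w, ⟨Submodule.mem_inf.mpr ⟨hwS, ?_⟩, hw0, hwsg⟩, hind.symm⟩
    rw [Submodule.mem_orthogonal_singleton_iff_inner_right]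
    rw [real_inner_comm]
    exact hwy
  rcases ny1.lt_or_gt with q1 | q1 <;> rcases ny2.lt_or_gt with q2 | q2
  · exact absurd (iff_of_true q1 q2) hdiff
  · obtain ⟨w, hadm, hwy, hind⟩ := combine hy0 hy hw1 hw2 A12n A12p hn1 q1 q2
    exact hmem w hadm hwy hind
  · obtain ⟨w, hadm, hwy, hind⟩ := combine hy0 hy hw2 hw1 A12n.symm A12p.symm hn2 q2 q1
    exact hmem w hadm hwy (hind.trans e12.symm)
  · exact absurd (iff_of_false (by linarith) (by linarith)) hdiff

lemma count {α β : Type*} {s : Set α} (hs : s.Finite) (f : α → β) {t : Set β} (ht : t.Finite)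
    (h3 : ∀ a1 ∈ s, ∀ a2 ∈ s, ∀ a3 ∈ s, f a1 = f a2 → f a1 = f a3 →
      a1 = a2 ∨ a1 = a3 ∨ a2 = a3)
    (hd : ∀ a1 ∈ s, ∀ a2 ∈ s, a1 ≠ a2 → f a1 = f a2 → f a1 ∈ t) :
    s.ncard ≤ (f '' s).ncard + t.ncard := by
  classical
  rcases s.eq_empty_or_nonempty with rfl | ⟨a0, ha0⟩
  · simp
  set g : β → α := fun b => if h : ∃ a', a' ∈ s ∧ f a' = b then h.choose else a0 with hg
  have hgs : ∀ a ∈ s, g (f a) ∈ s ∧ f (g (f a)) = f a := by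
    intro a ha
    have hex : ∃ a', a' ∈ s ∧ f a' = f a := ⟨a, ha, rfl⟩
    rw [hg]
    simp only [dif_pos hex]
    exact hex.choose_spec
  set sec : Set α := {a | a ∈ s ∧ g (f a) = a} with hsec
  have hsecsub : sec ⊆ s := fun a ha => ha.1
  have hseq : s = sec ∪ (s \ sec) := (Set.union_diff_cancel hsecsub).symm
  have hinj1 : Set.InjOn f sec := by
    intro a1 ha1 a2 ha2 hf
    rw [← ha1.2, ← ha2.2, hf]
  have hinj2 : Set.InjOn f (s \ sec) := by
    rintro a1 ⟨ha1, hna1⟩ a2 ⟨ha2, hna2⟩ hf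
    by_contra hne
    have hb1 := hgs a1 ha1
    have hb := g (f a1)
    have hbne1 : g (f a1) ≠ a1 := fun h => hna1 ⟨ha1, h⟩
    have hbne2 : g (f a1) ≠ a2 := by
      intro h
      apply hna2
      refine ⟨ha2, ?_⟩
      rw [← hf]
      exact h
    rcases h3 a1 ha1 a2 ha2 (g (f a1)) hb1.1 hf hb1.2.symm with h | h | h
    · exact hne h
    · exact hbne1 h.symm
    · exact hbne2 h.symm
  have himg2 : f '' (s \ sec) ⊆ t := by
    rintro b ⟨a, ⟨ha, hna⟩, rfl⟩
    have hb1 := hgs a ha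
    have hbne : a ≠ g (f a) := fun h => hna ⟨ha, h.symm⟩
    exact hd a ha (g (f a)) hb1.1 hbne hb1.2.symm
  calc s.ncard = (sec ∪ (s \ sec)).ncard := by rw [← hseq]
    _ ≤ sec.ncard + (s \ sec).ncard := Set.ncard_union_le _ _
    _ ≤ (f '' s).ncard + t.ncard := by
        gcongr
        · rw [← Set.ncard_image_of_injOn hinj1]
          exact Set.ncard_le_ncard (Set.image_mono hsecsub) (hs.image f)
        · rw [← Set.ncard_image_of_injOn hinj2]
          exact Set.ncard_le_ncard himg2 ht

end Stmt2Aux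

namespace Stmt2Aux

variable {n : ℕ}

lemma Bnd_mono1 {e1 e2 m : ℕ} (h : e1 ≤ e2) : Bnd e1 m ≤ Bnd e2 m :=
  Finset.sum_le_sum_of_subset (Finset.range_subset_range.mpr h)

lemma Bnd_one {e m : ℕ} (h : 1 ≤ e) : 1 ≤ Bnd e m :=
  calc 1 = (m - 1).choose 0 := (Nat.choose_zero_right _).symm
    _ ≤ Bnd e m := Finset.single_le_sum (fun i _ => Nat.zero_le _) (Finset.mem_range.mpr h)

lemma Bnd_step (e m : ℕ) (hm : 1 ≤ m) : Bnd e m + Bnd (e - 1) m ≤ Bnd e (m + 1) := by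
  obtain ⟨mm, rfl⟩ := Nat.exists_eq_add_of_le hm
  rcases e with _ | f
  · simp [Bnd]
  · have key : ∀ g : ℕ, ∑ i ∈ Finset.range (g + 1), (mm + 1).choose i
        = ∑ i ∈ Finset.range (g + 1), mm.choose i + ∑ i ∈ Finset.range g, mm.choose i := by
      intro g
      induction g with
      | zero => simp
      | succ g ihg =>
        rw [Finset.sum_range_succ, ihg, Nat.choose_succ_succ,
          Finset.sum_range_succ (fun i => mm.choose i) (g + 1),
          Finset.sum_range_succ (fun i => mm.choose i) g]
        ring
    simp only [Bnd]
    have h1 : 1 + mm - 1 = mm := by omega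
    have h2 : 1 + mm + 1 - 1 = mm + 1 := by omega
    have h3 : f + 1 - 1 = f := by omega
    rw [h1, h2, h3, key f]

lemma ind_single_neg {v y : Euc n} (h : ⟪v, y⟫ < 0) :
    ind v ({y} : Set (Euc n)) = {({y} : Set (Euc n))} := by
  have e1 : ({y} : Set (Euc n)) ∩ negs v = {y} := by
    ext z
    simp only [Set.mem_inter_iff, Set.mem_singleton_iff, negs, Set.mem_setOf_eq]
    constructor
    · exact fun hz => hz.1
    · rintro rfl; exact ⟨rfl, h⟩
  have e2 : ({y} : Set (Euc n)) ∩ poss v = ∅ := by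
    ext z
    simp only [Set.mem_inter_iff, Set.mem_singleton_iff, poss, Set.mem_setOf_eq,
      Set.mem_empty_iff_false, iff_false, not_and]
    rintro rfl
    linarith
  unfold ind
  rw [e1, e2]
  ext U
  simp only [Set.mem_setOf_eq, Set.mem_singleton_iff]
  constructor
  · rintro ⟨rfl | rfl, hne⟩
    · rfl
    · exact absurd hne (by simp)
  · rintro rfl
    exact ⟨Or.inl rfl, ⟨y, rfl⟩⟩

lemma ind_single {v y : Euc n} (h : ⟪v, y⟫ ≠ 0) :
    ind v ({y} : Set (Euc n)) = {({y} : Set (Euc n))} := by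
  rcases h.lt_or_gt with h | h
  · exact ind_single_neg h
  · rw [← ind_neg v]
    exact ind_single_neg (by rw [inner_neg_left]; linarith)

lemma finrank_pos_of_mem {S : Submodule ℝ (Euc n)} {v : Euc n} (hvS : v ∈ S) (hv0 : v ≠ 0) :
    1 ≤ Module.finrank ℝ S := by
  have : Nontrivial S := nontrivial_of_ne ⟨v, hvS⟩ 0 (by simp [Subtype.ext_iff, hv0])
  exact Module.finrank_pos_iff.mpr this

lemma main (Y : Set (Euc n)) (hY : Y.Finite) :
    ∀ S : Submodule ℝ (Euc n), (Gset S Y).ncard ≤ Bnd (Module.finrank ℝ S) Y.ncard := by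
  refine Set.Finite.induction_on
    (motive := fun Y _ => ∀ S : Submodule ℝ (Euc n),
      (Gset S Y).ncard ≤ Bnd (Module.finrank ℝ S) Y.ncard) Y hY ?_ ?_
  · intro S
    rcases (Gset S ∅).eq_empty_or_nonempty with h | ⟨P, hP⟩
    · rw [h]; simp
    · obtain ⟨v, ⟨hvS, hv0, -⟩, rfl⟩ := hP
      have hsub : Gset S (∅ : Set (Euc n)) ⊆ {(∅ : Set (Set (Euc n)))} := by
        rintro Q ⟨w, -, rfl⟩
        have : ind w (∅ : Set (Euc n)) = ∅ := by
          ext U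
          simp only [ind, Set.mem_setOf_eq, Set.empty_inter, Set.mem_empty_iff_false, iff_false]
          rintro ⟨rfl | rfl, hne⟩ <;> exact hne.ne_empty rfl
        rw [this]; rfl
      calc (Gset S (∅ : Set (Euc n))).ncard ≤ ({(∅ : Set (Set (Euc n)))} : Set _).ncard :=
            Set.ncard_le_ncard hsub (Set.finite_singleton _)
        _ = 1 := Set.ncard_singleton _
        _ ≤ Bnd (Module.finrank ℝ S) (∅ : Set (Euc n)).ncard :=
            Bnd_one (finrank_pos_of_mem hvS hv0)
  · intro y Y' hy hY' IH S
    have hncard : (insert y Y').ncard = Y'.ncard + 1 := Set.ncard_insert_of_notMem hy hY'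
    rcases Y'.eq_empty_or_nonempty with rfl | ⟨y0, hy0⟩
    · rcases (Gset S (insert y ∅)).eq_empty_or_nonempty with h | ⟨P, hP⟩
      · rw [h]; simp
      · obtain ⟨v, ⟨hvS, hv0, hsg⟩, rfl⟩ := hP
        have hsub : Gset S (insert y ∅) ⊆ {({({y} : Set (Euc n))} : Set (Set (Euc n)))} := by
          rintro Q ⟨w, ⟨-, -, hsgw⟩, rfl⟩
          have hy' : (insert y ∅ : Set (Euc n)) = {y} := by simp
          rw [hy'] at hsgw ⊢
          rw [ind_single (hsgw y rfl)]
          rfl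
        calc (Gset S (insert y ∅)).ncard ≤ 1 := by
              simpa using Set.ncard_le_ncard hsub (Set.finite_singleton _)
          _ ≤ Bnd (Module.finrank ℝ S) (insert y (∅ : Set (Euc n))).ncard :=
              Bnd_one (finrank_pos_of_mem hvS hv0)
    · by_cases hex : ∃ v ∈ S, ⟪v, y⟫ ≠ 0
      · obtain ⟨v0, hv0S, hv0y⟩ := hex
        set S' := S ⊓ (Submodule.span ℝ {y})ᗮ with hS'def
        have hS'lt : S' < S := by
          refine lt_of_le_of_ne inf_le_left ?_
          intro h
          rw [← h] at hv0S
          have h2 := (Submodule.mem_inf.mp hv0S).2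
          rw [Submodule.mem_orthogonal_singleton_iff_inner_right] at h2
          exact hv0y (by rw [real_inner_comm]; exact h2)
        have hrk : Module.finrank ℝ S' < Module.finrank ℝ S :=
          Submodule.finrank_lt_finrank_of_lt hS'lt
        have hfin : (Gset S (insert y Y')).Finite := Gset_finite (hY'.insert y)
        have hcount := count hfin (rmap y) (Gset_finite (S := S') hY')
          (fun P1 hP1 P2 hP2 P3 hP3 e12 e13 => three hy hy0 hP1 hP2 hP3 e12 e13)
          (fun P1 hP1 P2 hP2 hne e => double hy hy0 hP1 hP2 hne e)
        have himg : rmap y '' Gset S (insert y Y') ⊆ Gset S Y' := by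
          rintro Q ⟨P, hP, rfl⟩
          exact rmap_mem hy hP
        have hm1 : 1 ≤ Y'.ncard := by
          rw [Nat.one_le_iff_ne_zero]
          intro h0
          rw [(Set.ncard_eq_zero hY').mp h0] at hy0
          exact hy0
        calc (Gset S (insert y Y')).ncard
            ≤ (rmap y '' Gset S (insert y Y')).ncard + (Gset S' Y').ncard := hcount
          _ ≤ (Gset S Y').ncard + (Gset S' Y').ncard :=
              add_le_add_left (Set.ncard_le_ncard himg (Gset_finite hY')) _
          _ ≤ Bnd (Module.finrank ℝ S) Y'.ncard + Bnd (Module.finrank ℝ S') Y'.ncard :=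
              add_le_add (IH S) (IH S')
          _ ≤ Bnd (Module.finrank ℝ S) Y'.ncard + Bnd (Module.finrank ℝ S - 1) Y'.ncard :=
              add_le_add le_rfl (Bnd_mono1 (by omega))
          _ ≤ Bnd (Module.finrank ℝ S) (Y'.ncard + 1) := Bnd_step _ _ hm1
          _ = Bnd (Module.finrank ℝ S) (insert y Y').ncard := by rw [hncard]
      · have hempty : Gset S (insert y Y') = ∅ := by
          rw [Set.eq_empty_iff_forall_notMem]
          rintro P ⟨v, ⟨hvS, hv0, hsg⟩, -⟩
          push_neg at hex
          exact hsg y (Set.mem_insert _ _) (hex v hvS)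
        rw [hempty]
        simp

end Stmt2Aux

namespace Stmt2Aux

def app {n : ℕ} (a : ℝ) (v : Euc n) : Euc (n + 1) :=
  (WithLp.equiv 2 _).symm (Fin.cons a ((WithLp.equiv 2 _) v))

lemma inner_app {n : ℕ} (v x : Euc n) (a b : ℝ) :
    ⟪app a v, app b x⟫ = a * b + ⟪v, x⟫ := by
  simp [app, PiLp.inner_apply, Fin.sum_univ_succ, RCLike.inner_apply]
  ring

lemma app_injective {n : ℕ} (a : ℝ) : Function.Injective (app (n := n) a) := by
  intro u w h
  simp only [app] at h
  have h1 := (WithLp.equiv 2 _).symm.injective h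
  have h2 := Fin.cons_right_injective _ h1
  exact (WithLp.equiv 2 _).injective h2

lemma app_ne_zero_of_ne {n : ℕ} (a : ℝ) {v : Euc n} (hv : v ≠ 0) : app a v ≠ 0 := by
  intro h
  apply hv
  have hi : ∀ i, app a v (Fin.succ i) = 0 := by intro i; rw [h]; rfl
  ext i
  have := hi i
  simpa [app] using this

lemma app_ne_zero_of_ne' {n : ℕ} {a : ℝ} (ha : a ≠ 0) (v : Euc n) : app a v ≠ 0 := by
  intro h
  apply ha
  have h0 : app a v 0 = 0 := by rw [h]; rfl
  simpa [app] using h0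

def liftp {d : ℕ} (x : Euc d) : Euc (d + 1) := app (-1) x

lemma liftp_injective {d : ℕ} : Function.Injective (liftp (d := d)) := app_injective (-1)

lemma hset_lift {d : ℕ} (X : Set (Euc d)) (hXne : X.Nonempty) :
    ∀ P ∈ HSet X, (Set.image liftp) '' P ∈ Gset (⊤ : Submodule ℝ (Euc (d + 1))) (liftp '' X) := by
  rintro P (rfl | ⟨v, c, hv0, hsg, hA, hB, rfl⟩)
  · -- trivial partition
    set w : Euc (d + 1) := app 1 0 with hw
    have hwin : ∀ x : Euc d, ⟪w, liftp x⟫ = -1 := by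
      intro x
      rw [hw, liftp, inner_app]
      simp
    refine ⟨w, ⟨Submodule.mem_top, app_ne_zero_of_ne' one_ne_zero _, ?_⟩, ?_⟩
    · rintro z ⟨x, hx, rfl⟩
      rw [hwin]
      norm_num
    · rw [Set.image_singleton]
      have e1 : liftp '' X ∩ negs w = liftp '' X := by
        apply Set.inter_eq_left.mpr
        rintro z ⟨x, hx, rfl⟩
        show ⟪w, liftp x⟫ < 0
        rw [hwin]; norm_num
      have e2 : liftp '' X ∩ poss w = ∅ := by
        rw [Set.eq_empty_iff_forall_notMem]
        rintro z ⟨⟨x, hx, rfl⟩, hz⟩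
        have : (0:ℝ) < ⟪w, liftp x⟫ := hz
        rw [hwin] at this
        linarith
      unfold ind
      rw [e1, e2]
      ext U
      simp only [Set.mem_singleton_iff, Set.mem_setOf_eq]
      constructor
      · rintro rfl
        exact ⟨Or.inl rfl, hXne.image _⟩
      · rintro ⟨rfl | rfl, hne⟩
        · rfl
        · exact absurd hne (by simp)
  · -- nontrivial partition
    set w : Euc (d + 1) := app c v with hw
    have hwin : ∀ x : Euc d, ⟪w, liftp x⟫ = ⟪v, x⟫ - c := by
      intro x
      rw [hw, liftp, inner_app]
      ring
    have eA : liftp '' X ∩ negs w = liftp '' (X ∩ {x | ⟪v, x⟫ < c}) := by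
      ext z
      constructor
      · rintro ⟨⟨x, hx, rfl⟩, hzn⟩
        have h1 : ⟪w, liftp x⟫ < 0 := hzn
        rw [hwin] at h1
        exact ⟨x, ⟨hx, show ⟪v, x⟫ < c by linarith⟩, rfl⟩
      · rintro ⟨x, ⟨hx, hxc⟩, rfl⟩
        have hxc' : ⟪v, x⟫ < c := hxc
        exact ⟨⟨x, hx, rfl⟩, show ⟪w, liftp x⟫ < 0 by rw [hwin]; linarith⟩
    have eB : liftp '' X ∩ poss w = liftp '' (X ∩ {x | c < ⟪v, x⟫}) := by
      ext z
      constructor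
      · rintro ⟨⟨x, hx, rfl⟩, hzn⟩
        have h1 : (0:ℝ) < ⟪w, liftp x⟫ := hzn
        rw [hwin] at h1
        exact ⟨x, ⟨hx, show c < ⟪v, x⟫ by linarith⟩, rfl⟩
      · rintro ⟨x, ⟨hx, hxc⟩, rfl⟩
        have hxc' : c < ⟪v, x⟫ := hxc
        exact ⟨⟨x, hx, rfl⟩, show (0:ℝ) < ⟪w, liftp x⟫ by rw [hwin]; linarith⟩
    refine ⟨w, ⟨Submodule.mem_top, app_ne_zero_of_ne c hv0, ?_⟩, ?_⟩
    · rintro z ⟨x, hx, rfl⟩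
      rw [hwin]
      exact sub_ne_zero_of_ne (hsg x hx)
    · have himg : (Set.image liftp) '' {X ∩ {x | ⟪v, x⟫ < c}, X ∩ {x | c < ⟪v, x⟫}} =
          {liftp '' (X ∩ {x | ⟪v, x⟫ < c}), liftp '' (X ∩ {x | c < ⟪v, x⟫})} := by
        rw [Set.image_pair]
      rw [himg]
      unfold ind
      rw [eA, eB]
      ext U
      simp only [Set.mem_insert_iff, Set.mem_singleton_iff, Set.mem_setOf_eq]
      constructor
      · rintro (rfl | rfl)
        · exact ⟨Or.inl rfl, hA.image _⟩
        · exact ⟨Or.inr rfl, hB.image _⟩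
      · rintro ⟨rfl | rfl, -⟩
        · exact Or.inl rfl
        · exact Or.inr rfl

end Stmt2Aux

theorem stmt2' {d k : ℕ} (X : Set (Euc d)) (hX : X.Finite) (hk : X.ncard = k) :
    (HSet X).ncard ≤ phi d k := by
  subst hk
  have hphi : 1 ≤ phi d X.ncard := by
    have h0 : (0:ℕ) ∈ Finset.range (d + 1) := Finset.mem_range.mpr (Nat.succ_pos d)
    calc 1 = (X.ncard - 1).choose 0 := (Nat.choose_zero_right _).symm
      _ ≤ phi d X.ncard := Finset.single_le_sum (fun i _ => Nat.zero_le _) h0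
  rcases X.eq_empty_or_nonempty with rfl | hXne
  · have hH : HSet (∅ : Set (Euc d)) = {({∅} : Set (Set (Euc d)))} := by
      ext P
      simp only [HSet, RealizedByHyperplane, Set.mem_setOf_eq, Set.mem_singleton_iff]
      constructor
      · rintro (h | ⟨v, c, -, -, ⟨x, hx⟩, -⟩)
        · exact h
        · exact absurd hx.1 (Set.notMem_empty x)
      · exact fun h => Or.inl h
    rw [hH, Set.ncard_singleton]
    exact hphi
  · have hinj : Function.Injective (Set.image (Set.image (Stmt2Aux.liftp (d := d)))) :=
      Set.image_injective.mpr (Set.image_injective.mpr Stmt2Aux.liftp_injective)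
    have hsub : (Set.image (Set.image Stmt2Aux.liftp)) '' HSet X ⊆
        Stmt2Aux.Gset (⊤ : Submodule ℝ (Euc (d + 1))) (Stmt2Aux.liftp '' X) := by
      rintro Q ⟨P, hP, rfl⟩
      exact Stmt2Aux.hset_lift X hXne P hP
    calc (HSet X).ncard
        = ((Set.image (Set.image Stmt2Aux.liftp)) '' HSet X).ncard :=
          (Set.ncard_image_of_injective _ hinj).symm
      _ ≤ (Stmt2Aux.Gset (⊤ : Submodule ℝ (Euc (d + 1))) (Stmt2Aux.liftp '' X)).ncard :=
          Set.ncard_le_ncard hsub (Stmt2Aux.Gset_finite (hX.image _))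
      _ ≤ Stmt2Aux.Bnd (Module.finrank ℝ (⊤ : Submodule ℝ (Euc (d + 1))))
            (Stmt2Aux.liftp '' X).ncard :=
          Stmt2Aux.main _ (hX.image _) ⊤
      _ = Stmt2Aux.Bnd (d + 1) X.ncard := by
          rw [finrank_top, finrank_euclideanSpace_fin,
            Set.ncard_image_of_injective _ Stmt2Aux.liftp_injective]
      _ = phi d X.ncard := rfl


theorem stmt2 {d k : ℕ} (X : Set (Euc d)) (hX : X.Finite) (hk : X.ncard = k) :
    (HSet X).ncard ≤ phi d k :=
  stmt2' X hX hk
end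
end

section
/- Let X ⊆ R^d be finite and let a, b, c ∈ X be three distinct collinear points with c strictly between a and b. Then every hyperplane-realizable partition of X separating a and c also separates a and b, and there exists a hyperplane-realizable partition of X separating c and b which does not separate a and c; hence sep(a,c) is a proper subset of sep(a,b). -/
open scoped RealInnerProductSpace

noncomputable section

theorem stmt4 {d : ℕ} (X : Set (Euc d)) (hX : X.Finite) (a b c : Euc d)
    (ha : a ∈ X) (hb : b ∈ X) (hc : c ∈ X)
    (hab : a ≠ b) (hac : a ≠ c) (hbc : b ≠ c)
    (t : ℝ) (ht0 : 0 < t) (ht1 : t < 1) (hbtw : c = t • a + (1 - t) • b) :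
    (∀ P ∈ HSet X, Separates P a c → Separates P a b) ∧
    (∃ P ∈ HSet X, Separates P c b ∧ ¬ Separates P a c) ∧
    sep (HSet X) a c ⊂ sep (HSet X) a b := by
  have key : ∀ (v : Euc d), ⟪v, c⟫ = t * ⟪v, a⟫ + (1 - t) * ⟪v, b⟫ := by
    intro v
    rw [hbtw, inner_add_right, real_inner_smul_right, real_inner_smul_right]
  -- Part 1
  have part1 : ∀ P ∈ HSet X, Separates P a c → Separates P a b := by
    rintro P hP ⟨U, hU, V, hV, hUV, haU, hcV⟩
    rcases hP with hP | ⟨v, r, hv, hne, h1, h2, rfl⟩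
    · rw [hP] at hU hV
      simp only [Set.mem_singleton_iff] at hU hV
      exact absurd (hU.trans hV.symm) hUV
    · set S₁ := X ∩ {x | ⟪v, x⟫ < r} with hS₁
      set S₂ := X ∩ {x | r < ⟪v, x⟫} with hS₂
      have hS : S₁ ≠ S₂ := by
        intro h
        obtain ⟨x, hx1, hx2⟩ := h1
        have h2' : x ∈ S₂ := h ▸ ⟨hx1, hx2⟩
        have h2'' : r < ⟪v, x⟫ := h2'.2
        have h1'' : ⟪v, x⟫ < r := hx2
        linarith
      have hUm : U = S₁ ∨ U = S₂ := hU
      have hVm : V = S₁ ∨ V = S₂ := hV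
      rcases hUm with rfl | rfl <;> rcases hVm with rfl | rfl
      · exact absurd rfl hUV
      · have e1 : ⟪v, a⟫ < r := haU.2
        have e2 : r < ⟪v, c⟫ := hcV.2
        have hbb : r < ⟪v, b⟫ := by nlinarith [key v]
        exact ⟨S₁, Or.inl rfl, S₂, Or.inr rfl, hS, haU, ⟨hb, hbb⟩⟩
      · have e1 : r < ⟪v, a⟫ := haU.2
        have e2 : ⟪v, c⟫ < r := hcV.2
        have hbb : ⟪v, b⟫ < r := by nlinarith [key v]
        exact ⟨S₂, Or.inr rfl, S₁, Or.inl rfl, hS.symm, haU, ⟨hb, hbb⟩⟩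
      · exact absurd rfl hUV
  refine ⟨part1, ?_⟩
  -- construct the witness
  set v : Euc d := b - a with hv
  have hvne : v ≠ 0 := sub_ne_zero.2 hab.symm
  have hiab : ⟪v, a⟫ < ⟪v, b⟫ := by
    have hn : 0 < ‖v‖ := norm_pos_iff.2 hvne
    have : (0:ℝ) < ⟪v, v⟫ := by
      rw [real_inner_self_eq_norm_sq]; positivity
    rw [hv, inner_sub_right] at this
    linarith
  have hiac : ⟪v, a⟫ < ⟪v, c⟫ := by nlinarith [key v]
  have hicb : ⟪v, c⟫ < ⟪v, b⟫ := by nlinarith [key v]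
  obtain ⟨r, hrIoo, hrim⟩ : ∃ r, r ∈ Set.Ioo ⟪v, c⟫ ⟪v, b⟫ ∧
      r ∉ (fun x => ⟪v, x⟫) '' X := by
    have := ((Set.Ioo_infinite hicb).diff (hX.image (fun x => ⟪v, x⟫))).nonempty
    obtain ⟨r, hr⟩ := this
    exact ⟨r, hr.1, hr.2⟩
  have hne : ∀ x ∈ X, ⟪v, x⟫ ≠ r := fun x hx h => hrim ⟨x, hx, h⟩
  set S₁ := X ∩ {x | ⟪v, x⟫ < r} with hS₁
  set S₂ := X ∩ {x | r < ⟪v, x⟫} with hS₂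
  have haS₁ : a ∈ S₁ := ⟨ha, lt_trans hiac hrIoo.1⟩
  have hcS₁ : c ∈ S₁ := ⟨hc, hrIoo.1⟩
  have hbS₂ : b ∈ S₂ := ⟨hb, hrIoo.2⟩
  set P : Set (Set (Euc d)) := {S₁, S₂} with hP
  have hS : S₁ ≠ S₂ := by
    intro h
    have h2' : a ∈ S₂ := h ▸ haS₁
    have e1 : r < ⟪v, a⟫ := h2'.2
    have e2 : ⟪v, a⟫ < r := haS₁.2
    linarith
  have hPH : P ∈ HSet X :=
    Or.inr ⟨v, r, hvne, hne, ⟨a, haS₁⟩, ⟨b, hbS₂⟩, rfl⟩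
  have hsepcb : Separates P c b := ⟨S₁, Or.inl rfl, S₂, Or.inr rfl, hS, hcS₁, hbS₂⟩
  have hsepab : Separates P a b := ⟨S₁, Or.inl rfl, S₂, Or.inr rfl, hS, haS₁, hbS₂⟩
  have hnsepac : ¬ Separates P a c := by
    rintro ⟨U, hU, V, hV, hUV, haU, hcV⟩
    have hUm : U = S₁ ∨ U = S₂ := hU
    have hVm : V = S₁ ∨ V = S₂ := hV
    rcases hUm with rfl | rfl <;> rcases hVm with rfl | rfl
    · exact hUV rfl
    · have e1 : r < ⟪v, c⟫ := hcV.2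
      have e2 : ⟪v, c⟫ < r := hcS₁.2
      linarith
    · have e1 : r < ⟪v, a⟫ := haU.2
      have e2 : ⟪v, a⟫ < r := haS₁.2
      linarith
    · exact hUV rfl
  refine ⟨⟨P, hPH, hsepcb, hnsepac⟩, ?_⟩
  constructor
  · rintro Q ⟨hQ, hsep⟩
    exact ⟨hQ, part1 Q hQ hsep⟩
  · intro hsub
    exact hnsepac (hsub ⟨hPH, hsepab⟩).2
end
end

section
/- Let X ⊆ R^d be a finite set with no three points collinear. Then for every pair of distinct points a, b ∈ X, the set sep(a,b) of hyperplane-realizable partitions of X separating a and b is a minimal transversal for the full subdivisions of H(X). -/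
open scoped RealInnerProductSpace

noncomputable section

lemma sep_symm' {α : Type*} {P : Set (Set α)} {a b : α} (h : Separates P a b) :
    Separates P b a := by
  obtain ⟨U, hU, V, hV, hUV, haU, hbV⟩ := h
  exact ⟨V, hV, U, hU, hUV.symm, hbV, haU⟩

lemma collinear_of_seg {d : ℕ} {x a b : Euc d} (h : x ∈ segment ℝ a b) :
    Collinear ℝ ({x, a, b} : Set (Euc d)) := by
  rw [segment_eq_image_lineMap] at h
  obtain ⟨t, -, rfl⟩ := h
  exact collinear_insert_of_mem_affineSpan_pair (AffineMap.lineMap_mem_affineSpan_pair t a b)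

lemma both_mem_segment {d : ℕ} {x y a b : Euc d} (hxy : x ≠ y)
    (hy : y ∈ convexHull ℝ ({x, a, b} : Set (Euc d)))
    (hx : x ∈ convexHull ℝ ({y, a, b} : Set (Euc d))) : x ∈ segment ℝ a b := by
  rw [show ({x, a, b} : Set (Euc d)) = insert x {a, b} from rfl,
    convexHull_insert ⟨a, by simp⟩, convexHull_pair] at hy
  rw [show ({y, a, b} : Set (Euc d)) = insert y {a, b} from rfl,
    convexHull_insert ⟨a, by simp⟩, convexHull_pair] at hx
  rw [mem_convexJoin] at hy hx
  obtain ⟨x', hx', z₁, hz₁, hyseg⟩ := hy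
  obtain ⟨y', hy', z₂, hz₂, hxseg⟩ := hx
  rw [Set.mem_singleton_iff] at hx' hy'
  rw [hx'] at hyseg
  rw [hy'] at hxseg
  obtain ⟨α, β, hα, hβ, hαβ, hy'⟩ := hyseg
  obtain ⟨γ, δ, hγ, hδ, hγδ, hx'⟩ := hxseg
  have hα1 : α ≤ 1 := by linarith
  have hγ1 : γ ≤ 1 := by linarith
  have hs : 0 < 1 - γ * α := by
    rcases eq_or_lt_of_le (mul_le_one₀ hγ1 hα hα1) with h | h
    · exfalso
      have hA : α = 1 := by nlinarith
      have hB : β = 0 := by linarith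
      apply hxy
      rw [hA, hB] at hy'
      simpa using hy'
    · linarith
  have hne : (1 : ℝ) - γ * α ≠ 0 := ne_of_gt hs
  rw [← hy'] at hx'
  rw [smul_add, smul_smul, smul_smul] at hx'
  have h2 : (γ * α) • x + ((γ * β) • z₁ + δ • z₂) = x := by rw [← add_assoc]; exact hx'
  have h4 : (γ * β) • z₁ + δ • z₂ = x - (γ * α) • x := by
    rw [eq_sub_iff_add_eq, add_comm]; exact h2
  have key : (1 - γ * α) • x = (γ * β) • z₁ + δ • z₂ := by rw [h4]; module
  have combo : (γ * β / (1 - γ * α)) • z₁ + (δ / (1 - γ * α)) • z₂ = x := by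
    have h5 : (1 - γ * α)⁻¹ • ((1 - γ * α) • x) = x := inv_smul_smul₀ hne x
    rw [key, smul_add, smul_smul, smul_smul] at h5
    rw [div_eq_inv_mul, div_eq_inv_mul]
    exact h5
  have hxseg' : x ∈ segment ℝ z₁ z₂ := by
    refine ⟨γ * β / (1 - γ * α), δ / (1 - γ * α), by positivity, by positivity, ?_, combo⟩
    rw [← add_div, div_eq_one_iff_eq hne]
    linear_combination γ * hαβ + hγδ
  exact (convex_segment a b).segment_subset hz₁ hz₂ hxseg'

lemma exists_cut {d : ℕ} {X : Set (Euc d)} (hX : X.Finite) {p q r s : Euc d}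
    (hp : p ∈ X) (hq : q ∈ X) (hr : r ∈ X) (hs : s ∈ X)
    (h : p ∉ convexHull ℝ ({q, r, s} : Set (Euc d))) :
    ∃ P ∈ HSet X, Separates P p q ∧ ¬ Separates P r s := by
  obtain ⟨f, u, hfp, hfu⟩ := geometric_hahn_banach_point_closed
    (convex_convexHull ℝ _) ((Set.toFinite _).isCompact_convexHull (𝕜 := ℝ)).isClosed h
  set v := (InnerProductSpace.toDual ℝ (Euc d)).symm f with hvdef
  have hv : ∀ z : Euc d, ⟪v, z⟫ = f z := fun z => InnerProductSpace.toDual_symm_apply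
  have hqc : u < f q := hfu q (subset_convexHull ℝ _ (by simp))
  have hrc : u < f r := hfu r (subset_convexHull ℝ _ (by simp))
  have hsc : u < f s := hfu s (subset_convexHull ℝ _ (by simp))
  have hv0 : v ≠ 0 := by
    intro h0
    have e1 : f p = 0 := by rw [← hv p, h0, inner_zero_left]
    have e2 : f q = 0 := by rw [← hv q, h0, inner_zero_left]
    linarith
  set M : ℝ := min (f q) (min (f r) (f s)) with hMdef
  have hpM : f p < M := lt_trans hfp (lt_min hqc (lt_min hrc hsc))
  have hinf : (Set.Ioo (f p) M).Infinite := Set.infinite_coe_iff.mp (Set.Ioo.infinite hpM)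
  obtain ⟨c, hcIoo, hcim⟩ := (hinf.diff (hX.image (fun z => ⟪v, z⟫))).nonempty
  have hne : ∀ z ∈ X, ⟪v, z⟫ ≠ c := fun z hz hzc => hcim ⟨z, hz, hzc⟩
  have hpc : ⟪v, p⟫ < c := by rw [hv]; exact hcIoo.1
  have hqcc : c < ⟪v, q⟫ := by rw [hv]; exact lt_of_lt_of_le hcIoo.2 (min_le_left _ _)
  have hrcc : c < ⟪v, r⟫ := by
    rw [hv]; exact lt_of_lt_of_le hcIoo.2 (le_trans (min_le_right _ _) (min_le_left _ _))
  have hscc : c < ⟪v, s⟫ := by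
    rw [hv]; exact lt_of_lt_of_le hcIoo.2 (le_trans (min_le_right _ _) (min_le_right _ _))
  set A : Set (Euc d) := X ∩ {x | ⟪v, x⟫ < c} with hAdef
  set B : Set (Euc d) := X ∩ {x | c < ⟪v, x⟫} with hBdef
  have hAB : A ≠ B := by
    intro hEq
    have hpA : p ∈ A := ⟨hp, hpc⟩
    rw [hEq] at hpA
    exact lt_asymm hpc hpA.2
  refine ⟨{A, B}, Or.inr ⟨v, c, hv0, hne, ⟨p, hp, hpc⟩, ⟨q, hq, hqcc⟩, rfl⟩, ?_, ?_⟩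
  · exact ⟨A, Set.mem_insert _ _, B, Set.mem_insert_iff.mpr (Or.inr rfl), hAB,
      ⟨hp, hpc⟩, ⟨hq, hqcc⟩⟩
  · rintro ⟨U, hU, V, hV, hUV, hrU, hsV⟩
    have hU' : U = B := by
      rcases hU with rfl | hU
      · exact absurd hrU.2 (not_lt.mpr (le_of_lt hrcc))
      · exact hU
    have hV' : V = B := by
      rcases hV with rfl | hV
      · exact absurd hsV.2 (not_lt.mpr (le_of_lt hscc))
      · exact hV
    exact hUV (hU'.trans hV'.symm)

lemma key_aux {d : ℕ} {X : Set (Euc d)} (hX : X.Finite)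
    (hcol : ∀ a ∈ X, ∀ b ∈ X, ∀ c ∈ X, a ≠ b → a ≠ c → b ≠ c → ¬ Collinear ℝ ({a, b, c} : Set (Euc d)))
    {a b : Euc d} (ha : a ∈ X) (hb : b ∈ X) (hab : a ≠ b)
    {x y : Euc d} (hx : x ∈ X) (hy : y ∈ X) (hxy : x ≠ y)
    (hya : y ≠ a) (hyb : y ≠ b) :
    ∃ P ∈ HSet X, Separates P x y ∧ ¬ Separates P a b := by
  by_cases hmem : y ∈ convexHull ℝ ({x, a, b} : Set (Euc d))
  · have hxa : x ≠ a := by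
      rintro rfl
      rw [Set.insert_idem, convexHull_pair] at hmem
      exact hcol y hy x hx b hb hya hyb hab (collinear_of_seg hmem)
    have hxb : x ≠ b := by
      rintro rfl
      rw [Set.insert_comm, Set.pair_eq_singleton, convexHull_pair] at hmem
      exact hcol y hy a ha x hx hya hyb hab (collinear_of_seg hmem)
    have hxc : x ∉ convexHull ℝ ({y, a, b} : Set (Euc d)) := by
      intro hx'
      exact hcol x hx a ha b hb hxa hxb hab (collinear_of_seg (both_mem_segment hxy hmem hx'))
    exact exists_cut hX hx hy ha hb hxc
  · obtain ⟨P, hP, hsep, hnsep⟩ := exists_cut hX hy hx ha hb hmem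
    exact ⟨P, hP, sep_symm' hsep, hnsep⟩

lemma key_lem {d : ℕ} {X : Set (Euc d)} (hX : X.Finite)
    (hcol : ∀ a ∈ X, ∀ b ∈ X, ∀ c ∈ X, a ≠ b → a ≠ c → b ≠ c → ¬ Collinear ℝ ({a, b, c} : Set (Euc d)))
    {a b : Euc d} (ha : a ∈ X) (hb : b ∈ X) (hab : a ≠ b)
    {x y : Euc d} (hx : x ∈ X) (hy : y ∈ X) (hxy : x ≠ y)
    (h1 : ¬ (x = a ∧ y = b)) (h2 : ¬ (x = b ∧ y = a)) :
    ∃ P ∈ HSet X, Separates P x y ∧ ¬ Separates P a b := by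
  by_cases hya : y = a
  · subst hya
    have hxb : x ≠ b := fun h => h2 ⟨h, rfl⟩
    obtain ⟨P, hP, hsep, hnsep⟩ := key_aux hX hcol ha hb hab hy hx (Ne.symm hxy) hxy hxb
    exact ⟨P, hP, sep_symm' hsep, hnsep⟩
  · by_cases hyb : y = b
    · subst hyb
      have hxa : x ≠ a := fun h => h1 ⟨h, rfl⟩
      obtain ⟨P, hP, hsep, hnsep⟩ := key_aux hX hcol ha hb hab hy hx (Ne.symm hxy) hxa hxy
      exact ⟨P, hP, sep_symm' hsep, hnsep⟩
    · exact key_aux hX hcol ha hb hab hx hy hxy hya hyb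

theorem stmt5 {d : ℕ} (X : Set (Euc d)) (hX : X.Finite)
    (hcol : ∀ a ∈ X, ∀ b ∈ X, ∀ c ∈ X, a ≠ b → a ≠ c → b ≠ c → ¬ Collinear ℝ ({a, b, c} : Set (Euc d)))
    (a : Euc d) (ha : a ∈ X) (b : Euc d) (hb : b ∈ X) (hab : a ≠ b) :
    IsMinimalTransversal X (HSet X) (sep (HSet X) a b) := by
  constructor
  · refine ⟨fun P hP => hP.1, ?_⟩
    intro S hS hfull
    obtain ⟨P, hPS, hsep⟩ := hfull a ha b hb hab
    exact ⟨P, hPS, hS hPS, hsep⟩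
  · intro T' hT' htrans
    refine Set.Subset.antisymm hT' ?_
    intro P₀ hP₀
    by_contra hP₀T'
    have hSsub : (HSet X \ sep (HSet X) a b) ∪ {P₀} ⊆ HSet X := by
      rintro Q (hQ | hQ)
      · exact hQ.1
      · rw [Set.mem_singleton_iff] at hQ; subst hQ; exact hP₀.1
    have hfull : IsFull X ((HSet X \ sep (HSet X) a b) ∪ {P₀}) := by
      intro x hx y hy hxy
      by_cases hc1 : x = a ∧ y = b
      · obtain ⟨rfl, rfl⟩ := hc1
        exact ⟨P₀, Set.mem_union_right _ rfl, hP₀.2⟩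
      by_cases hc2 : x = b ∧ y = a
      · obtain ⟨rfl, rfl⟩ := hc2
        exact ⟨P₀, Set.mem_union_right _ rfl, sep_symm' hP₀.2⟩
      obtain ⟨P, hP, hsepxy, hnsep⟩ := key_lem hX hcol ha hb hab hx hy hxy hc1 hc2
      exact ⟨P, Set.mem_union_left _ ⟨hP, fun hm => hnsep hm.2⟩, hsepxy⟩
    obtain ⟨Q, hQS, hQT⟩ := htrans.2 _ hSsub hfull
    rcases hQS with ⟨-, hns⟩ | hq
    · exact hns (hT' hQT)
    · rw [Set.mem_singleton_iff] at hq; subst hq; exact hP₀T' hQT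
end
end

section
/- Let X ⊆ R^d be a set of k ≥ 2 points in general position, a ∈ X, and X_a = X \ {a}. Then the restriction map P ↦ P|_{X_a} maps H(X) onto H(X_a), and for each R ∈ H(X_a) there are at most two members P of H(X) with P|_{X_a} = R. -/
open scoped RealInnerProductSpace

noncomputable section

def restrictPart {α : Type*} (P : Set (Set α)) (Y : Set α) : Set (Set α) :=
  {V | ∃ U ∈ P, V = U ∩ Y} \ {∅}

/-! ### Auxiliary lemmas -/

lemma restrict_pair_eq {α : Type*} (A B Y : Set α) :
    restrictPart {A, B} Y = ({A ∩ Y, B ∩ Y} : Set (Set α)) \ {∅} := by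
  ext V
  simp only [restrictPart, Set.mem_diff, Set.mem_setOf_eq, Set.mem_insert_iff,
    Set.mem_singleton_iff]
  constructor
  · rintro ⟨⟨U, (rfl | rfl), rfl⟩, h⟩ <;> tauto
  · rintro ⟨(rfl | rfl), h⟩ <;> exact ⟨⟨_, by tauto, rfl⟩, h⟩

lemma restrict_single_eq {α : Type*} (A Y : Set α) :
    restrictPart {A} Y = ({A ∩ Y} : Set (Set α)) \ {∅} := by
  ext V
  simp only [restrictPart, Set.mem_diff, Set.mem_setOf_eq, Set.mem_singleton_iff]
  constructor
  · rintro ⟨⟨U, rfl, rfl⟩, h⟩; tauto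
  · rintro ⟨rfl, h⟩; exact ⟨⟨A, rfl, rfl⟩, h⟩

lemma pair_diff_empty {α : Type*} {A B : Set α} (hA : A.Nonempty) (hB : B.Nonempty) :
    ({A, B} : Set (Set α)) \ {∅} = {A, B} := by
  ext V
  simp only [Set.mem_diff, Set.mem_insert_iff, Set.mem_singleton_iff]
  constructor
  · tauto
  · rintro (rfl | rfl) <;> simp [hA.ne_empty, hB.ne_empty]

lemma single_diff_empty {α : Type*} {A : Set α} (hA : A.Nonempty) :
    ({A} : Set (Set α)) \ {∅} = {A} := by
  ext V
  simp only [Set.mem_diff, Set.mem_singleton_iff]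
  constructor
  · tauto
  · rintro rfl; exact ⟨rfl, hA.ne_empty⟩

lemma pair_eq_pair_cases {α : Type*} {A B U V : Set α} (h : ({A, B} : Set (Set α)) = {U, V})
    (hA : A.Nonempty) (hdisj : A ∩ B = ∅) :
    (A = U ∧ B = V) ∨ (A = V ∧ B = U) := by
  have hAB : A ≠ B := by
    rintro rfl
    rw [Set.inter_self] at hdisj
    exact hA.ne_empty hdisj
  have hAm : A = U ∨ A = V := by
    have : A ∈ ({U, V} : Set (Set α)) := by rw [← h]; simp
    simpa using this
  have hBm : B = U ∨ B = V := by
    have : B ∈ ({U, V} : Set (Set α)) := by rw [← h]; simp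
    simpa using this
  rcases hAm with h1 | h1
  · refine Or.inl ⟨h1, ?_⟩
    rcases hBm with h2 | h2
    · exact absurd (h1.trans h2.symm) hAB
    · exact h2
  · refine Or.inr ⟨h1, ?_⟩
    rcases hBm with h2 | h2
    · exact h2
    · exact absurd (h1.trans h2.symm) hAB

/-- The fiber analysis for a two-part partition `{A, B}` with `a ∈ A`. -/
lemma fiber_pair_case {α : Type*} {X : Set α} {a : α} (ha : a ∈ X)
    {A B : Set α} (hAne : A.Nonempty) (hBne : B.Nonempty)
    (hAsub : A ⊆ X) (hBsub : B ⊆ X) (hdisj : A ∩ B = ∅) (hUnion : A ∪ B = X)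
    (haA : a ∈ A) :
    restrictPart {A, B} (X \ {a}) =
      ({A \ {a}, B} : Set (Set α)) \ {∅} ∧ A \ {a} ∩ B = ∅ := by
  have haB : a ∉ B := by
    intro hB
    have : a ∈ A ∩ B := ⟨haA, hB⟩
    rw [hdisj] at this
    exact this
  have h1 : A ∩ (X \ {a}) = A \ {a} := by
    ext x
    simp only [Set.mem_inter_iff, Set.mem_diff, Set.mem_singleton_iff]
    exact ⟨fun ⟨hx, _, hxa⟩ => ⟨hx, hxa⟩, fun ⟨hx, hxa⟩ => ⟨hx, hAsub hx, hxa⟩⟩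
  have h2 : B ∩ (X \ {a}) = B := by
    ext x
    simp only [Set.mem_inter_iff, Set.mem_diff, Set.mem_singleton_iff]
    exact ⟨fun h => h.1, fun hx => ⟨hx, hBsub hx, fun h => haB (h ▸ hx)⟩⟩
  refine ⟨by rw [restrict_pair_eq, h1, h2], ?_⟩
  apply Set.eq_empty_iff_forall_notMem.mpr
  rintro x ⟨⟨hxA, -⟩, hxB⟩
  have : x ∈ A ∩ B := ⟨hxA, hxB⟩
  rw [hdisj] at this
  exact this

lemma fiber_case_trivial {α : Type*} {X : Set α} {a : α} (ha : a ∈ X)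
    {A B : Set α} (hAne : A.Nonempty) (hBne : B.Nonempty)
    (hAsub : A ⊆ X) (hBsub : B ⊆ X) (hdisj : A ∩ B = ∅) (hUnion : A ∪ B = X)
    (haA : a ∈ A) (hres : restrictPart {A, B} (X \ {a}) = {X \ {a}}) :
    ({A, B} : Set (Set α)) = {{a}, X \ {a}} := by
  obtain ⟨heq, hd2⟩ := fiber_pair_case ha hAne hBne hAsub hBsub hdisj hUnion haA
  rw [hres] at heq
  by_cases hAa : A = {a}
  · subst hAa
    have hB : B = X \ {a} := by
      ext x
      simp only [Set.mem_diff, Set.mem_singleton_iff]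
      constructor
      · intro hx
        refine ⟨hBsub hx, ?_⟩
        rintro rfl
        have : x ∈ ({x} : Set α) ∩ B := ⟨rfl, hx⟩
        rw [hdisj] at this; exact this
      · rintro ⟨hxX, hxa⟩
        have : x ∈ ({a} : Set α) ∪ B := hUnion ▸ hxX
        rcases this with h | h
        · exact absurd h hxa
        · exact h
    rw [hB]
  · exfalso
    have hAane : (A \ {a}).Nonempty := by
      rcases Set.sdiff_nonempty.mpr (fun h => hAa (Set.Subset.antisymm h (by simpa using haA)))
        with ⟨x, hx⟩
      exact ⟨x, hx⟩
    rw [pair_diff_empty hAane hBne] at heq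
    have h1 : A \ {a} = X \ {a} := by
      have : A \ {a} ∈ ({X \ {a}} : Set (Set α)) := by rw [heq]; simp
      simpa using this
    have h2 : B = X \ {a} := by
      have : B ∈ ({X \ {a}} : Set (Set α)) := by rw [heq]; simp
      simpa using this
    obtain ⟨x, hx⟩ := hAane
    have : x ∈ A \ {a} ∩ B := ⟨hx, h2 ▸ (h1 ▸ hx)⟩
    rw [hd2] at this
    exact this

lemma fiber_case_pair {α : Type*} {X : Set α} {a : α} (ha : a ∈ X)
    {A B U V : Set α} (hAne : A.Nonempty) (hBne : B.Nonempty)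
    (hAsub : A ⊆ X) (hBsub : B ⊆ X) (hdisj : A ∩ B = ∅) (hUnion : A ∪ B = X)
    (haA : a ∈ A) (hUne : U.Nonempty) (hVne : V.Nonempty) (hUV : U ∩ V = ∅)
    (hres : restrictPart {A, B} (X \ {a}) = {U, V}) :
    ({A, B} : Set (Set α)) = {U ∪ {a}, V} ∨ ({A, B} : Set (Set α)) = {U, V ∪ {a}} := by
  obtain ⟨heq, hd2⟩ := fiber_pair_case ha hAne hBne hAsub hBsub hdisj hUnion haA
  rw [hres] at heq
  by_cases hAa : A = {a}
  · exfalso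
    have hAe : A \ {a} = ∅ := by rw [hAa]; simp
    rw [hAe] at heq
    have hBin : ({(∅ : Set α), B} : Set (Set α)) \ {∅} = {B} := by
      ext W
      simp only [Set.mem_diff, Set.mem_insert_iff, Set.mem_singleton_iff]
      constructor
      · tauto
      · rintro rfl; exact ⟨Or.inr rfl, hBne.ne_empty⟩
    rw [hBin] at heq
    have hU : U = B := by
      have : U ∈ ({B} : Set (Set α)) := by rw [← heq]; simp
      simpa using this
    have hV : V = B := by
      have : V ∈ ({B} : Set (Set α)) := by rw [← heq]; simp
      simpa using this
    obtain ⟨x, hx⟩ := hUne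
    have : x ∈ U ∩ V := ⟨hx, hV ▸ (hU ▸ hx)⟩
    rw [hUV] at this
    exact this
  · have hAane : (A \ {a}).Nonempty :=
      Set.sdiff_nonempty.mpr (fun h => hAa (Set.Subset.antisymm h (by simpa using haA)))
    rw [pair_diff_empty hAane hBne] at heq
    have hA' : A = (A \ {a}) ∪ {a} := by
      rw [Set.union_singleton, Set.insert_diff_singleton, Set.insert_eq_of_mem haA]
    rcases pair_eq_pair_cases heq.symm hAane hd2 with ⟨h1, h2⟩ | ⟨h1, h2⟩
    · left
      rw [← h1, ← h2, ← hA']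
    · right
      rw [← h1, ← h2, ← hA', Set.pair_comm]

theorem stmt7 {d k : ℕ} (X : Set (Euc d)) (hX : X.Finite) (hk : X.ncard = k)
    (hk2 : 2 ≤ k) (hgp : GenPos X) (a : Euc d) (ha : a ∈ X) :
    (fun P => restrictPart P (X \ {a})) '' HSet X = HSet (X \ {a}) ∧
    ∀ R ∈ HSet (X \ {a}),
      {P ∈ HSet X | restrictPart P (X \ {a}) = R}.ncard ≤ 2 := by
  have hXa_sub : X \ {a} ⊆ X := Set.diff_subset
  have hXa_fin : (X \ {a}).Finite := hX.subset hXa_sub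
  have hXa_ne : (X \ {a}).Nonempty := by
    have h1 : (X \ {a}).ncard = k - 1 := by
      rw [Set.ncard_diff_singleton_of_mem ha, hk]
    have : (X \ {a}).ncard ≠ 0 := by omega
    exact Set.nonempty_of_ncard_ne_zero this
  have hXXa : X ∩ (X \ {a}) = X \ {a} := Set.inter_eq_self_of_subset_right hXa_sub
  -- restriction of the trivial partition
  have htriv : restrictPart {X} (X \ {a}) = {X \ {a}} := by
    rw [restrict_single_eq, hXXa, single_diff_empty hXa_ne]
  constructor
  · -- image equality
    ext R
    constructor
    · rintro ⟨P, hP, rfl⟩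
      rcases hP with rfl | ⟨v, c, hv, hvc, hne1, hne2, rfl⟩
      · show restrictPart {X} (X \ {a}) ∈ HSet (X \ {a})
        rw [htriv]
        exact Or.inl rfl
      · show restrictPart _ (X \ {a}) ∈ HSet (X \ {a})
        rw [restrict_pair_eq]
        have e1 : X ∩ {x | ⟪v, x⟫ < c} ∩ (X \ {a}) = (X \ {a}) ∩ {x | ⟪v, x⟫ < c} := by
          ext x
          simp only [Set.mem_inter_iff, Set.mem_diff, Set.mem_setOf_eq, Set.mem_singleton_iff]
          tauto
        have e2 : X ∩ {x | c < ⟪v, x⟫} ∩ (X \ {a}) = (X \ {a}) ∩ {x | c < ⟪v, x⟫} := by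
          ext x
          simp only [Set.mem_inter_iff, Set.mem_diff, Set.mem_setOf_eq, Set.mem_singleton_iff]
          tauto
        rw [e1, e2]
        set A := (X \ {a}) ∩ {x | ⟪v, x⟫ < c} with hA
        set B := (X \ {a}) ∩ {x | c < ⟪v, x⟫} with hB
        have hcover : ∀ x ∈ X \ {a}, x ∈ A ∨ x ∈ B := by
          intro x hx
          rcases lt_or_gt_of_ne (hvc x (hXa_sub hx)) with h | h
          · exact Or.inl ⟨hx, h⟩
          · exact Or.inr ⟨hx, h⟩
        rcases Set.eq_empty_or_nonempty A with hAe | hAne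
        · -- A empty : B = X \ {a}
          have hBeq : B = X \ {a} := by
            apply Set.Subset.antisymm (Set.inter_subset_left)
            intro x hx
            rcases hcover x hx with h | h
            · rw [hAe] at h; exact absurd h (Set.notMem_empty x)
            · exact h
          rw [hAe, hBeq]
          left
          ext W
          simp only [Set.mem_diff, Set.mem_insert_iff, Set.mem_singleton_iff]
          constructor
          · rintro ⟨rfl | rfl, h⟩
            · exact absurd rfl h
            · rfl
          · rintro rfl; exact ⟨Or.inr rfl, hXa_ne.ne_empty⟩
        · rcases Set.eq_empty_or_nonempty B with hBe | hBne
          · have hAeq : A = X \ {a} := by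
              apply Set.Subset.antisymm (Set.inter_subset_left)
              intro x hx
              rcases hcover x hx with h | h
              · exact h
              · rw [hBe] at h; exact absurd h (Set.notMem_empty x)
            rw [hBe, hAeq]
            left
            ext W
            simp only [Set.mem_diff, Set.mem_insert_iff, Set.mem_singleton_iff]
            constructor
            · rintro ⟨rfl | rfl, h⟩
              · rfl
              · exact absurd rfl h
            · rintro rfl; exact ⟨Or.inl rfl, hXa_ne.ne_empty⟩
          · rw [pair_diff_empty hAne hBne]
            right
            exact ⟨v, c, hv, fun x hx => hvc x (hXa_sub hx), hAne, hBne, rfl⟩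
    · intro hR
      rcases hR with rfl | ⟨v, c, hv, hvc, hne1, hne2, rfl⟩
      · exact ⟨{X}, Or.inl rfl, htriv⟩
      · -- find c' avoiding all of X with same sides on X \ {a}
        obtain ⟨c', hc'X, hlt, hgt⟩ :
            ∃ c' : ℝ, (∀ x ∈ X, ⟪v, x⟫ ≠ c') ∧
              ((X \ {a}) ∩ {x | ⟪v, x⟫ < c'} = (X \ {a}) ∩ {x | ⟪v, x⟫ < c}) ∧
              ((X \ {a}) ∩ {x | c' < ⟪v, x⟫} = (X \ {a}) ∩ {x | c < ⟪v, x⟫}) := by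
          by_cases hac : ⟪v, a⟫ = c
          · -- perturb
            set S := (X \ {a}) ∩ {x | c < ⟪v, x⟫} with hS
            obtain ⟨x₀, hx₀S, hx₀min⟩ := Set.exists_min_image S (fun x => ⟪v, x⟫)
              (hXa_fin.inter_of_left _) hne2
            have hmin : ∀ b ∈ S, ⟪v, x₀⟫ ≤ ⟪v, b⟫ := fun b hb => hx₀min b hb
            have hcm : c < ⟪v, x₀⟫ := hx₀S.2
            refine ⟨(c + ⟪v, x₀⟫) / 2, ?_, ?_, ?_⟩
            · intro x hx
              by_cases hxa : x = a
              · subst hxa; rw [hac]; intro h'; linarith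
              · have hx' : x ∈ X \ {a} := ⟨hx, hxa⟩
                rcases lt_or_gt_of_ne (hvc x hx') with h | h
                · intro h'; linarith
                · have h2 := hmin x ⟨hx', h⟩
                  intro h'; linarith
            · ext x
              simp only [Set.mem_inter_iff, Set.mem_setOf_eq]
              constructor
              · rintro ⟨hx, hlt'⟩
                refine ⟨hx, ?_⟩
                rcases lt_or_gt_of_ne (hvc x hx) with h | h
                · exact h
                · have h2 := hmin x ⟨hx, h⟩
                  linarith
              · rintro ⟨hx, hlt'⟩
                exact ⟨hx, by linarith⟩
            · ext x
              simp only [Set.mem_inter_iff, Set.mem_setOf_eq]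
              constructor
              · rintro ⟨hx, hgt'⟩
                exact ⟨hx, show c < ⟪v, x⟫ by linarith⟩
              · rintro ⟨hx, hgt'⟩
                have h2 := hmin x ⟨hx, hgt'⟩
                exact ⟨hx, show (c + ⟪v, x₀⟫) / 2 < ⟪v, x⟫ by linarith⟩
          · refine ⟨c, ?_, rfl, rfl⟩
            intro x hx
            by_cases hxa : x = a
            · subst hxa; exact hac
            · exact hvc x ⟨hx, hxa⟩
        refine ⟨{X ∩ {x | ⟪v, x⟫ < c'}, X ∩ {x | c' < ⟪v, x⟫}}, ?_, ?_⟩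
        · refine Or.inr ⟨v, c', hv, hc'X, ?_, ?_, rfl⟩
          · obtain ⟨x, hx⟩ := hne1
            have : x ∈ (X \ {a}) ∩ {x | ⟪v, x⟫ < c'} := by rw [hlt]; exact hx
            exact ⟨x, hXa_sub this.1, this.2⟩
          · obtain ⟨x, hx⟩ := hne2
            have : x ∈ (X \ {a}) ∩ {x | c' < ⟪v, x⟫} := by rw [hgt]; exact hx
            exact ⟨x, hXa_sub this.1, this.2⟩
        · simp only
          rw [restrict_pair_eq]
          have e1 : X ∩ {x | ⟪v, x⟫ < c'} ∩ (X \ {a}) = (X \ {a}) ∩ {x | ⟪v, x⟫ < c'} := by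
            ext x
            simp only [Set.mem_inter_iff, Set.mem_diff, Set.mem_setOf_eq, Set.mem_singleton_iff]
            tauto
          have e2 : X ∩ {x | c' < ⟪v, x⟫} ∩ (X \ {a}) = (X \ {a}) ∩ {x | c' < ⟪v, x⟫} := by
            ext x
            simp only [Set.mem_inter_iff, Set.mem_diff, Set.mem_setOf_eq, Set.mem_singleton_iff]
            tauto
          rw [e1, e2, hlt, hgt, pair_diff_empty hne1 hne2]
  · -- fibers have at most two elements
    intro R hR
    -- produce a two-element superset of the fiber
    suffices h : ∃ P₁ P₂ : Set (Set (Euc d)),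
        {P ∈ HSet X | restrictPart P (X \ {a}) = R} ⊆ {P₁, P₂} by
      obtain ⟨P₁, P₂, hsub⟩ := h
      calc {P ∈ HSet X | restrictPart P (X \ {a}) = R}.ncard
          ≤ ({P₁, P₂} : Set (Set (Set (Euc d)))).ncard :=
            Set.ncard_le_ncard hsub ((Set.finite_singleton P₂).insert P₁)
        _ ≤ 2 := by
            refine (Set.ncard_insert_le _ _).trans ?_
            simp
    rcases hR with rfl | ⟨v, c, hv, hvc, hne1, hne2, rfl⟩
    · -- R = {X \ {a}}
      refine ⟨{X}, {{a}, X \ {a}}, ?_⟩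
      rintro P ⟨hP, hres⟩
      rcases hP with rfl | ⟨v, c, hv, hvc, hne1, hne2, rfl⟩
      · exact Or.inl rfl
      · right
        set A := X ∩ {x | ⟪v, x⟫ < c} with hA
        set B := X ∩ {x | c < ⟪v, x⟫} with hB
        have hdisj : A ∩ B = ∅ := by
          ext x
          simp only [hA, hB, Set.mem_inter_iff, Set.mem_setOf_eq]
          constructor
          · rintro ⟨⟨_, h1⟩, _, h2⟩; linarith
          · intro h; exact absurd h (Set.notMem_empty x)
        have hUnion : A ∪ B = X := by
          apply Set.Subset.antisymm (Set.union_subset Set.inter_subset_left Set.inter_subset_left)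
          intro x hx
          rcases lt_or_gt_of_ne (hvc x hx) with h | h
          · exact Or.inl ⟨hx, h⟩
          · exact Or.inr ⟨hx, h⟩
        have haAB : a ∈ A ∪ B := hUnion ▸ ha
        rcases haAB with haA | haB
        · exact fiber_case_trivial ha hne1 hne2 Set.inter_subset_left Set.inter_subset_left
            hdisj hUnion haA hres
        · have hdisj' : B ∩ A = ∅ := by rw [Set.inter_comm]; exact hdisj
          have hUnion' : B ∪ A = X := by rw [Set.union_comm]; exact hUnion
          have hres' : restrictPart {B, A} (X \ {a}) = {X \ {a}} := by
            rw [Set.pair_comm B A]; exact hres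
          exact (Set.pair_comm A B).trans (fiber_case_trivial ha hne2 hne1
            Set.inter_subset_left Set.inter_subset_left hdisj' hUnion' haB hres')
    · -- R = {U, V}
      set U := (X \ {a}) ∩ {x | ⟪v, x⟫ < c} with hU
      set V := (X \ {a}) ∩ {x | c < ⟪v, x⟫} with hV
      have hUV : U ∩ V = ∅ := by
        ext x
        simp only [hU, hV, Set.mem_inter_iff, Set.mem_setOf_eq]
        constructor
        · rintro ⟨⟨_, h1⟩, _, h2⟩; linarith
        · intro h; exact absurd h (Set.notMem_empty x)
      refine ⟨{U ∪ {a}, V}, {U, V ∪ {a}}, ?_⟩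
      rintro P ⟨hP, hres⟩
      rcases hP with rfl | ⟨v', c', hv', hvc', hne1', hne2', rfl⟩
      · exfalso
        rw [htriv] at hres
        have h1 : U = X \ {a} := by
          have : U ∈ ({X \ {a}} : Set (Set (Euc d))) := by rw [hres]; simp
          simpa using this
        have h2 : V = X \ {a} := by
          have : V ∈ ({X \ {a}} : Set (Set (Euc d))) := by rw [hres]; simp
          simpa using this
        obtain ⟨x, hx⟩ := hne1
        have : x ∈ U ∩ V := ⟨hx, h2 ▸ (h1 ▸ hx)⟩
        rw [hUV] at this
        exact this
      · set A := X ∩ {x | ⟪v', x⟫ < c'} with hA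
        set B := X ∩ {x | c' < ⟪v', x⟫} with hB
        have hdisj : A ∩ B = ∅ := by
          ext x
          simp only [hA, hB, Set.mem_inter_iff, Set.mem_setOf_eq]
          constructor
          · rintro ⟨⟨_, h1⟩, _, h2⟩; linarith
          · intro h; exact absurd h (Set.notMem_empty x)
        have hUnion : A ∪ B = X := by
          apply Set.Subset.antisymm (Set.union_subset Set.inter_subset_left Set.inter_subset_left)
          intro x hx
          rcases lt_or_gt_of_ne (hvc' x hx) with h | h
          · exact Or.inl ⟨hx, h⟩
          · exact Or.inr ⟨hx, h⟩
        have haAB : a ∈ A ∪ B := hUnion ▸ ha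
        rcases haAB with haA | haB
        · rcases fiber_case_pair ha hne1' hne2' Set.inter_subset_left Set.inter_subset_left
            hdisj hUnion haA hne1 hne2 hUV hres with h | h
          · exact Or.inl h
          · exact Or.inr h
        · have hdisj' : B ∩ A = ∅ := by rw [Set.inter_comm]; exact hdisj
          have hUnion' : B ∪ A = X := by rw [Set.union_comm]; exact hUnion
          have hres' : restrictPart {B, A} (X \ {a}) = {U, V} := by
            rw [Set.pair_comm B A]; exact hres
          rcases fiber_case_pair ha hne2' hne1' Set.inter_subset_left Set.inter_subset_left
            hdisj' hUnion' haB hne1 hne2 hUV hres' with h | h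
          · exact Or.inl ((Set.pair_comm A B).trans h)
          · exact Or.inr ((Set.pair_comm A B).trans h)
end
end

section
/- Let X be a finite two-colored subset of R^d and p ∈ X. If every subset S ⊆ X with p ∈ S and |S| ≤ d+2 can be separated along the colors by a hyperplane, then all of X can be separated along the colors by a hyperplane. -/
open scoped RealInnerProductSpace

noncomputable section

def SepAlongColors {d : ℕ} (red : Euc d → Prop) (S : Set (Euc d)) : Prop :=
  ∃ (v : Euc d) (c : ℝ), v ≠ 0 ∧
    (∀ x ∈ S, red x → c < ⟪v, x⟫) ∧ (∀ x ∈ S, ¬ red x → ⟪v, x⟫ < c)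

theorem stmt12 {d : ℕ} (hd : 1 ≤ d) (X : Set (Euc d)) (hX : X.Finite)
    (red : Euc d → Prop) (p : Euc d) (hp : p ∈ X)
    (h : ∀ S ⊆ X, p ∈ S → S.ncard ≤ d + 2 → SepAlongColors red S) :
    SepAlongColors red X := by
  classical
  by_cases hr : ∃ r ∈ X, red r
  · by_cases hb : ∃ b ∈ X, ¬ red b
    · -- both colors present: Helly argument
      obtain ⟨r, hrX, hrr⟩ := hr
      obtain ⟨b, hbX, hbb⟩ := hb
      set ε : ℝ := if red p then 1 else -1 with hε
      set K : Euc d → Set (Euc d) := fun x =>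
        if red x then {w | -ε < ⟪w, x - p⟫} else {w | ⟪w, x - p⟫ < -ε} with hK
      have hlin : ∀ x : Euc d, IsLinearMap ℝ (fun w : Euc d => ⟪w, x - p⟫) :=
        fun x => ⟨fun a b => inner_add_left _ _ _, fun t a => real_inner_smul_left _ _ _⟩
      have hconv : ∀ x : Euc d, Convex ℝ (K x) := by
        intro x
        rw [hK]
        by_cases hx : red x
        · simpa [hx] using convex_halfSpace_gt (hlin x) (-ε)
        · simpa [hx] using convex_halfSpace_lt (hlin x) (-ε)
      have hinter : ∀ I ⊆ hX.toFinset, I.card ≤ Module.finrank ℝ (Euc d) + 1 →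
          (⋂ i ∈ I, K i).Nonempty := by
        intro I hI hIcard
        rw [finrank_euclideanSpace_fin] at hIcard
        have hIX : (↑I : Set (Euc d)) ⊆ X := by
          intro x hx
          rw [← hX.coe_toFinset]
          exact hI hx
        have hSsub : insert p (↑I : Set (Euc d)) ⊆ X := Set.insert_subset hp hIX
        have hScard : (insert p (↑I : Set (Euc d))).ncard ≤ d + 2 := by
          have h1 := Set.ncard_insert_le p (↑I : Set (Euc d))
          rw [Set.ncard_coe_finset] at h1
          omega
        obtain ⟨v, c, hv0, hred, hblue⟩ := h _ hSsub (Set.mem_insert _ _) hScard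
        set t : ℝ := ε * (⟪v, p⟫ - c) with htdef
        have ht : 0 < t := by
          by_cases hrp : red p
          · have := hred p (Set.mem_insert _ _) hrp
            simp only [htdef, hε, hrp, if_pos]
            nlinarith
          · have := hblue p (Set.mem_insert _ _) hrp
            simp only [htdef, hε, hrp, if_neg, not_false_iff]
            nlinarith
        have hpc : ⟪v, p⟫ - c = ε * t := by
          by_cases hrp : red p <;> simp only [htdef, hε, hrp, if_pos, if_neg, not_false_iff] <;> ring
        refine ⟨t⁻¹ • v, ?_⟩
        rw [Set.mem_iInter₂]
        intro x hxI
        have hxS : x ∈ insert p (↑I : Set (Euc d)) := Set.mem_insert_of_mem _ hxI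
        have hcomp : ⟪t⁻¹ • v, x - p⟫ = t⁻¹ * (⟪v, x⟫ - c) - ε := by
          rw [real_inner_smul_left, inner_sub_right]
          have h2 : ⟪v, x⟫ - ⟪v, p⟫ = (⟪v, x⟫ - c) - ε * t := by
            rw [← hpc]; ring
          rw [h2, mul_sub, mul_comm ε t, ← mul_assoc, inv_mul_cancel₀ ht.ne', one_mul]
        by_cases hrx : red x
        · have hx := hred x hxS hrx
          have hpos : 0 < t⁻¹ * (⟪v, x⟫ - c) := mul_pos (inv_pos.mpr ht) (by linarith)
          simp only [hK, hrx, if_pos, Set.mem_setOf_eq]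
          rw [hcomp]; linarith
        · have hx := hblue x hxS hrx
          have hneg : t⁻¹ * (⟪v, x⟫ - c) < 0 :=
            mul_neg_of_pos_of_neg (inv_pos.mpr ht) (by linarith)
          simp only [hK, hrx, if_neg, not_false_iff, Set.mem_setOf_eq]
          rw [hcomp]; linarith
      obtain ⟨w, hw⟩ := Convex.helly_theorem' (F := K) (s := hX.toFinset)
        (fun i _ => hconv i) hinter
      rw [Set.mem_iInter₂] at hw
      have hwX : ∀ x ∈ X, w ∈ K x := by
        intro x hx
        exact hw x (hX.mem_toFinset.mpr hx)
      have hwr := hwX r hrX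
      have hwb := hwX b hbX
      simp only [hK, hrr, if_pos, Set.mem_setOf_eq] at hwr
      simp only [hK, hbb, if_neg, not_false_iff, Set.mem_setOf_eq] at hwb
      have hw0 : w ≠ 0 := by
        intro h0
        rw [h0] at hwr hwb
        simp only [inner_zero_left] at hwr hwb
        linarith
      refine ⟨w, ⟪w, p⟫ - ε, hw0, ?_, ?_⟩
      · intro x hx hrx
        have := hwX x hx
        simp only [hK, hrx, if_pos, Set.mem_setOf_eq, inner_sub_right] at this
        linarith
      · intro x hx hrx
        have := hwX x hx
        simp only [hK, hrx, if_neg, not_false_iff, Set.mem_setOf_eq, inner_sub_right] at this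
        linarith
    · -- all points red
      push_neg at hb
      set v : Euc d := EuclideanSpace.single ⟨0, hd⟩ (1 : ℝ) with hv
      have hv0 : v ≠ 0 := by
        intro h0
        have := congrArg (fun f : Euc d => f ⟨0, hd⟩) h0
        simp [hv] at this
      have hbdd : BddBelow ((fun x => ⟪v, x⟫) '' X) := (hX.image _).bddBelow
      refine ⟨v, sInf ((fun x => ⟪v, x⟫) '' X) - 1, hv0, ?_, ?_⟩
      · intro x hx _
        have := csInf_le hbdd ⟨x, hx, rfl⟩
        linarith
      · intro x hx hrx
        exact absurd (hb x hx) hrx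
  · -- all points blue
    push_neg at hr
    set v : Euc d := EuclideanSpace.single ⟨0, hd⟩ (1 : ℝ) with hv
    have hv0 : v ≠ 0 := by
      intro h0
      have := congrArg (fun f : Euc d => f ⟨0, hd⟩) h0
      simp [hv] at this
    have hbdd : BddAbove ((fun x => ⟪v, x⟫) '' X) := (hX.image _).bddAbove
    refine ⟨v, sSup ((fun x => ⟪v, x⟫) '' X) + 1, hv0, ?_, ?_⟩
    · intro x hx hrx
      exact absurd hrx (hr x hx)
    · intro x hx _
      have := le_csSup hbdd ⟨x, hx, rfl⟩
      linarith
end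
end

section
/- Kirchberger's theorem: Let X be a finite subset of R^d with each point colored red or blue. If every subset S ⊆ X with |S| ≤ d+2 can be separated along the colors by a hyperplane, then X can be separated along the colors by a hyperplane. -/
open scoped RealInnerProductSpace

noncomputable section

open Finset in
lemma kirch_core {d : ℕ} (X R B : Set (Euc d)) (hR : R ⊆ X) (hB : B ⊆ X)
    (p : Euc d) (hpR : p ∈ convexHull ℝ R) (hpB : p ∈ convexHull ℝ B) :
    ∃ S ⊆ X, S.ncard ≤ d + 2 ∧ ∃ q : Euc d,
      q ∈ convexHull ℝ (S ∩ R) ∧ q ∈ convexHull ℝ (S ∩ B) := by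
  classical
  set f1 : Euc d → Euc d × ℝ := fun x => (x, (1:ℝ)) with hf1
  set f2 : Euc d → Euc d × ℝ := fun x => (-x, (-1:ℝ)) with hf2
  set Y : Set (Euc d × ℝ) := f1 '' R ∪ f2 '' B with hY
  have hA1 : ∀ (T : Set (Euc d)) (x : Euc d), x ∈ convexHull ℝ T → f1 x ∈ convexHull ℝ (f1 '' T) := by
    intro T x hx
    let A : Euc d →ᵃ[ℝ] Euc d × ℝ := AffineMap.mk' f1 (LinearMap.inl ℝ (Euc d) ℝ) 0
      (by intro p'; simp [f1, Prod.ext_iff])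
    have := AffineMap.image_convexHull A T ▸ Set.mem_image_of_mem A hx
    simpa [A] using this
  have hA2 : ∀ (T : Set (Euc d)) (x : Euc d), x ∈ convexHull ℝ T → f2 x ∈ convexHull ℝ (f2 '' T) := by
    intro T x hx
    let A : Euc d →ᵃ[ℝ] Euc d × ℝ := AffineMap.mk' f2 (-(LinearMap.inl ℝ (Euc d) ℝ)) 0
      (by intro p'; simp [f2, Prod.ext_iff])
    have := AffineMap.image_convexHull A T ▸ Set.mem_image_of_mem A hx
    simpa [A] using this
  have h0 : (0 : Euc d × ℝ) ∈ convexHull ℝ Y := by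
    have h1 : f1 p ∈ convexHull ℝ Y :=
      convexHull_mono Set.subset_union_left (hA1 R p hpR)
    have h2 : f2 p ∈ convexHull ℝ Y :=
      convexHull_mono Set.subset_union_right (hA2 B p hpB)
    have key : (1/2:ℝ) • (f1 p) + (1/2:ℝ) • (f2 p) = (0 : Euc d × ℝ) := by
      simp [f1, f2, Prod.ext_iff, smul_smul]
    have := (convex_convexHull ℝ Y) h1 h2 (by norm_num : (0:ℝ) ≤ 1/2)
      (by norm_num : (0:ℝ) ≤ 1/2) (by norm_num)
    rwa [key] at this
  obtain ⟨ι, hfin, z, w, hzY, hai, hwpos, hw1, hsum⟩ :=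
    eq_pos_convex_span_of_mem_convexHull h0
  have hcard : Fintype.card ι ≤ d + 2 := by
    have h1 := hai.card_le_finrank_succ
    have h2 : Module.finrank ℝ (vectorSpan ℝ (Set.range z)) ≤ Module.finrank ℝ (Euc d × ℝ) :=
      Submodule.finrank_le _
    have h3 : Module.finrank ℝ (Euc d × ℝ) = d + 1 := by
      simp [Module.finrank_prod, finrank_euclideanSpace_fin]
    rw [h3] at h2
    omega
  have hclass : ∀ i, ((z i).2 = 1 ∧ (z i).1 ∈ R) ∨ ((z i).2 = -1 ∧ -(z i).1 ∈ B) := by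
    intro i
    have : z i ∈ Y := hzY (Set.mem_range_self i)
    rcases this with ⟨r, hr, he⟩ | ⟨b, hb, he⟩
    · left; constructor
      · rw [← he]
      · rw [← he]; exact hr
    · right; constructor
      · rw [← he]
      · rw [← he]; simpa [f2] using hb
  set g : Euc d × ℝ → Euc d := fun e => if 0 < e.2 then e.1 else -e.1 with hg
  set S : Set (Euc d) := g '' Set.range z with hS
  have hSX : S ⊆ X := by
    rintro _ ⟨e, ⟨i, rfl⟩, rfl⟩
    rcases hclass i with ⟨h2, h1⟩ | ⟨h2, h1⟩
    · have : g (z i) = (z i).1 := by simp [hg, h2]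
      rw [this]; exact hR h1
    · have : g (z i) = -(z i).1 := by norm_num [hg, h2]
      rw [this]; exact hB h1
  have hScard : S.ncard ≤ d + 2 := by
    have h1 : S.ncard ≤ (Set.range z).ncard := Set.ncard_image_le (Set.finite_range z)
    have h2 : (Set.range z).ncard ≤ Fintype.card ι := by
      rw [← Set.image_univ, ← Finset.coe_univ, ← Finset.coe_image, Set.ncard_coe_finset]
      exact (Finset.card_image_le).trans (by simp)
    omega
  set IR : Finset ι := Finset.univ.filter (fun i => (z i).2 = 1) with hIR
  set IB : Finset ι := Finset.univ.filter (fun i => ¬ (z i).2 = 1) with hIB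
  have hIRmem : ∀ i ∈ IR, (z i).2 = 1 ∧ (z i).1 ∈ R := by
    intro i hi
    rcases hclass i with h | h
    · exact h
    · exfalso
      have : (z i).2 = 1 := (Finset.mem_filter.mp hi).2
      rw [h.1] at this; norm_num at this
  have hIBmem : ∀ i ∈ IB, (z i).2 = -1 ∧ -(z i).1 ∈ B := by
    intro i hi
    rcases hclass i with h | h
    · exact absurd h.1 (Finset.mem_filter.mp hi).2
    · exact h
  have hsnd : ∑ i, w i * (z i).2 = 0 := by
    have := congrArg Prod.snd hsum
    simpa [Prod.snd_sum, smul_eq_mul] using this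
  have hfst : ∑ i, w i • (z i).1 = (0 : Euc d) := by
    have := congrArg Prod.fst hsum
    simpa [Prod.fst_sum] using this
  have hsplitw := Finset.sum_filter_add_sum_filter_not Finset.univ
      (fun i => (z i).2 = 1) (fun i => w i)
  have hsplits := Finset.sum_filter_add_sum_filter_not Finset.univ
      (fun i => (z i).2 = 1) (fun i => w i * (z i).2)
  have hsplitv := Finset.sum_filter_add_sum_filter_not Finset.univ
      (fun i => (z i).2 = 1) (fun i => w i • (z i).1)
  rw [hw1] at hsplitw
  rw [hsnd] at hsplits
  rw [hfst] at hsplitv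
  rw [← hIR, ← hIB] at hsplitw hsplits hsplitv
  have e1 : ∑ i ∈ IR, (w i * (z i).2) = ∑ i ∈ IR, w i :=
    Finset.sum_congr rfl fun i hi => by rw [(hIRmem i hi).1, mul_one]
  have e2 : ∑ i ∈ IB, (w i * (z i).2) = -∑ i ∈ IB, w i := by
    rw [← Finset.sum_neg_distrib]
    exact Finset.sum_congr rfl fun i hi => by rw [(hIBmem i hi).1]; ring
  rw [e1, e2] at hsplits
  have hRhalf : ∑ i ∈ IR, w i = 1/2 := by linarith
  have hBhalf : ∑ i ∈ IB, w i = 1/2 := by linarith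
  have hvIRB : ∑ i ∈ IR, w i • (z i).1 = ∑ i ∈ IB, w i • (-(z i).1) := by
    have h4 : ∑ i ∈ IB, w i • (-(z i).1) = -∑ i ∈ IB, w i • (z i).1 := by simp
    rw [h4]
    exact eq_neg_of_add_eq_zero_left hsplitv
  refine ⟨S, hSX, hScard, IR.centerMass w (fun i => (z i).1), ?_, ?_⟩
  · refine Finset.centerMass_mem_convexHull IR (fun i _ => (hwpos i).le)
      (by rw [hRhalf]; norm_num) (fun i hi => ?_)
    refine ⟨?_, (hIRmem i hi).2⟩
    exact ⟨z i, Set.mem_range_self i, by simp [hg, (hIRmem i hi).1]⟩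
  · have hqe : IR.centerMass w (fun i => (z i).1) = IB.centerMass w (fun i => -(z i).1) := by
      rw [Finset.centerMass, Finset.centerMass, hRhalf, hBhalf, hvIRB]
    rw [hqe]
    refine Finset.centerMass_mem_convexHull IB (fun i _ => (hwpos i).le)
      (by rw [hBhalf]; norm_num) (fun i hi => ?_)
    refine ⟨?_, (hIBmem i hi).2⟩
    exact ⟨z i, Set.mem_range_self i, by norm_num [hg, (hIBmem i hi).1]⟩

theorem stmt13 {d : ℕ} (hd : 1 ≤ d) (X : Set (Euc d)) (hX : X.Finite)
    (red : Euc d → Prop)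
    (h : ∀ S ⊆ X, S.ncard ≤ d + 2 → SepAlongColors red S) :
    SepAlongColors red X := by
  classical
  set R : Set (Euc d) := {x ∈ X | red x} with hRdef
  set B : Set (Euc d) := {x ∈ X | ¬ red x} with hBdef
  have hRX : R ⊆ X := fun x hx => hx.1
  have hBX : B ⊆ X := fun x hx => hx.1
  -- disjointness of convex hulls
  have hdisj : Disjoint (convexHull ℝ R) (convexHull ℝ B) := by
    rw [Set.disjoint_left]
    intro p hpR hpB
    obtain ⟨S, hSX, hScard, q, hq1, hq2⟩ := kirch_core X R B hRX hBX p hpR hpB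
    obtain ⟨v, c, hv, hred, hblue⟩ := h S hSX hScard
    have hR' : convexHull ℝ (S ∩ R) ⊆ {x | c < ⟪v, x⟫} := by
      apply convexHull_min _ (convex_halfSpace_gt ⟨fun a b => inner_add_right v a b, fun r a => real_inner_smul_right v a r⟩ c)
      rintro x ⟨hxS, hxR⟩
      exact hred x hxS hxR.2
    have hB' : convexHull ℝ (S ∩ B) ⊆ {x | ⟪v, x⟫ < c} := by
      apply convexHull_min _ (convex_halfSpace_lt ⟨fun a b => inner_add_right v a b, fun r a => real_inner_smul_right v a r⟩ c)
      rintro x ⟨hxS, hxB⟩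
      exact hblue x hxS hxB.2
    have h1 := hR' hq1
    have h2 := hB' hq2
    simp only [Set.mem_setOf_eq] at h1 h2
    linarith
  -- cases on emptiness
  rcases Set.eq_empty_or_nonempty R with hRe | hRne
  · -- all points blue
    set v : Euc d := EuclideanSpace.single (⟨0, hd⟩ : Fin d) (1:ℝ) with hv
    have hvne : v ≠ 0 := by
      intro hv0
      have := congrFun (congrArg (fun f : EuclideanSpace ℝ (Fin d) => (f : Fin d → ℝ)) hv0) ⟨0, hd⟩
      simp [hv] at this
    obtain ⟨c0, hc0⟩ := ((hX.image (fun x => ⟪v, x⟫)).bddAbove)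
    refine ⟨v, c0 + 1, hvne, ?_, ?_⟩
    · intro x hx hxr
      exact (Set.nonempty_iff_ne_empty.mp (⟨x, hx, hxr⟩ : R.Nonempty) hRe).elim
    · intro x hx _
      have : ⟪v, x⟫ ≤ c0 := hc0 (Set.mem_image_of_mem _ hx)
      linarith
  rcases Set.eq_empty_or_nonempty B with hBe | hBne
  · set v : Euc d := EuclideanSpace.single (⟨0, hd⟩ : Fin d) (1:ℝ) with hv
    have hvne : v ≠ 0 := by
      intro hv0
      have := congrFun (congrArg (fun f : EuclideanSpace ℝ (Fin d) => (f : Fin d → ℝ)) hv0) ⟨0, hd⟩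
      simp [hv] at this
    obtain ⟨c0, hc0⟩ := ((hX.image (fun x => ⟪v, x⟫)).bddBelow)
    refine ⟨v, c0 - 1, hvne, ?_, ?_⟩
    · intro x hx _
      have : c0 ≤ ⟪v, x⟫ := hc0 (Set.mem_image_of_mem _ hx)
      linarith
    · intro x hx hxb
      exact (Set.nonempty_iff_ne_empty.mp (⟨x, hx, hxb⟩ : B.Nonempty) hBe).elim
  · -- both nonempty: Hahn-Banach
    have hRf : R.Finite := hX.subset hRX
    have hBf : B.Finite := hX.subset hBX
    obtain ⟨f, u, u', hfB, huu, hfR⟩ := geometric_hahn_banach_compact_closed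
      (convex_convexHull ℝ B) (hBf.isCompact_convexHull (𝕜 := ℝ))
      (convex_convexHull ℝ R) (hRf.isCompact_convexHull (𝕜 := ℝ)).isClosed
      (hdisj.symm)
    set v : Euc d := (InnerProductSpace.toDual ℝ (Euc d)).symm f with hv
    have hvf : ∀ x, ⟪v, x⟫ = f x := fun x => InnerProductSpace.toDual_symm_apply
    have hvne : v ≠ 0 := by
      intro hv0
      obtain ⟨r, hr⟩ := hRne
      obtain ⟨b, hb⟩ := hBne
      have h1 := hfR r (subset_convexHull ℝ R hr)
      have h2 := hfB b (subset_convexHull ℝ B hb)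
      rw [← hvf r, hv0] at h1
      rw [← hvf b, hv0] at h2
      simp at h1 h2
      linarith
    refine ⟨v, u, hvne, ?_, ?_⟩
    · intro x hx hxr
      rw [hvf]
      have := hfR x (subset_convexHull ℝ R ⟨hx, hxr⟩)
      linarith
    · intro x hx hxb
      rw [hvf]
      exact hfB x (subset_convexHull ℝ B ⟨hx, hxb⟩)
end
end

section
/- Main theorem: Let X be a finite subset of R^d with each point painted one of k colors (k ≥ 2). If every subset of X of size at most (d+1)·η_d(k) + k can be partitioned by hyperplanes along the colors, then all of X can be partitioned by hyperplanes along the colors, where η_d(k) = sum_{i=0}^{d} binomial(k-2, i). -/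
open scoped RealInnerProductSpace

noncomputable section

def PartByHyp {d k : ℕ} (color : Euc d → Fin k) (S : Set (Euc d)) : Prop :=
  ∃ F : Set (Euc d × ℝ),
    (∀ p ∈ F, p.1 ≠ 0) ∧
    (∀ p ∈ F, ∀ x ∈ S, ⟪p.1, x⟫ ≠ p.2) ∧
    (∀ x ∈ S, ∀ y ∈ S, color x ≠ color y → ∃ p ∈ F,
      (⟪p.1, x⟫ < p.2 ∧ p.2 < ⟪p.1, y⟫) ∨ (⟪p.1, y⟫ < p.2 ∧ p.2 < ⟪p.1, x⟫)) ∧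
    (∀ p ∈ F, ∀ x ∈ S, ∀ y ∈ S, color x = color y →
      ¬ ((⟪p.1, x⟫ < p.2 ∧ p.2 < ⟪p.1, y⟫) ∨ (⟪p.1, y⟫ < p.2 ∧ p.2 < ⟪p.1, x⟫)))


-- ===================== auxiliary material =====================

open Module Finset in
open Classical in
/-- The set of strict sign patterns of `m` affine functionals realizable in `C`. -/
private def Pat {d : ℕ} (m : ℕ) (C : Set (Euc d)) (a : Fin m → Euc d) (b : Fin m → ℝ) :
    Finset (Fin m → Bool) :=
  Finset.univ.filter (fun σ => ∃ u ∈ C,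
    ∀ i, (σ i = true → b i < ⟪u, a i⟫) ∧ (σ i = false → ⟪u, a i⟫ < b i))

private lemma mem_Pat' {d : ℕ} {m : ℕ} {C : Set (Euc d)} {a : Fin m → Euc d} {b : Fin m → ℝ}
    {σ : Fin m → Bool} :
    σ ∈ Pat m C a b ↔ ∃ u ∈ C,
      ∀ i, (σ i = true → b i < ⟪u, a i⟫) ∧ (σ i = false → ⟪u, a i⟫ < b i) := by
  classical
  simp [Pat]

open Finset in
private lemma pascal_sum (m e : ℕ) :
    ∑ i ∈ range (e+1), (m+1).choose i
      = ∑ i ∈ range (e+1), m.choose i + ∑ i ∈ range e, m.choose i := by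
  induction e with
  | zero => simp
  | succ e ih =>
    rw [sum_range_succ (f := fun i => (m+1).choose i) (n := e+1), ih,
      sum_range_succ (f := fun i => m.choose i) (n := e+1),
      sum_range_succ (f := fun i => m.choose i) (n := e)]
    have : (m+1).choose (e+1) = m.choose e + m.choose (e+1) := Nat.choose_succ_succ' m e
    omega

open Module Finset in
private lemma patcount {d : ℕ} : ∀ (m : ℕ) (e : ℕ) (C : Set (Euc d)), Convex ℝ C →
    ∀ (a : Fin m → Euc d) (b : Fin m → ℝ),
    finrank ℝ (vectorSpan ℝ C) ≤ e →
    (Pat m C a b).card ≤ ∑ i ∈ range (e+1), m.choose i := by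
  intro m
  induction m with
  | zero =>
    intro e C _ a b _
    have h1 : (Pat 0 C a b).card ≤ 1 := by
      refine le_trans (Finset.card_le_univ _) ?_
      simp
    refine le_trans h1 ?_
    have : (0:ℕ).choose 0 ≤ ∑ i ∈ range (e+1), (0:ℕ).choose i :=
      Finset.single_le_sum (fun i _ => Nat.zero_le _) (Finset.mem_range.mpr (Nat.succ_pos e))
    simpa using this
  | succ m ih =>
    intro e C hC a b he
    classical
    set L := Fin.last m with hL
    set π : (Fin (m+1) → Bool) → (Fin m → Bool) := fun σ => σ ∘ Fin.castSucc with hπ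
    set P := Pat (m+1) C a b with hP
    set Pt := P.filter (fun σ => σ L = true) with hPt
    set Pf := P.filter (fun σ => ¬ (σ L = true)) with hPf
    have hsplit : Pt.card + Pf.card = P.card :=
      Finset.card_filter_add_card_filter_not (p := fun σ : Fin (m+1) → Bool => σ L = true)
    -- injectivity of π on fixed-last-value sets
    have hinj : ∀ (Q : Finset (Fin (m+1) → Bool)) (v : Bool),
        (∀ σ ∈ Q, σ L = v) → Set.InjOn π Q := by
      intro Q v hQ σ₁ h₁ σ₂ h₂ hp
      funext i
      refine Fin.lastCases ?_ ?_ i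
      · rw [hQ σ₁ h₁, hQ σ₂ h₂]
      · intro j; exact congrFun hp j
    have ht : (Pt.image π).card = Pt.card :=
      Finset.card_image_of_injOn (hinj Pt true (fun σ hσ => (Finset.mem_filter.1 hσ).2))
    have hf : (Pf.image π).card = Pf.card := by
      refine Finset.card_image_of_injOn (hinj Pf false (fun σ hσ => ?_))
      have := (Finset.mem_filter.1 hσ).2
      simpa using this
    have hiu : (Pt.image π).card + (Pf.image π).card
        = (Pt.image π ∪ Pf.image π).card + (Pt.image π ∩ Pf.image π).card :=
      (Finset.card_union_add_card_inter _ _).symm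
    -- union is contained in patterns of the first m functionals
    have hU : Pt.image π ∪ Pf.image π ⊆ Pat m C (fun i => a i.castSucc) (fun i => b i.castSucc) := by
      intro σ' hσ'
      have : ∃ σ ∈ P, π σ = σ' := by
        rcases Finset.mem_union.1 hσ' with h | h
        · rcases Finset.mem_image.1 h with ⟨σ, hσ, rfl⟩
          exact ⟨σ, (Finset.mem_filter.1 hσ).1, rfl⟩
        · rcases Finset.mem_image.1 h with ⟨σ, hσ, rfl⟩
          exact ⟨σ, (Finset.mem_filter.1 hσ).1, rfl⟩
      rcases this with ⟨σ, hσ, rfl⟩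
      rcases mem_Pat'.1 hσ with ⟨u, hu, hcond⟩
      exact mem_Pat'.2 ⟨u, hu, fun i => hcond i.castSucc⟩
    by_cases hint : (Pt.image π ∩ Pf.image π).Nonempty
    case neg =>
      -- intersection empty
      have h0 : (Pt.image π ∩ Pf.image π).card = 0 := by
        rw [Finset.card_eq_zero]; exact Finset.not_nonempty_iff_eq_empty.1 hint
      have : P.card ≤ (Pat m C (fun i => a i.castSucc) (fun i => b i.castSucc)).card := by
        rw [← hsplit, ← ht, ← hf, hiu, h0]
        simpa using Finset.card_le_card hU
      refine le_trans this (le_trans (ih e C hC _ _ he) ?_)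
      refine Finset.sum_le_sum (fun i _ => Nat.choose_le_choose i (Nat.le_succ m))
    case pos =>
      -- intersection nonempty: get rank drop
      set C' := C ∩ {u : Euc d | ⟪u, a L⟫ = b L} with hC'
      have hC'conv : Convex ℝ C' :=
        hC.inter (convex_hyperplane
          ⟨fun x y => inner_add_left x y (a L), fun c x => real_inner_smul_left x (a L) c⟩ (b L))
      -- the intersection is contained in the patterns over C'
      have hI : Pt.image π ∩ Pf.image π ⊆
          Pat m C' (fun i => a i.castSucc) (fun i => b i.castSucc) := by
        intro σ' hσ'
        rcases Finset.mem_inter.1 hσ' with ⟨h1, h2⟩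
        rcases Finset.mem_image.1 h1 with ⟨σt, hσt, hπt⟩
        rcases Finset.mem_image.1 h2 with ⟨σf, hσf, hπf⟩
        have hσtP := (Finset.mem_filter.1 hσt).1
        have hσfP := (Finset.mem_filter.1 hσf).1
        have hLt : σt L = true := (Finset.mem_filter.1 hσt).2
        have hLf : σf L = false := by
          have := (Finset.mem_filter.1 hσf).2; simpa using this
        rcases mem_Pat'.1 hσtP with ⟨u, hu, hcu⟩
        rcases mem_Pat'.1 hσfP with ⟨u', hu', hcu'⟩
        have hA : b L < ⟪u, a L⟫ := (hcu L).1 hLt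
        have hB : ⟪u', a L⟫ < b L := (hcu' L).2 hLf
        obtain ⟨A, hAdef⟩ : ∃ r : ℝ, (⟪u, a L⟫ : ℝ) = r := ⟨_, rfl⟩
        obtain ⟨B, hBdef⟩ : ∃ r : ℝ, (⟪u', a L⟫ : ℝ) = r := ⟨_, rfl⟩
        rw [hAdef] at hA
        rw [hBdef] at hB
        have hAB : (0:ℝ) < A - B := by linarith
        set t : ℝ := (A - b L) / (A - B) with hT
        have ht0 : 0 < t := div_pos (by linarith) hAB
        have ht1 : t < 1 := by
          rw [hT, div_lt_one hAB]; linarith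
        set w := (1 - t) • u + t • u' with hw
        have hwC : w ∈ C := hC hu hu' (by linarith) (le_of_lt ht0) (by ring)
        have hwinner : ∀ z : Euc d, (⟪w, z⟫ : ℝ) = (1 - t) * ⟪u, z⟫ + t * ⟪u', z⟫ := by
          intro z
          rw [hw, inner_add_left, real_inner_smul_left, real_inner_smul_left]
        have hwL : (⟪w, a L⟫ : ℝ) = b L := by
          rw [hwinner, hAdef, hBdef, hT]
          field_simp
          ring
        refine mem_Pat'.2 ⟨w, ⟨hwC, hwL⟩, ?_⟩
        intro i
        constructor
        · intro hi
          have h1' : b i.castSucc < ⟪u, a i.castSucc⟫ := by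
            refine (hcu i.castSucc).1 ?_
            have : π σt i = σ' i := by rw [hπt]
            dsimp [π] at this; rw [this, hi]
          have h2' : b i.castSucc < ⟪u', a i.castSucc⟫ := by
            refine (hcu' i.castSucc).1 ?_
            have : π σf i = σ' i := by rw [hπf]
            dsimp [π] at this; rw [this, hi]
          rw [hwinner]
          nlinarith
        · intro hi
          have h1' : ⟪u, a i.castSucc⟫ < b i.castSucc := by
            refine (hcu i.castSucc).2 ?_
            have : π σt i = σ' i := by rw [hπt]
            dsimp [π] at this; rw [this, hi]
          have h2' : ⟪u', a i.castSucc⟫ < b i.castSucc := by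
            refine (hcu' i.castSucc).2 ?_
            have : π σf i = σ' i := by rw [hπf]
            dsimp [π] at this; rw [this, hi]
          rw [hwinner]
          nlinarith
      -- rank drop for C'
      have hrank : finrank ℝ (vectorSpan ℝ C') ≤ e - 1 ∧ 1 ≤ e := by
        rcases hint with ⟨σ', hσ'⟩
        rcases Finset.mem_inter.1 hσ' with ⟨h1, h2⟩
        rcases Finset.mem_image.1 h1 with ⟨σt, hσt, hπt⟩
        rcases Finset.mem_image.1 h2 with ⟨σf, hσf, hπf⟩
        rcases mem_Pat'.1 (Finset.mem_filter.1 hσt).1 with ⟨u, hu, hcu⟩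
        rcases mem_Pat'.1 (Finset.mem_filter.1 hσf).1 with ⟨u', hu', hcu'⟩
        have hA : b L < ⟪u, a L⟫ := (hcu L).1 (Finset.mem_filter.1 hσt).2
        have hB : ⟪u', a L⟫ < b L := by
          refine (hcu' L).2 ?_
          have := (Finset.mem_filter.1 hσf).2; simpa using this
        -- linear functional
        set f : Euc d →ₗ[ℝ] ℝ :=
          { toFun := fun u => ⟪u, a L⟫
            map_add' := fun x y => inner_add_left x y (a L)
            map_smul' := fun c x => real_inner_smul_left x (a L) c } with hfdef
        have hsub : vectorSpan ℝ C' ≤ vectorSpan ℝ C ⊓ LinearMap.ker f := by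
          rw [vectorSpan_def]
          refine Submodule.span_le.2 ?_
          rintro v ⟨p, hp, q, hq, rfl⟩
          refine ⟨vsub_mem_vectorSpan ℝ hp.1 hq.1, ?_⟩
          have hker : f (p -ᵥ q) = 0 := by
            show (⟪p - q, a L⟫ : ℝ) = 0
            rw [inner_sub_left]
            have h1 : (⟪p, a L⟫ : ℝ) = b L := hp.2
            have h2 : (⟪q, a L⟫ : ℝ) = b L := hq.2
            rw [h1, h2]; ring
          exact LinearMap.mem_ker.2 hker
        have hlt : (vectorSpan ℝ C ⊓ LinearMap.ker f : Submodule ℝ (Euc d)) < vectorSpan ℝ C := by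
          refine lt_of_le_of_ne inf_le_left ?_
          intro heq
          have hmem : u - u' ∈ vectorSpan ℝ C := by
            have := vsub_mem_vectorSpan ℝ hu hu'
            simpa using this
          rw [← heq] at hmem
          have : f (u - u') = 0 := hmem.2
          have : ⟪u, a L⟫ - ⟪u', a L⟫ = 0 := by
            rw [← inner_sub_left]; exact this
          linarith
        have h1 : finrank ℝ (vectorSpan ℝ C') ≤
            finrank ℝ ((vectorSpan ℝ C ⊓ LinearMap.ker f : Submodule ℝ (Euc d))) :=
          Submodule.finrank_mono hsub
        have h2 : finrank ℝ ((vectorSpan ℝ C ⊓ LinearMap.ker f : Submodule ℝ (Euc d))) <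
            finrank ℝ (vectorSpan ℝ C) :=
          Submodule.finrank_lt_finrank_of_lt hlt
        omega
      rcases hrank with ⟨hr, he1⟩
      have ihI := ih (e-1) C' hC'conv (fun i => a i.castSucc) (fun i => b i.castSucc) hr
      have ihU := ih e C hC (fun i => a i.castSucc) (fun i => b i.castSucc) he
      have : P.card ≤ ∑ i ∈ range (e+1), m.choose i + ∑ i ∈ range ((e-1)+1), m.choose i := by
        rw [← hsplit, ← ht, ← hf, hiu]
        have c1 : (Pt.image π ∪ Pf.image π).card ≤ ∑ i ∈ range (e+1), m.choose i :=
          le_trans (Finset.card_le_card hU) ihU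
        have c2 : (Pt.image π ∩ Pf.image π).card ≤ ∑ i ∈ range ((e-1)+1), m.choose i :=
          le_trans (Finset.card_le_card hI) ihI
        omega
      have he' : (e-1)+1 = e := by omega
      rw [he'] at this
      rw [pascal_sum]
      exact this

set_option maxHeartbeats 1000000 in
open Module Finset in
private lemma keyPair {d k : ℕ} (X : Set (Euc d)) (hX : X.Finite)
    (color : Euc d → Fin k)
    (h : ∀ S ⊆ X, S.ncard ≤ (d + 1) * (∑ i ∈ Finset.range (d + 1), (k - 2).choose i) + k →
      PartByHyp color S)
    (x : Euc d) (hx : x ∈ X) (y : Euc d) (hy : y ∈ X) (hxy : color x ≠ color y) :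
    ∃ (v : Euc d) (c : ℝ), (∀ z ∈ X, ⟪v, z⟫ ≠ c) ∧
      (∀ z ∈ X, ∀ z' ∈ X, color z = color z' →
        ¬ ((⟪v, z⟫ < c ∧ c < ⟪v, z'⟫) ∨ (⟪v, z'⟫ < c ∧ c < ⟪v, z⟫))) ∧
      ⟪v, x⟫ < c ∧ c < ⟪v, y⟫ := by
  classical
  by_contra hno
  -- representatives
  have hchoice : ∀ γ : Fin k, ∃ w : Euc d,
      w ∈ X ∧ ((∃ z, z ∈ X ∧ color z = γ) → color w = γ) := by
    intro γ
    by_cases hγ : ∃ z, z ∈ X ∧ color z = γ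
    · exact ⟨hγ.choose, hγ.choose_spec.1, fun _ => hγ.choose_spec.2⟩
    · exact ⟨x, hx, fun hh => absurd hh hγ⟩
  choose r hr1 hr2 using hchoice
  set rep : Fin k → Euc d := fun γ =>
    if γ = color x then x else if γ = color y then y else r γ with hrepdef
  have hne' : ¬ (color y = color x) := fun hh => hxy hh.symm
  have hrx : rep (color x) = x := by simp [hrepdef]
  have hry : rep (color y) = y := by
    simp [hrepdef, hne']
  have hrepX : ∀ γ, rep γ ∈ X := by
    intro γ
    simp only [hrepdef]
    split_ifs with h1 h2
    · exact hx
    · exact hy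
    · exact hr1 γ
  have hrepc : ∀ γ, (∃ z, z ∈ X ∧ color z = γ) → color (rep γ) = γ := by
    intro γ hγ
    simp only [hrepdef]
    split_ifs with h1 h2
    · rw [h1]
    · rw [h2]
    · exact hr2 γ hγ
  -- dual region and patterns
  set C : Set (Euc d) := {u : Euc d | 1 < ⟪u, y - x⟫} with hCdef
  set P : Finset (Fin k → Bool) := Finset.univ.filter (fun τ => ∃ u ∈ C,
      ∀ γ : Fin k, (τ γ = true → 1 < ⟪u, rep γ - x⟫) ∧ (τ γ = false → ⟪u, rep γ - x⟫ < 1))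
    with hPdef
  have hmemP : ∀ τ : Fin k → Bool, τ ∈ P ↔ ∃ u ∈ C,
      ∀ γ : Fin k, (τ γ = true → 1 < ⟪u, rep γ - x⟫) ∧ (τ γ = false → ⟪u, rep γ - x⟫ < 1) := by
    intro τ; simp [hPdef]
  -- counting: #P ≤ η
  have hcount : P.card ≤ ∑ i ∈ Finset.range (d + 1), (k - 2).choose i := by
    set s : Finset (Fin k) := Finset.univ \ {color x, color y} with hsdef
    have hscard : s.card = k - 2 := by
      rw [hsdef, Finset.card_sdiff_of_subset (Finset.subset_univ _)]
      rw [Finset.card_univ, Fintype.card_fin]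
      congr 1
      rw [Finset.card_insert_of_notMem (by simpa using hxy), Finset.card_singleton]
    set φ : Fin s.card → {γ : Fin k // γ ∈ s} := fun i => s.equivFin.symm i with hφdef
    set a : Fin s.card → Euc d := fun i => rep (φ i).1 - x with hadef
    set b : Fin s.card → ℝ := fun _ => 1 with hbdef
    have hCconv : Convex ℝ C :=
      convex_halfSpace_gt ⟨fun u v => inner_add_left u v (y - x),
        fun c u => real_inner_smul_left u (y - x) c⟩ 1
    have hrk : finrank ℝ (vectorSpan ℝ C) ≤ d := by
      refine le_trans (Submodule.finrank_le _) ?_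
      rw [finrank_euclideanSpace_fin]
    have hinj : ∀ τ ∈ P, ∀ τ' ∈ P, (fun i => τ (φ i).1) = (fun i => τ' (φ i).1) → τ = τ' := by
      intro τ hτ τ' hτ' heq
      rcases (hmemP τ).1 hτ with ⟨u, hu, hcond⟩
      rcases (hmemP τ').1 hτ' with ⟨u', hu', hcond'⟩
      have hforced : ∀ (σ : Fin k → Bool) (w : Euc d), w ∈ C →
          (∀ γ : Fin k, (σ γ = true → 1 < ⟪w, rep γ - x⟫) ∧ (σ γ = false → ⟪w, rep γ - x⟫ < 1)) →
          σ (color x) = false ∧ σ (color y) = true := by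
        intro σ w hw hcondw
        constructor
        · by_contra hcx
          have : σ (color x) = true := by
            cases hσ : σ (color x)
            · exact absurd hσ hcx
            · rfl
          have := (hcondw (color x)).1 this
          rw [hrx] at this
          simp at this
          linarith
        · by_contra hcy
          have : σ (color y) = false := by
            cases hσ : σ (color y)
            · rfl
            · exact absurd hσ hcy
          have := (hcondw (color y)).2 this
          rw [hry] at this
          have hw' : (1:ℝ) < ⟪w, y - x⟫ := hw
          linarith
      funext γ
      by_cases hγs : γ ∈ s
      · have hφi : (φ (s.equivFin ⟨γ, hγs⟩)).1 = γ := by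
          rw [hφdef]; simp
        have hcf : τ ((φ (s.equivFin ⟨γ, hγs⟩)).1) = τ' ((φ (s.equivFin ⟨γ, hγs⟩)).1) :=
          congrFun heq (s.equivFin ⟨γ, hγs⟩)
        rw [hφi] at hcf
        exact hcf
      · have hγxy : γ = color x ∨ γ = color y := by
          by_contra hcon
          push_neg at hcon
          exact hγs (by simp [hsdef, hcon.1, hcon.2])
        rcases hγxy with rfl | rfl
        · rw [(hforced τ u hu hcond).1, (hforced τ' u' hu' hcond').1]
        · rw [(hforced τ u hu hcond).2, (hforced τ' u' hu' hcond').2]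
    have hmap : ∀ τ ∈ P, (fun i => τ (φ i).1) ∈ Pat s.card C a b := by
      intro τ hτ
      rcases (hmemP τ).1 hτ with ⟨u, hu, hcond⟩
      refine mem_Pat'.2 ⟨u, hu, fun i => ?_⟩
      constructor
      · intro hi
        have := (hcond (φ i).1).1 hi
        simpa [hadef, hbdef] using this
      · intro hi
        have := (hcond (φ i).1).2 hi
        simpa [hadef, hbdef] using this
    have hcard1 : P.card ≤ (Pat s.card C a b).card := by
      refine Finset.card_le_card_of_injOn (fun τ => fun i => τ (φ i).1) hmap ?_
      intro τ hτ τ' hτ' heq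
      exact hinj τ hτ τ' hτ' heq
    refine le_trans hcard1 (le_trans (patcount s.card d C hCconv a b hrk) (le_of_eq ?_))
    rw [hscard]
  -- the family of halfspaces for a pattern τ
  set g : (Fin k → Bool) → Option (Euc d) → Set (Euc d) := fun τ o =>
    Option.elim o C (fun z =>
      if τ (color z) = true then {u : Euc d | 1 < ⟪u, z - x⟫} else {u : Euc d | ⟪u, z - x⟫ < 1})
    with hgdef
  set sIdx : Finset (Option (Euc d)) := insert none (hX.toFinset.image some) with hsIdx
  -- total intersections are empty
  have hTot : ∀ τ : Fin k → Bool, (⋂ i ∈ sIdx, g τ i) = ∅ := by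
    intro τ
    by_contra hne
    rcases Set.nonempty_iff_ne_empty.2 hne with ⟨u, hu⟩
    have huC : u ∈ C := by
      have := Set.mem_iInter₂.1 hu none (by simp [hsIdx])
      exact this
    have huz : ∀ z ∈ X, u ∈ g τ (some z) := by
      intro z hz
      have hmem : some z ∈ sIdx := by
        simp [hsIdx, Set.Finite.mem_toFinset, hz]
      exact Set.mem_iInter₂.1 hu (some z) hmem
    have hCu : (1:ℝ) < ⟪u, y - x⟫ := huC
    set c : ℝ := 1 + ⟪u, x⟫ with hcdef
    have hside : ∀ z ∈ X, (τ (color z) = true ∧ c < ⟪u, z⟫) ∨ (τ (color z) = false ∧ ⟪u, z⟫ < c) := by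
      intro z hz
      have := huz z hz
      cases hτz : τ (color z)
      · right
        refine ⟨rfl, ?_⟩
        have hmem : u ∈ {w : Euc d | ⟪w, z - x⟫ < 1} := by
          have h2 := this
          rw [hgdef] at h2
          simpa [hτz] using h2
        have : (⟪u, z - x⟫ : ℝ) < 1 := hmem
        rw [inner_sub_right] at this
        rw [hcdef]; linarith
      · left
        refine ⟨rfl, ?_⟩
        have hmem : u ∈ {w : Euc d | 1 < ⟪w, z - x⟫} := by
          have h2 := this
          rw [hgdef] at h2
          simpa [hτz] using h2
        have : (1:ℝ) < ⟪u, z - x⟫ := hmem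
        rw [inner_sub_right] at this
        rw [hcdef]; linarith
    refine hno ⟨u, c, ?_, ?_, ?_, ?_⟩
    · intro z hz
      rcases hside z hz with ⟨_, h1⟩ | ⟨_, h1⟩ <;> [exact (ne_of_gt h1); exact (ne_of_lt h1)]
    · intro z hz z' hz' hcc
      rcases hside z hz with ⟨h1, h2⟩ | ⟨h1, h2⟩ <;>
        rcases hside z' hz' with ⟨h1', h2'⟩ | ⟨h1', h2'⟩
      · rintro (⟨ha, hb⟩ | ⟨ha, hb⟩) <;> linarith
      · rw [hcc] at h1; rw [h1] at h1'; exact absurd h1' (by simp)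
      · rw [hcc] at h1; rw [h1] at h1'; exact absurd h1' (by simp)
      · rintro (⟨ha, hb⟩ | ⟨ha, hb⟩) <;> linarith
    · rw [hcdef]; linarith
    · have : (1:ℝ) < ⟪u, y - x⟫ := hCu
      rw [inner_sub_right] at this
      rw [hcdef]; linarith
  -- Helly: small witnesses
  have hIex : ∀ τ : Fin k → Bool, ∃ I : Finset (Option (Euc d)),
      I ⊆ sIdx ∧ I.card ≤ d + 1 ∧ (⋂ i ∈ I, g τ i) = ∅ := by
    intro τ
    by_contra hcon
    push_neg at hcon
    have hconv : ∀ i ∈ sIdx, Convex ℝ (g τ i) := by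
      intro i _
      match i with
      | none =>
        exact convex_halfSpace_gt ⟨fun u v => inner_add_left u v (y - x),
          fun c u => real_inner_smul_left u (y - x) c⟩ 1
      | some z =>
        rw [hgdef]
        dsimp only [Option.elim]
        split
        · exact convex_halfSpace_gt ⟨fun u v => inner_add_left u v (z - x),
            fun c u => real_inner_smul_left u (z - x) c⟩ 1
        · exact convex_halfSpace_lt ⟨fun u v => inner_add_left u v (z - x),
            fun c u => real_inner_smul_left u (z - x) c⟩ 1
    have hinter : ∀ I ⊆ sIdx, I.card ≤ finrank ℝ (Euc d) + 1 → (⋂ i ∈ I, g τ i).Nonempty := by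
      intro I hI hIc
      rw [finrank_euclideanSpace_fin] at hIc
      have := hcon I hI hIc
      first
      | exact this
      | exact Set.nonempty_iff_ne_empty.2 this
    have := Convex.helly_theorem' hconv hinter
    rw [hTot τ] at this
    exact Set.not_nonempty_empty this
  choose I hI1 hI2 hI3 using hIex
  set Z : (Fin k → Bool) → Finset (Euc d) := fun τ =>
    hX.toFinset.filter (fun z => some z ∈ I τ) with hZdef
  have hZcard : ∀ τ, (Z τ).card ≤ d + 1 := by
    intro τ
    refine le_trans ?_ (hI2 τ)
    refine Finset.card_le_card_of_injOn some ?_ ?_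
    · intro z hz
      exact (Finset.mem_filter.1 hz).2
    · intro z _ z' _ hzz
      simpa using hzz
  -- the test set S
  set S : Finset (Euc d) := (Finset.univ.image rep) ∪ P.biUnion Z with hSdef
  have hSsub : (S : Set (Euc d)) ⊆ X := by
    intro z hz
    have hz' : z ∈ S := hz
    rw [hSdef] at hz'
    rcases Finset.mem_union.1 hz' with h1 | h1
    · rcases Finset.mem_image.1 h1 with ⟨γ, _, rfl⟩
      exact hrepX γ
    · rcases Finset.mem_biUnion.1 h1 with ⟨τ, _, hzt⟩
      have := (Finset.mem_filter.1 hzt).1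
      exact (Set.Finite.mem_toFinset hX).1 this
  have hScard : (S : Set (Euc d)).ncard ≤
      (d + 1) * (∑ i ∈ Finset.range (d + 1), (k - 2).choose i) + k := by
    rw [Set.ncard_coe_finset]
    have h1 : S.card ≤ (Finset.univ.image rep).card + (P.biUnion Z).card := by
      rw [hSdef]; exact Finset.card_union_le _ _
    have h2 : (Finset.univ.image rep).card ≤ k := by
      refine le_trans (Finset.card_image_le) ?_
      simp
    have h3 : (P.biUnion Z).card ≤ P.card * (d + 1) := by
      refine le_trans (Finset.card_biUnion_le) ?_
      have := Finset.sum_le_card_nsmul P (fun τ => (Z τ).card) (d+1)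
        (fun τ _ => hZcard τ)
      simpa [smul_eq_mul] using this
    have h4 : P.card * (d + 1) ≤ (∑ i ∈ Finset.range (d + 1), (k - 2).choose i) * (d+1) :=
      Nat.mul_le_mul_right _ hcount
    have := h4
    nlinarith [h1, h2, h3]
  -- apply the hypothesis to S
  obtain ⟨F, hF1, hF2, hF3, hF4⟩ := h S hSsub hScard
  have hxS : x ∈ S := by
    rw [hSdef]
    refine Finset.mem_union_left _ ?_
    exact Finset.mem_image.2 ⟨color x, Finset.mem_univ _, hrx⟩
  have hyS : y ∈ S := by
    rw [hSdef]
    refine Finset.mem_union_left _ ?_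
    exact Finset.mem_image.2 ⟨color y, Finset.mem_univ _, hry⟩
  have hrepS : ∀ γ, rep γ ∈ S := by
    intro γ
    rw [hSdef]
    exact Finset.mem_union_left _ (Finset.mem_image.2 ⟨γ, Finset.mem_univ _, rfl⟩)
  obtain ⟨p, hpF, hsep⟩ := hF3 x hxS y hyS hxy
  -- normalize the separating hyperplane
  obtain ⟨v0, c0, havoid, hnos, hx0, hy0⟩ :
      ∃ (v0 : Euc d) (c0 : ℝ), (∀ z ∈ S, ⟪v0, z⟫ ≠ c0) ∧
        (∀ z ∈ S, ∀ z' ∈ S, color z = color z' →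
          ¬ ((⟪v0, z⟫ < c0 ∧ c0 < ⟪v0, z'⟫) ∨ (⟪v0, z'⟫ < c0 ∧ c0 < ⟪v0, z⟫))) ∧
        ⟪v0, x⟫ < c0 ∧ c0 < ⟪v0, y⟫ := by
    rcases hsep with ⟨hs1, hs2⟩ | ⟨hs1, hs2⟩
    · exact ⟨p.1, p.2, fun z hz => hF2 p hpF z hz,
        fun z hz z' hz' hcc => hF4 p hpF z hz z' hz' hcc, hs1, hs2⟩
    · refine ⟨-p.1, -p.2, ?_, ?_, ?_, ?_⟩
      · intro z hz
        rw [inner_neg_left]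
        exact fun hcc => hF2 p hpF z hz (by linarith [neg_injective hcc])
      · intro z hz z' hz' hcc
        have := hF4 p hpF z hz z' hz' hcc
        rw [inner_neg_left, inner_neg_left]
        intro hcon
        refine this ?_
        rcases hcon with ⟨ha, hb⟩ | ⟨ha, hb⟩
        · right; constructor <;> linarith
        · left; constructor <;> linarith
      · rw [inner_neg_left]; linarith
      · rw [inner_neg_left]; linarith
  set s0 : ℝ := c0 - ⟪v0, x⟫ with hs0def
  have hs0 : 0 < s0 := by rw [hs0def]; linarith
  set u : Euc d := s0⁻¹ • v0 with hudef
  have hkey : ∀ z : Euc d, (⟪u, z - x⟫ : ℝ) = (⟪v0, z⟫ - ⟪v0, x⟫) / s0 := by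
    intro z
    rw [hudef, real_inner_smul_left, inner_sub_right]
    ring
  have hgt : ∀ z : Euc d, (1 < ⟪u, z - x⟫ ↔ c0 < ⟪v0, z⟫) := by
    intro z
    rw [hkey, lt_div_iff₀ hs0, hs0def]
    constructor <;> intro hh <;> linarith
  have hlt : ∀ z : Euc d, (⟪u, z - x⟫ < 1 ↔ ⟪v0, z⟫ < c0) := by
    intro z
    rw [hkey, div_lt_iff₀ hs0, hs0def]
    constructor <;> intro hh <;> linarith
  have heq1 : ∀ z : Euc d, ((⟪u, z - x⟫ : ℝ) = 1 ↔ ⟪v0, z⟫ = c0) := by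
    intro z
    rw [hkey, div_eq_one_iff_eq (ne_of_gt hs0), hs0def]
    constructor <;> intro hh <;> linarith
  -- the pattern realized by u
  set τ0 : Fin k → Bool := fun γ => if 1 < ⟪u, rep γ - x⟫ then true else false with hτ0def
  have hτ0t : ∀ γ, τ0 γ = true ↔ 1 < ⟪u, rep γ - x⟫ := by
    intro γ
    rw [hτ0def]
    by_cases hh : 1 < ⟪u, rep γ - x⟫ <;> simp [hh]
  have hτ0f : ∀ γ, τ0 γ = false ↔ ¬ (1 < ⟪u, rep γ - x⟫) := by
    intro γ
    rw [hτ0def]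
    by_cases hh : 1 < ⟪u, rep γ - x⟫ <;> simp [hh]
  have huC : u ∈ C := by
    show (1:ℝ) < ⟪u, y - x⟫
    exact (hgt y).2 hy0
  have hτ0P : τ0 ∈ P := by
    refine (hmemP τ0).2 ⟨u, huC, fun γ => ⟨fun ht => (hτ0t γ).1 ht, fun hf => ?_⟩⟩
    have h1 : ¬ (1 < ⟪u, rep γ - x⟫) := (hτ0f γ).1 hf
    have h2 : (⟪u, rep γ - x⟫ : ℝ) ≠ 1 := by
      intro hh
      exact havoid (rep γ) (hrepS γ) ((heq1 (rep γ)).1 hh)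
    rcases lt_trichotomy (⟪u, rep γ - x⟫ : ℝ) 1 with hh | hh | hh
    · exact hh
    · exact absurd hh h2
    · exact absurd hh h1
  -- u lies in every chosen half-space: contradiction with emptiness
  have hufinal : u ∈ ⋂ i ∈ I τ0, g τ0 i := by
    refine Set.mem_biInter ?_
    intro i hi
    have hi' : i ∈ sIdx := hI1 τ0 hi
    match i with
    | none => exact huC
    | some z =>
      have hzX : z ∈ X := by
        rw [hsIdx] at hi'
        rcases Finset.mem_insert.1 hi' with hh | hh
        · exact absurd hh (by simp)
        · rcases Finset.mem_image.1 hh with ⟨z', hz', hzz⟩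
          have : z' = z := by simpa using hzz
          rw [← this]
          exact (Set.Finite.mem_toFinset hX).1 hz'
      have hzS : z ∈ S := by
        rw [hSdef]
        refine Finset.mem_union_right _ ?_
        refine Finset.mem_biUnion.2 ⟨τ0, hτ0P, ?_⟩
        rw [hZdef]
        exact Finset.mem_filter.2 ⟨(Set.Finite.mem_toFinset hX).2 hzX, hi⟩
      -- z and rep (color z) are on the same side
      have hpres : ∃ w, w ∈ X ∧ color w = color z := ⟨z, hzX, rfl⟩
      have hrc : color (rep (color z)) = color z := hrepc (color z) hpres
      have hsame : (c0 < ⟪v0, z⟫ ↔ c0 < ⟪v0, rep (color z)⟫) := by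
        have hnsp := hnos z hzS (rep (color z)) (hrepS (color z)) hrc.symm
        have haz : (⟪v0, z⟫ : ℝ) ≠ c0 := havoid z hzS
        have har : (⟪v0, rep (color z)⟫ : ℝ) ≠ c0 := havoid _ (hrepS (color z))
        constructor
        · intro hcz
          rcases lt_trichotomy (⟪v0, rep (color z)⟫ : ℝ) c0 with hh | hh | hh
          · exact absurd (Or.inr ⟨hh, hcz⟩) hnsp
          · exact absurd hh har
          · exact hh
        · intro hcz
          rcases lt_trichotomy (⟪v0, z⟫ : ℝ) c0 with hh | hh | hh
          · exact absurd (Or.inl ⟨hh, hcz⟩) hnsp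
          · exact absurd hh haz
          · exact hh
      rw [hgdef]
      dsimp only [Option.elim]
      by_cases hτz : τ0 (color z) = true
      · rw [if_pos hτz]
        show (1:ℝ) < ⟪u, z - x⟫
        have h1 : 1 < ⟪u, rep (color z) - x⟫ := (hτ0t (color z)).1 hτz
        have h2 : c0 < ⟪v0, rep (color z)⟫ := (hgt _).1 h1
        exact (hgt z).2 (hsame.2 h2)
      · rw [if_neg hτz]
        show (⟪u, z - x⟫ : ℝ) < 1
        have hzf : τ0 (color z) = false := by
          cases hc : τ0 (color z)
          · rfl
          · exact absurd hc hτz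
        have h1 : ¬ (1 < ⟪u, rep (color z) - x⟫) := (hτ0f (color z)).1 hzf
        have h2 : (⟪u, rep (color z) - x⟫ : ℝ) ≠ 1 := by
          intro hh
          exact havoid (rep (color z)) (hrepS (color z)) ((heq1 _).1 hh)
        have h3 : (⟪u, rep (color z) - x⟫ : ℝ) < 1 := by
          rcases lt_trichotomy (⟪u, rep (color z) - x⟫ : ℝ) 1 with hh | hh | hh
          · exact hh
          · exact absurd hh h2
          · exact absurd hh h1
        have h4 : (⟪v0, rep (color z)⟫ : ℝ) < c0 := (hlt _).1 h3
        have h5 : (⟪v0, z⟫ : ℝ) < c0 := by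
          rcases lt_trichotomy (⟪v0, z⟫ : ℝ) c0 with hh | hh | hh
          · exact hh
          · exact absurd hh (havoid z hzS)
          · exact absurd (hsame.1 hh) (by linarith)
        exact (hlt z).2 h5
  rw [hI3 τ0] at hufinal
  exact hufinal


theorem stmt15 {d k : ℕ} (hk : 2 ≤ k) (X : Set (Euc d)) (hX : X.Finite)
    (color : Euc d → Fin k)
    (h : ∀ S ⊆ X, S.ncard ≤ (d + 1) * (∑ i ∈ Finset.range (d + 1), (k - 2).choose i) + k →
      PartByHyp color S) :
    PartByHyp color X := by
  classical
  refine ⟨{p : Euc d × ℝ | p.1 ≠ 0 ∧ (∀ z ∈ X, ⟪p.1, z⟫ ≠ p.2) ∧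
    (∀ z ∈ X, ∀ z' ∈ X, color z = color z' →
      ¬ ((⟪p.1, z⟫ < p.2 ∧ p.2 < ⟪p.1, z'⟫) ∨ (⟪p.1, z'⟫ < p.2 ∧ p.2 < ⟪p.1, z⟫)))},
    ?_, ?_, ?_, ?_⟩
  · intro p hp; exact hp.1
  · intro p hp z hz; exact hp.2.1 z hz
  · intro a ha b hb hab
    obtain ⟨v, c, havoid, hnos, hvx, hvy⟩ := keyPair X hX color h a ha b hb hab
    have hvne : v ≠ 0 := by
      intro hv0
      rw [hv0] at hvx hvy
      simp only [inner_zero_left] at hvx hvy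
      linarith
    exact ⟨(v, c), ⟨hvne, havoid, hnos⟩, Or.inl ⟨hvx, hvy⟩⟩
  · intro p hp z hz z' hz' hcc
    exact hp.2.2 z hz z' hz' hcc
end
end

section
/- Let X ⊆ R^d be a set of k ≥ 2 points (not necessarily in general position). Then the maximum cardinality of a minimal transversal for the full subdivisions of H(X) is at most η_d(k) = sum_{i=0}^{d} binomial(k-2, i). -/
open scoped RealInnerProductSpace

noncomputable section

lemma exists_affine_dep {d : ℕ} (t : Finset (Euc d)) (ht : d + 2 ≤ t.card) :
    ∃ c : Euc d → ℝ, ∑ y ∈ t, c y • y = 0 ∧ ∑ y ∈ t, c y = 0 ∧ ∃ y ∈ t, c y ≠ 0 := by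
  classical
  have hnaff : ¬ AffineIndependent ℝ ((↑) : ↥t → Euc d) := by
    intro h
    have h2 := h.card_le_finrank_succ
    have h3 : Module.finrank ℝ (vectorSpan ℝ (Set.range ((↑) : ↥t → Euc d))) ≤ d := by
      refine le_trans (Submodule.finrank_le _) ?_
      simp [finrank_euclideanSpace]
    rw [Fintype.card_coe] at h2
    omega
  rw [affineIndependent_iff] at hnaff
  push_neg at hnaff
  obtain ⟨s, w, hw0, hws, y₀, hy₀s, hy₀⟩ := hnaff
  refine ⟨fun y => if h : y ∈ t then (if ⟨y, h⟩ ∈ s then w ⟨y, h⟩ else 0) else 0, ?_, ?_, ?_⟩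
  · rw [← Finset.sum_attach t]
    have : ∀ i : ↥t, (if h : (i : Euc d) ∈ t then (if ⟨(i : Euc d), h⟩ ∈ s then w ⟨(i : Euc d), h⟩ else 0) else 0) • (i : Euc d)
        = if i ∈ s then w i • (i : Euc d) else 0 := by
      intro i
      rw [dif_pos i.2]
      simp [Subtype.coe_eta, ite_smul]
    rw [Finset.sum_congr rfl fun i _ => this i]
    rw [Finset.sum_ite_mem]
    rwa [Finset.inter_eq_right.mpr (fun i _ => Finset.mem_attach t i)]
  · rw [← Finset.sum_attach t]
    have : ∀ i : ↥t, (if h : (i : Euc d) ∈ t then (if ⟨(i : Euc d), h⟩ ∈ s then w ⟨(i : Euc d), h⟩ else 0) else 0)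
        = if i ∈ s then w i else 0 := by
      intro i
      simp [Subtype.coe_eta]
    rw [Finset.sum_congr rfl fun i _ => this i]
    rw [Finset.sum_ite_mem]
    rwa [Finset.inter_eq_right.mpr (fun i _ => Finset.mem_attach t i)]
  · refine ⟨y₀, y₀.2, ?_⟩
    simpa [Subtype.coe_eta, hy₀s] using hy₀

lemma minimal_eq_sep {α : Type*} {X : Set α} {C T : Set (Set (Set α))}
    (hT : IsMinimalTransversal X C T) :
    ∃ a ∈ X, ∃ b ∈ X, a ≠ b ∧ T = sep C a b := by
  obtain ⟨⟨hTC, htrans⟩, hmin⟩ := hT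
  have hnotfull : ¬ IsFull X (C \ T) := by
    intro hfull
    have := htrans (C \ T) Set.diff_subset hfull
    rw [Set.diff_inter_self] at this
    exact Set.not_nonempty_empty this
  unfold IsFull at hnotfull
  push_neg at hnotfull
  obtain ⟨a, ha, b, hb, hab, hno⟩ := hnotfull
  refine ⟨a, ha, b, hb, hab, ?_⟩
  have hsub : sep C a b ⊆ T := by
    intro P hP
    obtain ⟨hPC, hPsep⟩ := hP
    by_contra hPT
    exact hno P ⟨hPC, hPT⟩ hPsep
  have htrans' : IsTransversal X C (sep C a b) := by
    refine ⟨fun P hP => hP.1, fun S hSC hSfull => ?_⟩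
    obtain ⟨P, hPS, hPsep⟩ := hSfull a ha b hb hab
    exact ⟨P, hPS, hSC hPS, hPsep⟩
  exact (hmin _ hsub htrans').symm

lemma sep_struct {d : ℕ} {X : Set (Euc d)} {P : Set (Set (Euc d))} {a b : Euc d}
    (hP : P ∈ sep (HSet X) a b) :
    ∃ (v : Euc d) (c₀ : ℝ), (∀ x ∈ X, ⟪v, x⟫ ≠ c₀) ∧ ⟪v, a⟫ < c₀ ∧ c₀ < ⟪v, b⟫ ∧
      P = {X ∩ {x | ⟪v, x⟫ < c₀}, X ∩ {x | c₀ < ⟪v, x⟫}} := by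
  obtain ⟨hPH, U, hU, V, hV, hUV, haU, hbV⟩ := hP
  rcases hPH with h1 | ⟨v, c, hv0, hne, hL, hR, rfl⟩
  · subst h1
    rw [Set.mem_singleton_iff] at hU hV
    exact absurd (hU.trans hV.symm) hUV
  · have hdisj : (X ∩ {x | ⟪v, x⟫ < c}) ∩ (X ∩ {x | c < ⟪v, x⟫}) = ∅ := by
      ext x
      simp only [Set.mem_inter_iff, Set.mem_setOf_eq, Set.mem_empty_iff_false, iff_false]
      rintro ⟨⟨-, h1⟩, -, h2⟩
      exact absurd h1 (asymm h2)
    have hflip : ∀ x ∈ X, ⟪-v, x⟫ ≠ -c := by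
      intro x hx
      rw [inner_neg_left, ne_eq, neg_inj]
      exact hne x hx
    have hsetL : X ∩ {x | ⟪-v, x⟫ < -c} = X ∩ {x | c < ⟪v, x⟫} := by
      ext x; simp [inner_neg_left, neg_lt_neg_iff]
    have hsetR : X ∩ {x | -c < ⟪-v, x⟫} = X ∩ {x | ⟪v, x⟫ < c} := by
      ext x; simp [inner_neg_left, neg_lt_neg_iff]
    rcases hU with rfl | hU <;> rcases hV with rfl | hV
    · exact absurd rfl hUV
    · rw [Set.mem_singleton_iff] at hV; subst hV
      exact ⟨v, c, hne, haU.2, hbV.2, rfl⟩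
    · rw [Set.mem_singleton_iff] at hU; subst hU
      refine ⟨-v, -c, hflip, ?_, ?_, ?_⟩
      · rw [inner_neg_left, neg_lt_neg_iff]; exact haU.2
      · rw [inner_neg_left, neg_lt_neg_iff]; exact hbV.2
      · rw [hsetL, hsetR, Set.pair_comm]
    · rw [Set.mem_singleton_iff] at hU hV; subst hU; subst hV
      exact absurd rfl hUV

open Classical in
def Fam {d : ℕ} (X : Set (Euc d)) (Y : Finset (Euc d)) (a b : Euc d) : Finset (Finset (Euc d)) :=
  Y.powerset.filter (fun B => ∃ (v : Euc d) (c₀ : ℝ), (∀ x ∈ X, ⟪v, x⟫ ≠ c₀) ∧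
    ⟪v, a⟫ < c₀ ∧ c₀ < ⟪v, b⟫ ∧ B = Y.filter (fun y => c₀ < ⟪v, y⟫))

open Classical in
lemma shattered_card_le {d : ℕ} {X : Set (Euc d)} {Y : Finset (Euc d)} {a b : Euc d}
    (hYX : ∀ y ∈ Y, y ∈ X) (hbY : b ∉ Y) {s : Finset (Euc d)}
    (hs : (Fam X Y a b).Shatters s) : s.card ≤ d := by
  classical
  by_contra hcard
  push_neg at hcard
  obtain ⟨s', hs's, hs'card⟩ := Finset.exists_subset_card_eq (show d + 1 ≤ s.card by omega)
  have hsh' : (Fam X Y a b).Shatters s' := hs.mono_right hs's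
  have hsY : s ⊆ Y := by
    obtain ⟨u, hu, hsu⟩ := hs.exists_superset
    exact hsu.trans (Finset.mem_powerset.1 (Finset.mem_filter.1 hu).1)
  have hbs' : b ∉ s' := fun hb => hbY (hsY (hs's hb))
  set t : Finset (Euc d) := insert b s' with ht_def
  have htc : d + 2 ≤ t.card := by
    rw [Finset.card_insert_of_notMem hbs', hs'card]
  obtain ⟨c, hc1, hc2, y₀, hy₀t, hy₀⟩ := exists_affine_dep t htc
  obtain ⟨c, hc1, hc2, hy, hcb⟩ : ∃ c : Euc d → ℝ, ∑ y ∈ t, c y • y = 0 ∧ ∑ y ∈ t, c y = 0 ∧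
      (∃ y ∈ t, c y ≠ 0) ∧ 0 ≤ c b := by
    rcases le_or_gt 0 (c b) with h0 | h0
    · exact ⟨c, hc1, hc2, ⟨y₀, hy₀t, hy₀⟩, h0⟩
    · refine ⟨fun y => -(c y), ?_, ?_, ⟨y₀, hy₀t, neg_ne_zero.2 hy₀⟩, by show (0:ℝ) ≤ -(c b); linarith⟩
      · simp only [neg_smul, Finset.sum_neg_distrib, hc1, neg_zero]
      · simp only [Finset.sum_neg_distrib, hc2, neg_zero]
  obtain ⟨u, hu, hL⟩ := hsh' (Finset.filter_subset (fun y => 0 < c y) s')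
  obtain ⟨hupow, v, c₀, hne, hva, hvb, hueq⟩ :
      u ∈ Y.powerset ∧ ∃ (v : Euc d) (c₀ : ℝ), (∀ x ∈ X, ⟪v, x⟫ ≠ c₀) ∧
      ⟪v, a⟫ < c₀ ∧ c₀ < ⟪v, b⟫ ∧ u = Y.filter (fun y => c₀ < ⟪v, y⟫) := by
    have := Finset.mem_filter.1 hu
    exact ⟨this.1, this.2⟩
  have hsum : ∑ y ∈ t, c y * (⟪v, y⟫ - c₀) = 0 := by
    have h1 : ⟪v, ∑ y ∈ t, c y • y⟫ = ∑ y ∈ t, c y * ⟪v, y⟫ := by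
      rw [inner_sum]
      exact Finset.sum_congr rfl fun y _ => real_inner_smul_right v y (c y)
    have h2 : ∑ y ∈ t, c y * ⟪v, y⟫ = 0 := by
      rw [← h1, hc1, inner_zero_right]
    calc ∑ y ∈ t, c y * (⟪v, y⟫ - c₀)
        = ∑ y ∈ t, (c y * ⟪v, y⟫ - c y * c₀) := by
          exact Finset.sum_congr rfl fun y _ => mul_sub (c y) _ _
      _ = (∑ y ∈ t, c y * ⟪v, y⟫) - (∑ y ∈ t, c y) * c₀ := by
          rw [Finset.sum_sub_distrib, Finset.sum_mul]
      _ = 0 := by rw [h2, hc2, zero_mul, sub_zero]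
  have key : ∀ y ∈ t, c y ≠ 0 → 0 < c y * (⟪v, y⟫ - c₀) := by
    intro y hy hcy
    rcases Finset.mem_insert.1 hy with rfl | hys'
    · exact mul_pos (lt_of_le_of_ne hcb (Ne.symm hcy)) (by linarith)
    · have hyY : y ∈ Y := hsY (hs's hys')
      have hneq : ⟪v, y⟫ ≠ c₀ := hne y (hYX y hyY)
      rcases hcy.lt_or_gt with hneg | hpos
      · have hyu : y ∉ u := by
          intro hyu
          have hmem : y ∈ s' ∩ u := Finset.mem_inter.2 ⟨hys', hyu⟩
          rw [hL] at hmem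
          exact absurd (Finset.mem_filter.1 hmem).2 (by linarith)
        have hnlt : ¬ c₀ < ⟪v, y⟫ := fun hlt => hyu (by
          rw [hueq]; exact Finset.mem_filter.2 ⟨hyY, hlt⟩)
        have h5 : ⟪v, y⟫ < c₀ := lt_of_le_of_ne (le_of_not_gt hnlt) hneq
        exact mul_pos_of_neg_of_neg hneg (by linarith)
      · have hyu : y ∈ u := by
          have hmem : y ∈ s' ∩ u := by
            rw [hL]; exact Finset.mem_filter.2 ⟨hys', hpos⟩
          exact (Finset.mem_inter.1 hmem).2
        rw [hueq] at hyu
        have := (Finset.mem_filter.1 hyu).2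
        exact mul_pos hpos (by linarith)
  have hpos : 0 < ∑ y ∈ t, c y * (⟪v, y⟫ - c₀) := by
    refine Finset.sum_pos' (fun y hy => ?_) ?_
    · by_cases h0 : c y = 0
      · simp [h0]
      · exact le_of_lt (key y hy h0)
    · obtain ⟨y₁, hy₁t, hy₁⟩ := hy
      exact ⟨y₁, hy₁t, key y₁ hy₁t hy₁⟩
  rw [hsum] at hpos
  exact lt_irrefl 0 hpos

open Classical in
lemma sep_ncard_le {d k : ℕ} {X : Set (Euc d)} (hX : X.Finite) (hk : X.ncard = k)
    {a b : Euc d} (ha : a ∈ X) (hb : b ∈ X) (hab : a ≠ b) :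
    (sep (HSet X) a b).ncard ≤ eta d k := by
  classical
  set Y : Finset (Euc d) := hX.toFinset \ {a, b} with hY_def
  have hYmem : ∀ y, y ∈ Y ↔ (y ∈ X ∧ y ≠ a ∧ y ≠ b) := by
    intro y
    simp [hY_def, Set.Finite.mem_toFinset, and_comm]
  have hYX : ∀ y ∈ Y, y ∈ X := fun y hy => ((hYmem y).1 hy).1
  have hbY : b ∉ Y := fun h => ((hYmem b).1 h).2.2 rfl
  have hYcard : Y.card = k - 2 := by
    rw [hY_def, Finset.card_sdiff_of_subset]
    · rw [Set.ncard_eq_toFinset_card _ hX] at hk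
      rw [hk]
      simp [hab]
    · intro x hx
      simp only [Finset.mem_insert, Finset.mem_singleton] at hx
      rcases hx with rfl | rfl <;> simp [Set.Finite.mem_toFinset, ha, hb]
  set F : Set (Set (Euc d)) → Finset (Euc d) :=
    fun P => Y.filter (fun y => ∃ U ∈ P, b ∈ U ∧ y ∈ U) with hF_def
  have hFval : ∀ (P : Set (Set (Euc d))) (v : Euc d) (c₀ : ℝ),
      c₀ < ⟪v, b⟫ → P = {X ∩ {x | ⟪v, x⟫ < c₀}, X ∩ {x | c₀ < ⟪v, x⟫}} →
      F P = Y.filter (fun y => c₀ < ⟪v, y⟫) := by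
    intro P v c₀ hvb hPeq
    apply Finset.filter_congr
    intro y hy
    constructor
    · rintro ⟨U, hU, hbU, hyU⟩
      rw [hPeq] at hU
      rcases hU with rfl | hU
      · exact absurd hbU.2 (lt_asymm hvb)
      · rw [Set.mem_singleton_iff] at hU; subst hU; exact hyU.2
    · intro hlt
      refine ⟨X ∩ {x | c₀ < ⟪v, x⟫}, ?_, ⟨hb, hvb⟩, ⟨hYX y hy, hlt⟩⟩
      rw [hPeq]
      exact Or.inr rfl
  have himg : ∀ P ∈ sep (HSet X) a b, F P ∈ Fam X Y a b := by
    intro P hP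
    obtain ⟨v, c₀, hne, hva, hvb, hPeq⟩ := sep_struct hP
    rw [hFval P v c₀ hvb hPeq]
    refine Finset.mem_filter.2 ⟨Finset.mem_powerset.2 (Finset.filter_subset _ _), ?_⟩
    exact ⟨v, c₀, hne, hva, hvb, rfl⟩
  have hinj : Set.InjOn F (sep (HSet X) a b) := by
    intro P hP P' hP' hFP
    obtain ⟨v, c₀, hne, hva, hvb, hPeq⟩ := sep_struct hP
    obtain ⟨v', c₀', hne', hva', hvb', hPeq'⟩ := sep_struct hP'
    have hiff : ∀ x ∈ X, (c₀ < ⟪v, x⟫ ↔ c₀' < ⟪v', x⟫) := by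
      intro x hx
      by_cases hxa : x = a
      · subst hxa
        exact iff_of_false (lt_asymm hva) (lt_asymm hva')
      by_cases hxb : x = b
      · subst hxb
        exact iff_of_true hvb hvb'
      · have hxY : x ∈ Y := (hYmem x).2 ⟨hx, hxa, hxb⟩
        have h1 := hFval P v c₀ hvb hPeq
        have h2 := hFval P' v' c₀' hvb' hPeq'
        rw [h1, h2] at hFP
        have hx1 : x ∈ Y.filter (fun y => c₀ < ⟪v, y⟫) ↔
            x ∈ Y.filter (fun y => c₀' < ⟪v', y⟫) := by rw [hFP]
        simpa [Finset.mem_filter, hxY] using hx1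
    have hRR : X ∩ {x | c₀ < ⟪v, x⟫} = X ∩ {x | c₀' < ⟪v', x⟫} :=
      Set.ext fun x => by
        simp only [Set.mem_inter_iff, Set.mem_setOf_eq]
        exact and_congr_right fun hx => hiff x hx
    have hLL : ∀ (w : Euc d) (e : ℝ), (∀ x ∈ X, ⟪w, x⟫ ≠ e) →
        X ∩ {x | ⟪w, x⟫ < e} = X \ (X ∩ {x | e < ⟪w, x⟫}) := by
      intro w e hwe
      ext x
      simp only [Set.mem_inter_iff, Set.mem_setOf_eq, Set.mem_diff, not_and]
      constructor
      · rintro ⟨hx, hlt⟩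
        exact ⟨hx, fun _ => lt_asymm hlt⟩
      · rintro ⟨hx, hng⟩
        exact ⟨hx, lt_of_le_of_ne (le_of_not_gt (hng hx)) (hwe x hx)⟩
    rw [hPeq, hPeq', hLL v c₀ hne, hLL v' c₀' hne', hRR]
  have h1 : (sep (HSet X) a b).ncard = (F '' sep (HSet X) a b).ncard :=
    (Set.ncard_image_of_injOn hinj).symm
  have h2 : F '' sep (HSet X) a b ⊆ ↑(Fam X Y a b) := by
    rintro _ ⟨P, hP, rfl⟩
    exact himg P hP
  have h3 : (F '' sep (HSet X) a b).ncard ≤ (Fam X Y a b).card := by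
    have := Set.ncard_le_ncard h2 (Finset.finite_toSet _)
    rwa [Set.ncard_coe_finset] at this
  have h4 : (Fam X Y a b).card ≤ (Fam X Y a b).shatterer.card :=
    Finset.card_le_card_shatterer _
  have h5 : (Fam X Y a b).shatterer ⊆
      (Finset.range (d + 1)).biUnion (fun i => Y.powersetCard i) := by
    intro s hs
    have hsh := Finset.mem_shatterer.1 hs
    have hcard : s.card ≤ d := shattered_card_le hYX hbY hsh
    have hsY : s ⊆ Y := by
      obtain ⟨u, hu, hsu⟩ := hsh.exists_superset
      exact hsu.trans (Finset.mem_powerset.1 (Finset.mem_filter.1 hu).1)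
    exact Finset.mem_biUnion.2 ⟨s.card, Finset.mem_range.2 (by omega),
      Finset.mem_powersetCard.2 ⟨hsY, rfl⟩⟩
  have h6 : ((Finset.range (d + 1)).biUnion (fun i => Y.powersetCard i)).card ≤ eta d k := by
    refine le_trans (Finset.card_biUnion_le) ?_
    unfold eta
    refine le_of_eq (Finset.sum_congr rfl fun i _ => ?_)
    rw [Finset.card_powersetCard, hYcard]
  calc (sep (HSet X) a b).ncard = (F '' sep (HSet X) a b).ncard := h1
    _ ≤ (Fam X Y a b).card := h3
    _ ≤ (Fam X Y a b).shatterer.card := h4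
    _ ≤ ((Finset.range (d + 1)).biUnion (fun i => Y.powersetCard i)).card :=
        Finset.card_le_card h5
    _ ≤ eta d k := h6

theorem stmt17 {d k : ℕ} (X : Set (Euc d)) (hX : X.Finite) (hk : X.ncard = k)
    (hk2 : 2 ≤ k) (T : Set (Set (Set (Euc d))))
    (hT : IsMinimalTransversal X (HSet X) T) :
    T.ncard ≤ eta d k := by
  obtain ⟨a, ha, b, hb, hab, heq⟩ := minimal_eq_sep hT
  rw [heq]
  exact sep_ncard_le hX hk ha hb hab
end
end

section
/- Let X ⊆ R^d be a finite set and X' the image of X under a projective transformation sending a hyperplane h_P (which separates two given points a, b ∈ X and avoids X) to the hyperplane at infinity; let a', b' be the images of a, b. Then there is a bijection between the hyperplane-realizable partitions of X that do NOT separate a and b, and the hyperplane-realizable partitions of X' that DO separate a' and b'. -/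
open scoped RealInnerProductSpace

noncomputable section

namespace Aux18
variable {d : ℕ}

lemma star (v : Euc d) (c : ℝ) (hv : v ≠ 0) (w : Euc d) (e : ℝ) (x : Euc d)
    (hx : ⟪v, x⟫ ≠ c) :
    ⟪w + (e - (c + 1) / ‖v‖ ^ 2 * ⟪w, v⟫) • v, (⟪v, x⟫ - c)⁻¹ • (x - ((c + 1) / ‖v‖ ^ 2) • v)⟫
      - (e - (c + 1) / ‖v‖ ^ 2 * ⟪w, v⟫)
    = (⟪v, x⟫ - c)⁻¹ * (⟪w, x⟫ - e) := by
  have hn : (‖v‖ : ℝ) ^ 2 ≠ 0 := pow_ne_zero 2 (norm_ne_zero_iff.mpr hv)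
  have ht : ⟪v, x⟫ - c ≠ 0 := sub_ne_zero.mpr hx
  simp only [inner_add_left, real_inner_smul_left, inner_sub_right, real_inner_smul_right,
    real_inner_self_eq_norm_sq]
  generalize ⟪v, x⟫ = A at *
  generalize ⟪w, x⟫ = B
  generalize ⟪w, v⟫ = C
  generalize hN : (‖v‖ : ℝ) ^ 2 = N at *
  field_simp
  ring

lemma neg_iff {a : ℝ} (ha : a ≠ 0) : a < 0 ↔ ¬ 0 < a := by
  constructor
  · exact fun h => not_lt.mpr h.le
  · intro h; rcases ha.lt_or_gt with h' | h'
    · exact h'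
    · exact absurd h' h

lemma sign_mul {a b : ℝ} (ha : a ≠ 0) (hb : b ≠ 0) : 0 < a * b ↔ (0 < a ↔ 0 < b) := by
  rw [mul_pos_iff]
  rcases ha.lt_or_gt with h | h <;> rcases hb.lt_or_gt with h' | h' <;>
    simp [h, h', asymm h, asymm h']

lemma iff_shuffle (p q r s : Prop) : ((p ↔ r) ↔ (q ↔ s)) ↔ ((p ↔ q) ↔ (r ↔ s)) := by tauto

def sb {α : Type*} (P : Set (Set α)) (x x' : α) : Prop := ∃ B ∈ P, x ∈ B ∧ x' ∈ B

lemma sb_single {α : Type*} {Y : Set α} {x x'} (hx : x ∈ Y) (hx' : x' ∈ Y) :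
    sb {Y} x x' := ⟨Y, rfl, hx, hx'⟩

lemma not_sep_single {α : Type*} {Y : Set α} {x x' : α} : ¬ Separates {Y} x x' := by
  rintro ⟨U, hU, V, hV, hUV, -, -⟩
  simp only [Set.mem_singleton_iff] at hU hV
  exact hUV (hU.trans hV.symm)

def blkN (Y : Set (Euc d)) (h : Euc d → ℝ) : Set (Euc d) := {x | x ∈ Y ∧ h x < 0}
def blkP (Y : Set (Euc d)) (h : Euc d → ℝ) : Set (Euc d) := {x | x ∈ Y ∧ 0 < h x}
def cutP (Y : Set (Euc d)) (h : Euc d → ℝ) : Set (Set (Euc d)) := {blkN Y h, blkP Y h}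

lemma mem_cutP {Y : Set (Euc d)} {h : Euc d → ℝ} {B : Set (Euc d)} :
    B ∈ cutP Y h ↔ B = blkN Y h ∨ B = blkP Y h := by simp [cutP]

lemma block_congr {α : Type*} {Y : Set α} {A B : α → Prop} (h : ∀ z ∈ Y, (A z ↔ B z)) :
    {z | z ∈ Y ∧ A z} = {z | z ∈ Y ∧ B z} := by
  ext z
  exact ⟨fun hz => ⟨hz.1, (h z hz.1).1 hz.2⟩, fun hz => ⟨hz.1, (h z hz.1).2 hz.2⟩⟩

lemma realized_iff (Y : Set (Euc d)) (P : Set (Set (Euc d))) :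
    RealizedByHyperplane Y P ↔ P = {Y} ∨ ∃ (w : Euc d) (e : ℝ), w ≠ 0 ∧
      (∀ x ∈ Y, ⟪w, x⟫ - e ≠ 0) ∧ (blkN Y (fun x => ⟪w, x⟫ - e)).Nonempty ∧
      (blkP Y (fun x => ⟪w, x⟫ - e)).Nonempty ∧ P = cutP Y (fun x => ⟪w, x⟫ - e) := by
  have hset1 : ∀ (w : Euc d) (e : ℝ), Y ∩ {x | ⟪w, x⟫ < e} = blkN Y (fun x => ⟪w, x⟫ - e) := by
    intro w e; ext z; simp [blkN, sub_neg]
  have hset2 : ∀ (w : Euc d) (e : ℝ), Y ∩ {x | e < ⟪w, x⟫} = blkP Y (fun x => ⟪w, x⟫ - e) := by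
    intro w e; ext z; simp [blkP, sub_pos]
  constructor
  · rintro (h | ⟨w, e, h1, h2, h3, h4, h5⟩)
    · exact Or.inl h
    · refine Or.inr ⟨w, e, h1, fun x hx => sub_ne_zero.mpr (h2 x hx), ?_, ?_, ?_⟩
      · rw [← hset1]; exact h3
      · rw [← hset2]; exact h4
      · rw [h5, cutP, ← hset1, ← hset2]
  · rintro (h | ⟨w, e, h1, h2, h3, h4, h5⟩)
    · exact Or.inl h
    · refine Or.inr ⟨w, e, h1, fun x hx => sub_ne_zero.mp (h2 x hx), ?_, ?_, ?_⟩
      · rw [hset1]; exact h3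
      · rw [hset2]; exact h4
      · rw [h5, cutP, ← hset1, ← hset2]

lemma cut_sb {Y : Set (Euc d)} {h : Euc d → ℝ} (hh : ∀ x ∈ Y, h x ≠ 0) {x x' : Euc d}
    (hx : x ∈ Y) (hx' : x' ∈ Y) :
    sb (cutP Y h) x x' ↔ (0 < h x ↔ 0 < h x') := by
  constructor
  · rintro ⟨B, hB, hxB, hx'B⟩
    rcases mem_cutP.mp hB with rfl | rfl
    · exact iff_of_false (not_lt.mpr hxB.2.le) (not_lt.mpr hx'B.2.le)
    · exact iff_of_true hxB.2 hx'B.2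
  · intro hiff
    by_cases h0 : 0 < h x
    · exact ⟨blkP Y h, mem_cutP.mpr (Or.inr rfl), ⟨hx, h0⟩, ⟨hx', hiff.mp h0⟩⟩
    · exact ⟨blkN Y h, mem_cutP.mpr (Or.inl rfl), ⟨hx, (neg_iff (hh x hx)).mpr h0⟩,
        ⟨hx', (neg_iff (hh x' hx')).mpr (fun hp => h0 (hiff.mpr hp))⟩⟩

def sgnCl (Y : Set (Euc d)) (h : Euc d → ℝ) : Set (Set (Euc d)) :=
  {B | ∃ x ∈ Y, B = {x' | x' ∈ Y ∧ (0 < h x ↔ 0 < h x')}}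

lemma sgn_block {Y : Set (Euc d)} {h : Euc d → ℝ} (hh : ∀ x ∈ Y, h x ≠ 0) {x : Euc d}
    (hx : x ∈ Y) :
    {x' | x' ∈ Y ∧ (0 < h x ↔ 0 < h x')} = if 0 < h x then blkP Y h else blkN Y h := by
  split_ifs with h0
  · refine block_congr fun z hz => ?_
    simp [h0]
  · refine block_congr fun z hz => ?_
    rw [neg_iff (hh z hz)]
    simp [h0]

lemma sgnCl_congr {Y : Set (Euc d)} {h1 h2 : Euc d → ℝ} (h : ∀ x ∈ Y, h1 x = h2 x) :
    sgnCl Y h1 = sgnCl Y h2 := by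
  ext B
  constructor <;> rintro ⟨x, hx, rfl⟩ <;> refine ⟨x, hx, block_congr fun z hz => ?_⟩ <;>
    rw [h x hx, h z hz]

lemma sgnCl_sb {Y : Set (Euc d)} {h : Euc d → ℝ} {x x' : Euc d} (hx : x ∈ Y) (hx' : x' ∈ Y) :
    sb (sgnCl Y h) x x' ↔ (0 < h x ↔ 0 < h x') := by
  constructor
  · rintro ⟨B, ⟨z, hz, rfl⟩, hxB, hx'B⟩
    exact hxB.2.symm.trans hx'B.2
  · intro hif
    exact ⟨_, ⟨x, hx, rfl⟩, ⟨hx, Iff.rfl⟩, ⟨hx', hif⟩⟩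

lemma sgnCl_eq_cut {Y : Set (Euc d)} {h : Euc d → ℝ} (hh : ∀ x ∈ Y, h x ≠ 0)
    (hn : (blkN Y h).Nonempty) (hp : (blkP Y h).Nonempty) : sgnCl Y h = cutP Y h := by
  ext B
  constructor
  · rintro ⟨x, hx, rfl⟩
    rw [sgn_block hh hx]
    split_ifs <;> [exact mem_cutP.mpr (Or.inr rfl); exact mem_cutP.mpr (Or.inl rfl)]
  · intro hB
    rcases mem_cutP.mp hB with rfl | rfl
    · obtain ⟨x, hx⟩ := hn
      exact ⟨x, hx.1, by rw [sgn_block hh hx.1, if_neg (asymm hx.2)]⟩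
    · obtain ⟨x, hx⟩ := hp
      exact ⟨x, hx.1, by rw [sgn_block hh hx.1, if_pos hx.2]⟩

lemma sgnCl_eq_single {Y : Set (Euc d)} {h : Euc d → ℝ} (hY : Y.Nonempty)
    (hall : ∀ x ∈ Y, ∀ x' ∈ Y, (0 < h x ↔ 0 < h x')) : sgnCl Y h = {Y} := by
  ext B
  simp only [sgnCl, Set.mem_setOf_eq, Set.mem_singleton_iff]
  constructor
  · rintro ⟨x, hx, rfl⟩
    ext z
    exact ⟨fun hz => hz.1, fun hz => ⟨hz, hall x hx z hz⟩⟩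
  · rintro rfl
    obtain ⟨x, hx⟩ := hY
    refine ⟨x, hx, ?_⟩
    ext z
    exact ⟨fun hz => ⟨hz, hall x hx z hz⟩, fun hz => hz.1⟩

def flipRel (X : Set (Euc d)) (v : Euc d) (c : ℝ) (R : Euc d → Euc d → Prop) :
    Set (Set (Euc d)) :=
  {B | ∃ x ∈ X, B = {x' | x' ∈ X ∧ (R x x' ↔ (0 < ⟪v, x⟫ - c ↔ 0 < ⟪v, x'⟫ - c))}}

def Fset (X : Set (Euc d)) (v : Euc d) (c : ℝ) (f : Euc d → Euc d)
    (P : Set (Set (Euc d))) : Set (Set (Euc d)) :=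
  (Set.image f) '' flipRel X v c (sb P)

def Gset (X : Set (Euc d)) (v : Euc d) (c : ℝ) (f : Euc d → Euc d)
    (Q : Set (Set (Euc d))) : Set (Set (Euc d)) :=
  flipRel X v c (fun x x' => sb Q (f x) (f x'))

lemma flipRel_eq_sgnCl {X : Set (Euc d)} {v : Euc d} {c : ℝ} {R : Euc d → Euc d → Prop}
    {g : Euc d → ℝ} (hg : ∀ x ∈ X, g x ≠ 0) (ht : ∀ x ∈ X, ⟪v, x⟫ - c ≠ 0)
    (hR : ∀ x ∈ X, ∀ x' ∈ X, (R x x' ↔ (0 < g x ↔ 0 < g x'))) :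
    flipRel X v c R = sgnCl X (fun x => g x * (⟪v, x⟫ - c)) := by
  have key : ∀ x ∈ X, ∀ x' ∈ X,
      ((R x x' ↔ (0 < ⟪v, x⟫ - c ↔ 0 < ⟪v, x'⟫ - c)) ↔
        (0 < g x * (⟪v, x⟫ - c) ↔ 0 < g x' * (⟪v, x'⟫ - c))) := by
    intro x hx x' hx'
    rw [hR x hx x' hx', sign_mul (hg x hx) (ht x hx), sign_mul (hg x' hx') (ht x' hx')]
    tauto
  ext B
  constructor <;> rintro ⟨x, hx, rfl⟩ <;> refine ⟨x, hx, block_congr fun z hz => ?_⟩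
  · exact key x hx z hz
  · exact (key x hx z hz).symm

lemma flipRel_resolve {X : Set (Euc d)} {v : Euc d} {c : ℝ} {R S : Euc d → Euc d → Prop}
    (hRS : ∀ x ∈ X, ∀ x' ∈ X,
      (R x x' ↔ (S x x' ↔ (0 < ⟪v, x⟫ - c ↔ 0 < ⟪v, x'⟫ - c)))) :
    flipRel X v c R = {B | ∃ x ∈ X, B = {x' | x' ∈ X ∧ S x x'}} := by
  ext B
  constructor <;> rintro ⟨x, hx, rfl⟩ <;> refine ⟨x, hx, block_congr fun z hz => ?_⟩
  · rw [hRS x hx z hz]; tauto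
  · rw [hRS x hx z hz]; tauto

lemma sbClasses {Y : Set (Euc d)} {P : Set (Set (Euc d))} (hP : RealizedByHyperplane Y P)
    (hY : Y.Nonempty) :
    {B | ∃ x ∈ Y, B = {x' | x' ∈ Y ∧ sb P x x'}} = P := by
  rcases (realized_iff Y P).1 hP with rfl | ⟨w, e, hw, hne, hnN, hnP, rfl⟩
  · ext B
    simp only [Set.mem_setOf_eq, Set.mem_singleton_iff]
    constructor
    · rintro ⟨x, hx, rfl⟩
      ext z
      exact ⟨fun hz => hz.1, fun hz => ⟨hz, sb_single hx hz⟩⟩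
    · rintro rfl
      obtain ⟨x, hx⟩ := hY
      refine ⟨x, hx, ?_⟩
      ext z
      exact ⟨fun hz => ⟨hz, sb_single hx hz⟩, fun hz => hz.1⟩
  · set g : Euc d → ℝ := fun x => ⟪w, x⟫ - e with hg
    have hblk : ∀ x ∈ Y, {x' | x' ∈ Y ∧ sb (cutP Y g) x x'} =
        {x' | x' ∈ Y ∧ (0 < g x ↔ 0 < g x')} :=
      fun x hx => block_congr fun z hz => cut_sb hne hx hz
    ext B
    simp only [Set.mem_setOf_eq]
    constructor
    · rintro ⟨x, hx, rfl⟩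
      rw [hblk x hx, sgn_block hne hx]
      split_ifs <;> [exact mem_cutP.mpr (Or.inr rfl); exact mem_cutP.mpr (Or.inl rfl)]
    · intro hB
      rcases mem_cutP.mp hB with rfl | rfl
      · obtain ⟨x, hx⟩ := hnN
        exact ⟨x, hx.1, by rw [hblk x hx.1, sgn_block hne hx.1, if_neg (asymm hx.2)]⟩
      · obtain ⟨x, hx⟩ := hnP
        exact ⟨x, hx.1, by rw [hblk x hx.1, sgn_block hne hx.1, if_pos hx.2]⟩

end Aux18

namespace Aux18
variable {d : ℕ}

lemma shape_LHS {X : Set (Euc d)} {a b v : Euc d} {c : ℝ}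
    (ha : a ∈ X) (hb : b ∈ X) (hsa : ⟪v, a⟫ < c) (hsb : c < ⟪v, b⟫)
    {P : Set (Set (Euc d))} (hP : RealizedByHyperplane X P) (hns : ¬ Separates P a b) :
    ∃ (w : Euc d) (e : ℝ), (∀ x ∈ X, ⟪w, x⟫ - e ≠ 0) ∧
      (∀ x ∈ X, ∀ x' ∈ X, (sb P x x' ↔ (0 < ⟪w, x⟫ - e ↔ 0 < ⟪w, x'⟫ - e))) ∧
      (0 < ⟪w, a⟫ - e ↔ 0 < ⟪w, b⟫ - e) := by
  rcases (realized_iff X P).1 hP with rfl | ⟨w, e, hw, hne, hnN, hnP, rfl⟩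
  · refine ⟨0, -1, ?_, ?_, by norm_num [inner_zero_left]⟩
    · intro x hx; norm_num [inner_zero_left]
    · intro x hx x' hx'
      refine iff_of_true (sb_single hx hx') ?_
      norm_num [inner_zero_left]
  · set g : Euc d → ℝ := fun x => ⟪w, x⟫ - e with hgdef
    refine ⟨w, e, hne, fun x hx x' hx' => cut_sb hne hx hx', ?_⟩
    by_contra hσ
    apply hns
    by_cases h0 : 0 < g a
    · have hb0 : g b < 0 := (neg_iff (hne b hb)).mpr (fun hp => hσ (iff_of_true h0 hp))
      refine ⟨blkP X g, mem_cutP.mpr (Or.inr rfl), blkN X g, mem_cutP.mpr (Or.inl rfl),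
        ?_, ⟨ha, h0⟩, ⟨hb, hb0⟩⟩
      intro hEq
      have : a ∈ blkN X g := hEq ▸ ⟨ha, h0⟩
      exact asymm h0 this.2
    · have ha0 : g a < 0 := (neg_iff (hne a ha)).mpr h0
      have hb0 : 0 < g b := by
        rcases (hne b hb).lt_or_gt with h' | h'
        · exact absurd (iff_of_false h0 (asymm h')) hσ
        · exact h'
      refine ⟨blkN X g, mem_cutP.mpr (Or.inl rfl), blkP X g, mem_cutP.mpr (Or.inr rfl),
        ?_, ⟨ha, ha0⟩, ⟨hb, hb0⟩⟩
      intro hEq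
      have : a ∈ blkP X g := hEq ▸ ⟨ha, ha0⟩
      exact asymm ha0 this.2

lemma shape_RHS {Y : Set (Euc d)} {a' b' : Euc d} {Q : Set (Set (Euc d))}
    (hQ : RealizedByHyperplane Y Q) (hs : Separates Q a' b') :
    ∃ (w' : Euc d) (e' : ℝ), (∀ y ∈ Y, ⟪w', y⟫ - e' ≠ 0) ∧
      (∀ y ∈ Y, ∀ y' ∈ Y, (sb Q y y' ↔ (0 < ⟪w', y⟫ - e' ↔ 0 < ⟪w', y'⟫ - e'))) ∧
      ¬ (0 < ⟪w', a'⟫ - e' ↔ 0 < ⟪w', b'⟫ - e') := by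
  rcases (realized_iff Y Q).1 hQ with rfl | ⟨w, e, hw, hne, hnN, hnP, rfl⟩
  · exact absurd hs not_sep_single
  · refine ⟨w, e, hne, fun y hy y' hy' => cut_sb hne hy hy', ?_⟩
    obtain ⟨U, hU, V, hV, hUV, haU, hbV⟩ := hs
    rcases mem_cutP.mp hU with rfl | rfl <;> rcases mem_cutP.mp hV with rfl | rfl
    · exact absurd rfl hUV
    · intro hiff
      exact asymm haU.2 (hiff.mpr hbV.2)
    · intro hiff
      exact asymm hbV.2 (hiff.mp haU.2)
    · exact absurd rfl hUV

end Aux18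

namespace Aux18
variable {d : ℕ}

lemma fwd_core {X : Set (Euc d)} {a b v : Euc d} {c : ℝ} {f : Euc d → Euc d}
    (hv : v ≠ 0) (ha : a ∈ X) (hb : b ∈ X) (havoid : ∀ x ∈ X, ⟪v, x⟫ ≠ c)
    (hsa : ⟪v, a⟫ < c) (hsb : c < ⟪v, b⟫)
    (hf : ∀ x, f x = (⟪v, x⟫ - c)⁻¹ • (x - ((c + 1) / ‖v‖ ^ 2) • v))
    {P : Set (Set (Euc d))} (w : Euc d) (e : ℝ)
    (hne : ∀ x ∈ X, ⟪w, x⟫ - e ≠ 0)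
    (hsbP : ∀ x ∈ X, ∀ x' ∈ X, (sb P x x' ↔ (0 < ⟪w, x⟫ - e ↔ 0 < ⟪w, x'⟫ - e)))
    (hσ : (0 < ⟪w, a⟫ - e ↔ 0 < ⟪w, b⟫ - e)) :
    RealizedByHyperplane (f '' X) (Fset X v c f P) ∧
      Separates (Fset X v c f P) (f a) (f b) ∧
      (∀ x ∈ X, ∀ x' ∈ X,
        (sb (Fset X v c f P) (f x) (f x') ↔
          (sb P x x' ↔ (0 < ⟪v, x⟫ - c ↔ 0 < ⟪v, x'⟫ - c)))) := by
  set g : Euc d → ℝ := fun x => ⟪w, x⟫ - e with hgdef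
  set t : Euc d → ℝ := fun x => ⟪v, x⟫ - c with htdef
  have ht : ∀ x ∈ X, t x ≠ 0 := fun x hx => sub_ne_zero.mpr (havoid x hx)
  set e' : ℝ := e - (c + 1) / ‖v‖ ^ 2 * ⟪w, v⟫ with he'def
  set w' : Euc d := w + e' • v with hw'def
  set u : Euc d → ℝ := fun y => ⟪w', y⟫ - e' with hudef
  have hstar : ∀ x ∈ X, u (f x) = (t x)⁻¹ * g x := by
    intro x hx
    rw [hudef, hf x]
    exact star v c hv w e x (havoid x hx)
  set h : Euc d → ℝ := fun x => g x * t x with hhdef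
  have hh : ∀ x ∈ X, h x ≠ 0 := fun x hx => mul_ne_zero (hne x hx) (ht x hx)
  have hune : ∀ x ∈ X, u (f x) ≠ 0 := by
    intro x hx
    rw [hstar x hx]
    exact mul_ne_zero (inv_ne_zero (ht x hx)) (hne x hx)
  have hu : ∀ x ∈ X, (0 < u (f x) ↔ 0 < h x) := by
    intro x hx
    rw [hstar x hx, hhdef, sign_mul (inv_ne_zero (ht x hx)) (hne x hx),
      sign_mul (hne x hx) (ht x hx), inv_pos]
    tauto
  have hta : t a < 0 := sub_neg.mpr hsa
  have htb : 0 < t b := sub_pos.mpr hsb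
  have hnta : ¬ 0 < t a := asymm hta
  have hhab : ¬ (0 < h a ↔ 0 < h b) := by
    rw [hhdef, sign_mul (hne a ha) (ht a ha), sign_mul (hne b hb) (ht b hb)]
    tauto
  have hnN : (blkN X h).Nonempty := by
    by_cases h0 : 0 < h a
    · exact ⟨b, hb, (neg_iff (hh b hb)).mpr (fun hp => hhab (iff_of_true h0 hp))⟩
    · exact ⟨a, ha, (neg_iff (hh a ha)).mpr h0⟩
  have hnP : (blkP X h).Nonempty := by
    by_cases h0 : 0 < h a
    · exact ⟨a, ha, h0⟩
    · refine ⟨b, hb, ?_⟩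
      rcases (hh b hb).lt_or_gt with h' | h'
      · exact absurd (iff_of_false h0 (asymm h')) hhab
      · exact h'
  have hFlip : flipRel X v c (sb P) = cutP X h := by
    rw [flipRel_eq_sgnCl hne ht hsbP]
    exact sgnCl_eq_cut hh hnN hnP
  have himN : f '' blkN X h = blkN (f '' X) u := by
    ext y
    constructor
    · rintro ⟨x, ⟨hxX, hneg⟩, rfl⟩
      exact ⟨⟨x, hxX, rfl⟩,
        (neg_iff (hune x hxX)).mpr (fun hp => asymm hneg ((hu x hxX).1 hp))⟩
    · rintro ⟨⟨x, hxX, rfl⟩, hneg⟩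
      exact ⟨x, ⟨hxX, (neg_iff (hh x hxX)).mpr (fun hp => asymm hneg ((hu x hxX).2 hp))⟩, rfl⟩
  have himP : f '' blkP X h = blkP (f '' X) u := by
    ext y
    constructor
    · rintro ⟨x, ⟨hxX, hpos⟩, rfl⟩
      exact ⟨⟨x, hxX, rfl⟩, (hu x hxX).2 hpos⟩
    · rintro ⟨⟨x, hxX, rfl⟩, hpos⟩
      exact ⟨x, ⟨hxX, (hu x hxX).1 hpos⟩, rfl⟩
  have hFeq : Fset X v c f P = cutP (f '' X) u := by
    rw [Fset, hFlip, cutP, Set.image_insert_eq, Set.image_singleton, himN, himP, cutP]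
  have hune' : ∀ y ∈ f '' X, ⟪w', y⟫ - e' ≠ 0 := by
    rintro y ⟨x, hx, rfl⟩
    exact hune x hx
  have hw'0 : w' ≠ 0 := by
    intro h0
    have huab : u (f a) = u (f b) := by simp [hudef, h0, inner_zero_left]
    apply hhab
    rw [← hu a ha, ← hu b hb, huab]
  refine ⟨?_, ?_, ?_⟩
  · refine (realized_iff _ _).2 (Or.inr ⟨w', e', hw'0, hune', ?_, ?_, ?_⟩)
    · rw [← himN]; exact hnN.image f
    · rw [← himP]; exact hnP.image f
    · exact hFeq
  · rw [hFeq]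
    by_cases h0 : 0 < h a
    · have hbneg : h b < 0 := (neg_iff (hh b hb)).mpr (fun hp => hhab (iff_of_true h0 hp))
      refine ⟨blkP (f '' X) u, mem_cutP.mpr (Or.inr rfl), blkN (f '' X) u,
        mem_cutP.mpr (Or.inl rfl), ?_, ⟨⟨a, ha, rfl⟩, (hu a ha).2 h0⟩,
        ⟨⟨b, hb, rfl⟩, (neg_iff (hune b hb)).mpr (fun hp => asymm hbneg ((hu b hb).1 hp))⟩⟩
      intro hEq
      have : f a ∈ blkN (f '' X) u := hEq ▸ ⟨⟨a, ha, rfl⟩, (hu a ha).2 h0⟩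
      exact asymm ((hu a ha).2 h0) this.2
    · have haneg : h a < 0 := (neg_iff (hh a ha)).mpr h0
      have hbpos : 0 < h b := by
        rcases (hh b hb).lt_or_gt with h' | h'
        · exact absurd (iff_of_false h0 (asymm h')) hhab
        · exact h'
      refine ⟨blkN (f '' X) u, mem_cutP.mpr (Or.inl rfl), blkP (f '' X) u,
        mem_cutP.mpr (Or.inr rfl), ?_,
        ⟨⟨a, ha, rfl⟩, (neg_iff (hune a ha)).mpr (fun hp => asymm haneg ((hu a ha).1 hp))⟩,
        ⟨⟨b, hb, rfl⟩, (hu b hb).2 hbpos⟩⟩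
      intro hEq
      have : f b ∈ blkN (f '' X) u := hEq ▸ ⟨⟨b, hb, rfl⟩, (hu b hb).2 hbpos⟩
      exact asymm ((hu b hb).2 hbpos) this.2
  · intro x hx x' hx'
    rw [hFeq, cut_sb hune' ⟨x, hx, rfl⟩ ⟨x', hx', rfl⟩, hu x hx, hu x' hx',
      hhdef, sign_mul (hne x hx) (ht x hx), sign_mul (hne x' hx') (ht x' hx'),
      hsbP x hx x' hx']
    simp only [htdef]
    exact iff_shuffle _ _ _ _

end Aux18

namespace Aux18
variable {d : ℕ}

lemma iff_shuffle2 (p q r s : Prop) (h : p ↔ q) : ((r ↔ p) ↔ (s ↔ q)) ↔ (r ↔ s) := by tauto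

lemma iff_shuffle3 (p q r s : Prop) : ((p ↔ q)) ↔ (((r ↔ p) ↔ (s ↔ q)) ↔ (r ↔ s)) := by tauto

lemma bwd_core {X : Set (Euc d)} {a b v : Euc d} {c : ℝ} {f : Euc d → Euc d}
    (hv : v ≠ 0) (ha : a ∈ X) (hb : b ∈ X) (havoid : ∀ x ∈ X, ⟪v, x⟫ ≠ c)
    (hsa : ⟪v, a⟫ < c) (hsb : c < ⟪v, b⟫)
    (hf : ∀ x, f x = (⟪v, x⟫ - c)⁻¹ • (x - ((c + 1) / ‖v‖ ^ 2) • v))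
    {Q : Set (Set (Euc d))} (w' : Euc d) (e' : ℝ)
    (hne' : ∀ y ∈ f '' X, ⟪w', y⟫ - e' ≠ 0)
    (hsbQ : ∀ y ∈ f '' X, ∀ y' ∈ f '' X,
      (sb Q y y' ↔ (0 < ⟪w', y⟫ - e' ↔ 0 < ⟪w', y'⟫ - e')))
    (hσ : ¬ (0 < ⟪w', f a⟫ - e' ↔ 0 < ⟪w', f b⟫ - e')) :
    RealizedByHyperplane X (Gset X v c f Q) ∧
      ¬ Separates (Gset X v c f Q) a b ∧
      (∀ x ∈ X, ∀ x' ∈ X,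
        (sb (Gset X v c f Q) x x' ↔
          (sb Q (f x) (f x') ↔ (0 < ⟪v, x⟫ - c ↔ 0 < ⟪v, x'⟫ - c)))) := by
  set t : Euc d → ℝ := fun x => ⟪v, x⟫ - c with htdef
  have ht : ∀ x ∈ X, t x ≠ 0 := fun x hx => sub_ne_zero.mpr (havoid x hx)
  set u : Euc d → ℝ := fun y => ⟪w', y⟫ - e' with hudef
  set w : Euc d := w' - e' • v with hwdef
  set e : ℝ := e' + (c + 1) / ‖v‖ ^ 2 * ⟪w, v⟫ with hedef
  set g : Euc d → ℝ := fun x => ⟪w, x⟫ - e with hgdef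
  have h2 : e - (c + 1) / ‖v‖ ^ 2 * ⟪w, v⟫ = e' := by rw [hedef]; ring
  have h3 : w + e' • v = w' := by rw [hwdef]; exact sub_add_cancel _ _
  have hstar : ∀ x ∈ X, u (f x) = (t x)⁻¹ * g x := by
    intro x hx
    rw [hudef, hgdef, htdef, hf x]
    show ⟪w', _⟫ - e' = _
    rw [← h3, ← h2]
    exact star v c hv w e x (havoid x hx)
  have hune : ∀ x ∈ X, u (f x) ≠ 0 := fun x hx => hne' (f x) ⟨x, hx, rfl⟩
  have hg : ∀ x ∈ X, g x ≠ 0 := by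
    intro x hx h0
    exact hune x hx (by rw [hstar x hx, h0, mul_zero])
  have hGeq : Gset X v c f Q = sgnCl X g := by
    rw [Gset, flipRel_eq_sgnCl (fun x hx => hune x hx) ht
      (fun x hx x' hx' => hsbQ (f x) ⟨x, hx, rfl⟩ (f x') ⟨x', hx', rfl⟩)]
    exact sgnCl_congr (fun x hx => by
      rw [hstar x hx, mul_comm (t x)⁻¹ (g x), mul_assoc, inv_mul_cancel₀ (ht x hx), mul_one])
  have hu : ∀ x ∈ X, (0 < u (f x) ↔ (0 < t x ↔ 0 < g x)) := by
    intro x hx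
    rw [hstar x hx, sign_mul (inv_ne_zero (ht x hx)) (hg x hx), inv_pos]
  have hta : t a < 0 := sub_neg.mpr hsa
  have htb : 0 < t b := sub_pos.mpr hsb
  have hnta : ¬ 0 < t a := asymm hta
  have hgab : (0 < g a ↔ 0 < g b) := by
    have pa := hu a ha
    have pb := hu b hb
    tauto
  have hsb3 : ∀ x ∈ X, ∀ x' ∈ X,
      ((sb Q (f x) (f x') ↔ (0 < ⟪v, x⟫ - c ↔ 0 < ⟪v, x'⟫ - c)) ↔ (0 < g x ↔ 0 < g x')) := by
    intro x hx x' hx'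
    rw [hsbQ (f x) ⟨x, hx, rfl⟩ (f x') ⟨x', hx', rfl⟩, hu x hx, hu x' hx']
    simp only [htdef]
    exact (iff_shuffle3 _ _ _ _).symm
  by_cases hcase : ∀ x ∈ X, ∀ x' ∈ X, (0 < g x ↔ 0 < g x')
  · have hG1 : Gset X v c f Q = {X} := hGeq.trans (sgnCl_eq_single ⟨a, ha⟩ hcase)
    refine ⟨?_, ?_, ?_⟩
    · rw [hG1]; exact Or.inl rfl
    · rw [hG1]; exact not_sep_single
    · intro x hx x' hx'
      rw [hG1, hsb3 x hx x' hx']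
      exact iff_of_true (sb_single hx hx') (hcase x hx x' hx')
  · obtain ⟨x₀, hx₀, x₁, hx₁, hne01⟩ :
        ∃ x₀ ∈ X, ∃ x₁ ∈ X, ¬ (0 < g x₀ ↔ 0 < g x₁) := by
      by_contra hco
      push_neg at hco
      exact hcase hco
    have hnN : (blkN X g).Nonempty := by
      by_cases h0 : 0 < g x₀
      · exact ⟨x₁, hx₁, (neg_iff (hg x₁ hx₁)).mpr (fun hp => hne01 (iff_of_true h0 hp))⟩
      · exact ⟨x₀, hx₀, (neg_iff (hg x₀ hx₀)).mpr h0⟩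
    have hnP : (blkP X g).Nonempty := by
      by_cases h0 : 0 < g x₀
      · exact ⟨x₀, hx₀, h0⟩
      · refine ⟨x₁, hx₁, ?_⟩
        rcases (hg x₁ hx₁).lt_or_gt with h' | h'
        · exact absurd (iff_of_false h0 (asymm h')) hne01
        · exact h'
    have hGcut : Gset X v c f Q = cutP X g := hGeq.trans (sgnCl_eq_cut hg hnN hnP)
    have hw0 : w ≠ 0 := by
      intro h0
      have hgc : g x₀ = g x₁ := by simp [hgdef, h0, inner_zero_left]
      exact hne01 (by rw [hgc])
    refine ⟨?_, ?_, ?_⟩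
    · exact (realized_iff _ _).2 (Or.inr ⟨w, e, hw0, hg, hnN, hnP, hGcut⟩)
    · rw [hGcut]
      rintro ⟨U, hU, V, hV, hUV, haU, hbV⟩
      rcases mem_cutP.mp hU with rfl | rfl <;> rcases mem_cutP.mp hV with rfl | rfl
      · exact absurd rfl hUV
      · exact asymm haU.2 (hgab.mpr hbV.2)
      · exact asymm hbV.2 (hgab.mp haU.2)
      · exact absurd rfl hUV
    · intro x hx x' hx'
      rw [hGcut, cut_sb hg hx hx', hsb3 x hx x' hx']

end Aux18

namespace Aux18
variable {d : ℕ}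

lemma RT1 {X : Set (Euc d)} {a b v : Euc d} {c : ℝ} {f : Euc d → Euc d}
    (hv : v ≠ 0) (ha : a ∈ X) (hb : b ∈ X) (havoid : ∀ x ∈ X, ⟪v, x⟫ ≠ c)
    (hsa : ⟪v, a⟫ < c) (hsb : c < ⟪v, b⟫)
    (hf : ∀ x, f x = (⟪v, x⟫ - c)⁻¹ • (x - ((c + 1) / ‖v‖ ^ 2) • v))
    {P : Set (Set (Euc d))} (hP : RealizedByHyperplane X P) (hns : ¬ Separates P a b) :
    Gset X v c f (Fset X v c f P) = P := by
  obtain ⟨w, e, hne, hsbP, hσ⟩ := shape_LHS ha hb hsa hsb hP hns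
  obtain ⟨-, -, hsbF⟩ := fwd_core hv ha hb havoid hsa hsb hf w e hne hsbP hσ
  unfold Gset
  rw [flipRel_resolve hsbF]
  exact sbClasses hP ⟨a, ha⟩

lemma RT2 {X : Set (Euc d)} {a b v : Euc d} {c : ℝ} {f : Euc d → Euc d}
    (hv : v ≠ 0) (ha : a ∈ X) (hb : b ∈ X) (havoid : ∀ x ∈ X, ⟪v, x⟫ ≠ c)
    (hsa : ⟪v, a⟫ < c) (hsb : c < ⟪v, b⟫)
    (hf : ∀ x, f x = (⟪v, x⟫ - c)⁻¹ • (x - ((c + 1) / ‖v‖ ^ 2) • v))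
    {Q : Set (Set (Euc d))} (hQ : RealizedByHyperplane (f '' X) Q)
    (hs : Separates Q (f a) (f b)) :
    Fset X v c f (Gset X v c f Q) = Q := by
  obtain ⟨w', e', hne', hsbQ, hσ⟩ := shape_RHS hQ hs
  obtain ⟨-, -, hsbG⟩ := bwd_core hv ha hb havoid hsa hsb hf w' e' hne' hsbQ hσ
  unfold Fset
  rw [flipRel_resolve hsbG]
  have hblk : ∀ x ∈ X, f '' {x' | x' ∈ X ∧ sb Q (f x) (f x')} =
      {y' | y' ∈ f '' X ∧ sb Q (f x) y'} := by
    intro x hx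
    ext y'
    constructor
    · rintro ⟨x', ⟨hx', hsb'⟩, rfl⟩
      exact ⟨⟨x', hx', rfl⟩, hsb'⟩
    · rintro ⟨⟨x', hx', rfl⟩, hsb'⟩
      exact ⟨x', ⟨hx', hsb'⟩, rfl⟩
  have himg : (Set.image f) '' {B | ∃ x ∈ X, B = {x' | x' ∈ X ∧ sb Q (f x) (f x')}} =
      {B | ∃ y ∈ f '' X, B = {y' | y' ∈ f '' X ∧ sb Q y y'}} := by
    ext B
    constructor
    · rintro ⟨B0, ⟨x, hx, rfl⟩, rfl⟩
      exact ⟨f x, ⟨x, hx, rfl⟩, hblk x hx⟩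
    · rintro ⟨y, ⟨x, hx, rfl⟩, rfl⟩
      exact ⟨{x' | x' ∈ X ∧ sb Q (f x) (f x')}, ⟨x, hx, rfl⟩, (hblk x hx).symm ▸ rfl⟩
  rw [himg]
  exact sbClasses hQ ⟨f a, a, ha, rfl⟩

end Aux18

theorem stmt18 {d : ℕ} (X : Set (Euc d)) (hX : X.Finite) (a b : Euc d)
    (ha : a ∈ X) (hb : b ∈ X) (v : Euc d) (c : ℝ) (hv : v ≠ 0)
    (havoid : ∀ x ∈ X, ⟪v, x⟫ ≠ c)
    (hsepa : ⟪v, a⟫ < c) (hsepb : c < ⟪v, b⟫) :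
    ∀ f : Euc d → Euc d,
      (f = fun x => (⟪v, x⟫ - c)⁻¹ • (x - ((c + 1) / ‖v‖ ^ 2) • v)) →
      Nonempty (({P : Set (Set (Euc d)) | P ∈ HSet X ∧ ¬ Separates P a b}) ≃
        ({Q : Set (Set (Euc d)) | Q ∈ HSet (f '' X) ∧ Separates Q (f a) (f b)})) := by
  intro f hf
  have hf' : ∀ x, f x = (⟪v, x⟫ - c)⁻¹ • (x - ((c + 1) / ‖v‖ ^ 2) • v) := fun x => by rw [hf]
  refine ⟨{ toFun := fun P => ⟨Aux18.Fset X v c f P.1, ?_⟩,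
            invFun := fun Q => ⟨Aux18.Gset X v c f Q.1, ?_⟩,
            left_inv := ?_, right_inv := ?_ }⟩
  · obtain ⟨w, e, hne, hsbP, hσ⟩ := Aux18.shape_LHS ha hb hsepa hsepb P.2.1 P.2.2
    obtain ⟨h1, h2, -⟩ := Aux18.fwd_core hv ha hb havoid hsepa hsepb hf' w e hne hsbP hσ
    exact ⟨h1, h2⟩
  · obtain ⟨w', e', hne', hsbQ, hσ⟩ := Aux18.shape_RHS Q.2.1 Q.2.2
    obtain ⟨h1, h2, -⟩ := Aux18.bwd_core hv ha hb havoid hsepa hsepb hf' w' e' hne' hsbQ hσ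
    exact ⟨h1, h2⟩
  · intro P
    exact Subtype.ext (Aux18.RT1 hv ha hb havoid hsepa hsepb hf' P.2.1 P.2.2)
  · intro Q
    exact Subtype.ext (Aux18.RT2 hv ha hb havoid hsepa hsepb hf' Q.2.1 Q.2.2)
end
end
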